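/- arXiv:1601.06055 — 10 statements merged into one kernel-verified Lean document; each statement's English description precedes it below -/
import Mathlib

section
/- Let X and Z be finite nonempty sets, let C ⊆ X be a codebook with |C| = K·M for positive integers K and M, let P_X be the uniform distribution on C, let P_{Z|X} be a channel from X to Z, and let P_{XZ} := P_X × P_{Z|X} with output marginal P_Z. Then there exists a function π : C → {1,…,M} all of whose fibers π⁻¹(m) have exactly K elements (so that π(X) is uniform on {1,…,M} when X ~ P_X), such that for every γ > 0 and every PMF Q_Z on Z with Q_Z(z) > 0 for all z: d(P_{π(X)Z}, P_{π(X)} × P_Z) ≤ E_γ(P_{XZ}, P_X × Q_Z) + (1/2)·√( (γ/K) · Σ_{x∈C,z∈Z} P_{XZ}(x,z)·exp(−|ln(P_{Z|X}(z|x)/Q_Z(z)) − ln γ|) ), where P_{π(X)Z}(m,z) := Σ_{x∈π⁻¹(m)} P_X(x)·P_{Z|X}(z|x), and summands with P_{XZ}(x,z) = 0 are read as 0. -/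
open scoped Classical
open Finset

noncomputable section

/-- `P` is a probability mass function on the finite type `A`. -/
def IsPMF {A : Type*} [Fintype A] (P : A → ℝ) : Prop :=
  (∀ a, 0 ≤ P a) ∧ ∑ a, P a = 1

/-- Total variation distance `d(P,Q) = (1/2) ∑ |P a - Q a|`. -/
def dTV {A : Type*} [Fintype A] (P Q : A → ℝ) : ℝ :=
  (1 / 2) * ∑ a, |P a - Q a|

/-- The `E_γ` metric: `E_γ(P,Q) = ∑_{a : P a ≥ γ Q a} (P a - γ Q a)`. -/
def Egam {A : Type*} [Fintype A] (γ : ℝ) (P Q : A → ℝ) : ℝ :=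
  ∑ a ∈ Finset.univ.filter (fun a => γ * Q a ≤ P a), (P a - γ * Q a)

namespace PAaux

variable {K M : ℕ}

/-- The bin of an index. -/
def bin (hK : 0 < K) (i : Fin (K * M)) : Fin M :=
  ⟨i.val / K, by
    rw [Nat.div_lt_iff_lt_mul hK]
    have := i.isLt
    calc i.val < K * M := this
    _ = M * K := Nat.mul_comm _ _⟩

lemma bin_fiber_card (hK : 0 < K) (m : Fin M) :
    (Finset.univ.filter fun i : Fin (K * M) => bin hK i = m).card = K := by
  have hlt : ∀ j : Fin K, j.val + m.val * K < K * M := by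
    intro j
    have h1 : m.val + 1 ≤ M := m.isLt
    calc j.val + m.val * K < K + m.val * K := Nat.add_lt_add_right j.isLt _
      _ = (m.val + 1) * K := by ring
      _ ≤ M * K := Nat.mul_le_mul_right _ h1
      _ = K * M := Nat.mul_comm _ _
  have : (Finset.univ.filter fun i : Fin (K * M) => bin hK i = m).card
      = (Finset.univ : Finset (Fin K)).card := by
    apply Finset.card_nbij' (fun i : Fin (K*M) => (⟨i.val % K, Nat.mod_lt _ hK⟩ : Fin K))
      (fun j : Fin K => (⟨j.val + m.val * K, hlt j⟩ : Fin (K*M)))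
    · intro a _; exact Finset.mem_univ _
    · intro j _
      simp only [Finset.mem_coe, Finset.mem_filter, Finset.mem_univ, true_and]
      apply Fin.ext
      show (j.val + m.val * K) / K = m.val
      rw [Nat.add_mul_div_right _ _ hK, Nat.div_eq_of_lt j.isLt, Nat.zero_add]
    · intro i hi
      simp only [Finset.mem_coe, Finset.mem_filter, Finset.mem_univ, true_and] at hi
      have hdiv : i.val / K = m.val := congrArg Fin.val hi
      apply Fin.ext
      show i.val % K + m.val * K = i.val
      rw [← hdiv, Nat.mod_add_div' i.val K]
    · intro j _
      apply Fin.ext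
      show (j.val + m.val * K) % K = j.val
      rw [Nat.add_mul_mod_self_right, Nat.mod_eq_of_lt j.isLt]
  rw [this, Finset.card_univ, Fintype.card_fin]


lemma exists_perm_two {α : Type*} [DecidableEq α] {p q p' q' : α} (hpq : p ≠ q)
    (h' : p' ≠ q') : ∃ ρ : Equiv.Perm α, ρ p = p' ∧ ρ q = q' := by
  set q₁ := Equiv.swap p p' q with hq₁
  refine ⟨Equiv.swap q₁ q' * Equiv.swap p p', ?_, ?_⟩
  · have h1 : Equiv.swap p p' p = p' := Equiv.swap_apply_left _ _
    have hne1 : p' ≠ q₁ := by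
      intro h
      apply hpq
      have := congrArg (Equiv.swap p p') h
      rwa [hq₁, Equiv.swap_apply_right, Equiv.swap_apply_self] at this
    simp only [Equiv.Perm.mul_apply, h1]
    exact Equiv.swap_apply_of_ne_of_ne hne1 h'
  · simp only [Equiv.Perm.mul_apply, ← hq₁]
    exact Equiv.swap_apply_left _ _



/-- All fibers of `σ ↦ (σ i, σ j)` over distinct pairs have the same cardinality. -/
lemma fiber_card_eq {N : ℕ} {i j : Fin N} (hij : i ≠ j) {p q p' q' : Fin N} (hpq : p ≠ q)
    (h' : p' ≠ q') :
    (Finset.univ.filter fun σ : Equiv.Perm (Fin N) => σ i = p ∧ σ j = q).card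
      = (Finset.univ.filter fun σ : Equiv.Perm (Fin N) => σ i = p' ∧ σ j = q').card := by
  obtain ⟨ρ, hρ1, hρ2⟩ := exists_perm_two hpq h'
  apply Finset.card_nbij' (fun σ => ρ * σ) (fun σ => ρ⁻¹ * σ)
  · intro σ hσ
    simp only [Finset.mem_coe, Finset.mem_filter, Finset.mem_univ, true_and] at hσ ⊢
    simp [Equiv.Perm.mul_apply, hσ.1, hσ.2, hρ1, hρ2]
  · intro σ hσ
    simp only [Finset.mem_coe, Finset.mem_filter, Finset.mem_univ, true_and] at hσ ⊢
    constructor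
    · have : σ i = p' := hσ.1
      rw [Equiv.Perm.mul_apply, this, ← hρ1, Equiv.Perm.inv_def, Equiv.symm_apply_apply]
    · have : σ j = q' := hσ.2
      rw [Equiv.Perm.mul_apply, this, ← hρ2, Equiv.Perm.inv_def, Equiv.symm_apply_apply]
  · intro σ _; simp [← mul_assoc]
  · intro σ _; group


/-- The collision bound: `M * #{σ : bin (σ i) = bin (σ j)} ≤ #Perm` for `i ≠ j`. -/
lemma collision_bound (hK : 0 < K) (hM : 0 < M) {i j : Fin (K * M)} (hij : i ≠ j) :
    M * (Finset.univ.filter fun σ : Equiv.Perm (Fin (K * M)) =>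
        bin hK (σ i) = bin hK (σ j)).card
      ≤ (Finset.univ : Finset (Equiv.Perm (Fin (K * M)))).card := by
  set c := (Finset.univ.filter fun σ : Equiv.Perm (Fin (K * M)) => σ i = i ∧ σ j = j).card
    with hc
  set t := (Finset.univ : Finset (Fin (K * M) × Fin (K * M))).filter
      (fun pq => pq.1 ≠ pq.2 ∧ bin hK pq.1 = bin hK pq.2) with ht
  set tall := (Finset.univ : Finset (Fin (K * M) × Fin (K * M))).filter
      (fun pq => pq.1 ≠ pq.2) with htall
  have hcount : (Finset.univ.filter fun σ : Equiv.Perm (Fin (K * M)) =>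
      bin hK (σ i) = bin hK (σ j)).card = t.card * c := by
    rw [Finset.card_eq_sum_card_fiberwise
      (f := fun σ : Equiv.Perm (Fin (K * M)) => (σ i, σ j)) (t := t)
      (fun σ hσ => by
        simp only [Finset.mem_coe, ht, Finset.mem_filter, Finset.mem_univ, true_and] at hσ ⊢
        exact ⟨fun h => hij (σ.injective h), hσ⟩)]
    have hfib : ∀ pq ∈ t, ((Finset.univ.filter fun σ : Equiv.Perm (Fin (K * M)) =>
        bin hK (σ i) = bin hK (σ j)).filter (fun σ => (σ i, σ j) = pq)).card = c := by
      intro pq hpq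
      have hmem : pq.1 ≠ pq.2 ∧ bin hK pq.1 = bin hK pq.2 := by
        simpa [ht] using hpq
      have heq : (Finset.univ.filter fun σ : Equiv.Perm (Fin (K * M)) =>
          bin hK (σ i) = bin hK (σ j)).filter (fun σ => (σ i, σ j) = pq)
          = Finset.univ.filter fun σ : Equiv.Perm (Fin (K * M)) =>
            σ i = pq.1 ∧ σ j = pq.2 := by
        ext σ
        simp only [Finset.mem_filter, Finset.mem_univ, true_and, Prod.ext_iff]
        constructor
        · rintro ⟨_, h1, h2⟩; exact ⟨h1, h2⟩
        · rintro ⟨h1, h2⟩; exact ⟨by rw [h1, h2, hmem.2], h1, h2⟩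
      rw [heq, hc]
      exact fiber_card_eq hij hmem.1 hij
    rw [Finset.sum_congr rfl hfib, Finset.sum_const, smul_eq_mul]
  have hcountall : (Finset.univ : Finset (Equiv.Perm (Fin (K * M)))).card = tall.card * c := by
    rw [Finset.card_eq_sum_card_fiberwise
      (f := fun σ : Equiv.Perm (Fin (K * M)) => (σ i, σ j)) (t := tall)
      (fun σ _ => by
        simp only [Finset.mem_coe, htall, Finset.mem_filter, Finset.mem_univ, true_and]
        exact fun h => hij (σ.injective h))]
    have hfib : ∀ pq ∈ tall, ((Finset.univ : Finset (Equiv.Perm (Fin (K * M)))).filter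
        (fun σ => (σ i, σ j) = pq)).card = c := by
      intro pq hpq
      have hmem : pq.1 ≠ pq.2 := by simpa [htall] using hpq
      have heq : (Finset.univ : Finset (Equiv.Perm (Fin (K * M)))).filter
          (fun σ => (σ i, σ j) = pq)
          = Finset.univ.filter fun σ : Equiv.Perm (Fin (K * M)) =>
            σ i = pq.1 ∧ σ j = pq.2 := by
        ext σ
        simp [Prod.ext_iff]
      rw [heq, hc]
      exact fiber_card_eq hij hmem hij
    rw [Finset.sum_congr rfl hfib, Finset.sum_const, smul_eq_mul]
  have htc : t.card = (K * M) * (K - 1) := by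
    rw [ht, Finset.card_eq_sum_card_fiberwise (f := Prod.fst)
      (t := (Finset.univ : Finset (Fin (K * M)))) (fun _ _ => Finset.mem_univ _)]
    have hfib : ∀ p ∈ (Finset.univ : Finset (Fin (K * M))),
        (((Finset.univ : Finset (Fin (K * M) × Fin (K * M))).filter
        (fun pq => pq.1 ≠ pq.2 ∧ bin hK pq.1 = bin hK pq.2)).filter
          (fun pq => pq.1 = p)).card = K - 1 := by
      intro p _
      have heq : (((Finset.univ : Finset (Fin (K * M) × Fin (K * M))).filter
          (fun pq => pq.1 ≠ pq.2 ∧ bin hK pq.1 = bin hK pq.2)).filter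
            (fun pq => pq.1 = p)).card
          = ((Finset.univ.filter fun q : Fin (K * M) => bin hK q = bin hK p).erase p).card := by
        apply Finset.card_nbij' (fun pq => pq.2) (fun q => (p, q))
        · intro pq hpq
          simp only [Finset.mem_coe, Finset.mem_filter, Finset.mem_univ, true_and] at hpq
          obtain ⟨⟨h1, h2⟩, h3⟩ := hpq
          subst h3
          simp only [Finset.mem_coe, Finset.mem_erase, Finset.mem_filter, Finset.mem_univ, true_and]
          exact ⟨fun h => h1 h.symm, h2.symm⟩
        · intro q hq
          simp only [Finset.mem_coe, Finset.mem_erase, Finset.mem_filter, Finset.mem_univ, true_and] at hq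
          simp only [Finset.mem_coe, Finset.mem_filter, Finset.mem_univ, true_and]
          exact ⟨⟨fun h => hq.1 h.symm, hq.2.symm⟩, trivial⟩
        · intro pq hpq
          simp only [Finset.mem_coe, Finset.mem_filter, Finset.mem_univ, true_and] at hpq
          rw [← hpq.2]
        · intro q _; rfl
      rw [heq, Finset.card_erase_of_mem (by simp), bin_fiber_card hK]
    rw [Finset.sum_congr rfl hfib, Finset.sum_const, smul_eq_mul,
      Finset.card_univ, Fintype.card_fin]
  have htallc : tall.card = (K * M) * (K * M - 1) := by
    rw [htall, Finset.card_eq_sum_card_fiberwise (f := Prod.fst)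
      (t := (Finset.univ : Finset (Fin (K * M)))) (fun _ _ => Finset.mem_univ _)]
    have hfib : ∀ p ∈ (Finset.univ : Finset (Fin (K * M))),
        (((Finset.univ : Finset (Fin (K * M) × Fin (K * M))).filter
        (fun pq => pq.1 ≠ pq.2)).filter (fun pq => pq.1 = p)).card = K * M - 1 := by
      intro p _
      have heq : (((Finset.univ : Finset (Fin (K * M) × Fin (K * M))).filter
          (fun pq => pq.1 ≠ pq.2)).filter (fun pq => pq.1 = p)).card
          = ((Finset.univ : Finset (Fin (K * M))).erase p).card := by
        apply Finset.card_nbij' (fun pq => pq.2) (fun q => (p, q))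
        · intro pq hpq
          simp only [Finset.mem_coe, Finset.mem_filter, Finset.mem_univ, true_and] at hpq
          obtain ⟨h1, h3⟩ := hpq
          subst h3
          simp only [Finset.mem_coe, Finset.mem_erase, Finset.mem_univ, and_true]
          exact fun h => h1 h.symm
        · intro q hq
          simp only [Finset.mem_coe, Finset.mem_erase, Finset.mem_univ, and_true] at hq
          simp only [Finset.mem_coe, Finset.mem_filter, Finset.mem_univ, true_and]
          exact ⟨fun h => hq h.symm, trivial⟩
        · intro pq hpq
          simp only [Finset.mem_coe, Finset.mem_filter, Finset.mem_univ, true_and] at hpq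
          rw [← hpq.2]
        · intro q _; rfl
      rw [heq, Finset.card_erase_of_mem (Finset.mem_univ _), Finset.card_univ, Fintype.card_fin]
    rw [Finset.sum_congr rfl hfib, Finset.sum_const, smul_eq_mul,
      Finset.card_univ, Fintype.card_fin]
  rw [hcount, hcountall, htc, htallc, ← Nat.mul_assoc]
  apply Nat.mul_le_mul_right
  have hK1 : K - 1 + 1 = K := Nat.succ_pred_eq_of_pos hK
  have hdist : M * (K - 1) + M = M * K := by
    conv_rhs => rw [← hK1]
    ring
  have hcomm : M * K = K * M := Nat.mul_comm _ _
  have h1M : 1 ≤ K * M := Nat.one_le_iff_ne_zero.mpr (by positivity)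
  calc M * (K * M * (K - 1)) = (K * M) * (M * (K - 1)) := by ring
    _ ≤ (K * M) * (K * M - 1) := by
        apply Nat.mul_le_mul_left
        omega


lemma stepC (hK : 0 < K) (hM : 0 < M) (a : Fin (K * M) → ℝ) (ha : ∀ i, 0 ≤ a i) :
    ∑ σ : Equiv.Perm (Fin (K * M)), ∑ m : Fin M,
      ((∑ i ∈ Finset.univ.filter fun i => bin hK (σ i) = m, a i) - (M : ℝ)⁻¹ * ∑ i, a i) ^ 2
    ≤ (Fintype.card (Equiv.Perm (Fin (K * M))) : ℝ) * ∑ i, (a i) ^ 2 := by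
  set P : ℝ := (Fintype.card (Equiv.Perm (Fin (K * M))) : ℝ) with hP
  set T : ℝ := ∑ i, a i with hT
  have hM0 : (0 : ℝ) < (M : ℝ) := by exact_mod_cast hM
  have hP0 : (0 : ℝ) ≤ P := by positivity
  -- the bin-sum function
  set S : Equiv.Perm (Fin (K * M)) → Fin M → ℝ :=
    fun σ m => ∑ i ∈ Finset.univ.filter fun i => bin hK (σ i) = m, a i with hS
  have hsumS : ∀ σ, ∑ m, S σ m = T := by
    intro σ
    exact Finset.sum_fiberwise _ (fun i => bin hK (σ i)) a
  -- expansion of the square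
  have hexp : ∀ σ, ∑ m, (S σ m - (M : ℝ)⁻¹ * T) ^ 2
      = (∑ m, (S σ m) ^ 2) - (M : ℝ)⁻¹ * T ^ 2 := by
    intro σ
    have h1 : ∑ m, (S σ m - (M : ℝ)⁻¹ * T) ^ 2
        = ∑ m, ((S σ m) ^ 2 - 2 * ((M : ℝ)⁻¹ * T) * S σ m + ((M : ℝ)⁻¹ * T) ^ 2) :=
      Finset.sum_congr rfl fun m _ => by ring
    rw [h1, Finset.sum_add_distrib, Finset.sum_sub_distrib, ← Finset.mul_sum, hsumS σ,
      Finset.sum_const, Finset.card_univ, Fintype.card_fin, nsmul_eq_mul]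
    field_simp
    ring
  -- the double-sum form of ∑ S²
  have hSsq : ∀ σ, ∑ m, (S σ m) ^ 2
      = ∑ i, ∑ j, (if bin hK (σ j) = bin hK (σ i) then a i * a j else 0) := by
    intro σ
    have h1 : ∀ m, (S σ m) ^ 2 = ∑ i ∈ Finset.univ.filter (fun i => bin hK (σ i) = m),
        a i * S σ (bin hK (σ i)) := by
      intro m
      rw [sq]
      rw [Finset.sum_mul]
      apply Finset.sum_congr rfl
      intro i hi
      simp only [Finset.mem_filter, Finset.mem_univ, true_and] at hi
      rw [hi]
    rw [Finset.sum_congr rfl (fun m _ => h1 m),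
      Finset.sum_fiberwise _ (fun i => bin hK (σ i)) (fun i => a i * S σ (bin hK (σ i)))]
    apply Finset.sum_congr rfl
    intro i _
    rw [hS]
    simp only
    rw [Finset.sum_filter, Finset.mul_sum]
    apply Finset.sum_congr rfl
    intro j _
    split <;> simp
  -- counts
  set cnt : Fin (K * M) → Fin (K * M) → ℝ := fun i j =>
    ((Finset.univ.filter fun σ : Equiv.Perm (Fin (K * M)) =>
      bin hK (σ j) = bin hK (σ i)).card : ℝ) with hcnt
  have hswap : ∑ σ : Equiv.Perm (Fin (K * M)), ∑ m, (S σ m) ^ 2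
      = ∑ i, ∑ j, a i * a j * cnt i j := by
    rw [Finset.sum_congr rfl (fun σ _ => hSsq σ)]
    rw [Finset.sum_comm]
    apply Finset.sum_congr rfl
    intro i _
    rw [Finset.sum_comm]
    apply Finset.sum_congr rfl
    intro j _
    rw [← Finset.sum_filter, Finset.sum_const, nsmul_eq_mul, hcnt]
    ring
  have hcnt_diag : ∀ i, cnt i i = P := by
    intro i
    rw [hcnt, hP]
    simp [Finset.filter_true_of_mem, Finset.card_univ]
  have hcnt_off : ∀ i j, i ≠ j → cnt i j ≤ P / M := by
    intro i j hij
    rw [le_div_iff₀ hM0, hcnt, hP]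
    have := collision_bound hK hM (i := j) (j := i) hij.symm
    rw [Finset.card_univ] at this
    calc ((Finset.univ.filter fun σ : Equiv.Perm (Fin (K * M)) =>
          bin hK (σ j) = bin hK (σ i)).card : ℝ) * M
        = ((M * (Finset.univ.filter fun σ : Equiv.Perm (Fin (K * M)) =>
          bin hK (σ j) = bin hK (σ i)).card : ℕ) : ℝ) := by push_cast; ring
      _ ≤ (Fintype.card (Equiv.Perm (Fin (K * M))) : ℝ) := by exact_mod_cast this
  -- bound the double sum
  have hdouble : ∑ i, ∑ j, a i * a j * cnt i j
      ≤ (P / M) * T ^ 2 + (P - P / M) * ∑ i, (a i) ^ 2 := by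
    have hle : ∑ i, ∑ j, a i * a j * cnt i j
        ≤ ∑ i, ∑ j, ((P / M) * (a i * a j)
            + (if i = j then (P - P / M) * (a i * a j) else 0)) := by
      apply Finset.sum_le_sum
      intro i _
      apply Finset.sum_le_sum
      intro j _
      by_cases h : i = j
      · subst h
        rw [hcnt_diag i]
        simp only [eq_self_iff_true, if_true]
        exact le_of_eq (by ring)
      · simp only [if_neg h, add_zero]
        rw [mul_comm ((P / M)) _]
        exact mul_le_mul_of_nonneg_left (hcnt_off i j h) (mul_nonneg (ha i) (ha j))
    refine hle.trans (le_of_eq ?_)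
    rw [Finset.sum_congr rfl (fun i (_ : i ∈ Finset.univ) => Finset.sum_add_distrib)]
    rw [Finset.sum_add_distrib]
    congr 1
    · rw [sq, Finset.sum_mul_sum, Finset.mul_sum]
      apply Finset.sum_congr rfl
      intro i _
      rw [Finset.mul_sum]
    · rw [Finset.mul_sum]
      apply Finset.sum_congr rfl
      intro i _
      rw [Finset.sum_ite_eq _ i (fun j => (P - P / M) * (a i * a j))]
      simp only [Finset.mem_univ, if_true]
      ring
  -- combine
  have hiT : ∀ i, a i ≤ T := fun i =>
    Finset.single_le_sum (fun j _ => ha j) (Finset.mem_univ i)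
  have hTsq : (∑ i, (a i) ^ 2) ≤ T ^ 2 := by
    calc ∑ i, (a i) ^ 2 = ∑ i, a i * a i := by simp [sq]
      _ ≤ ∑ i, a i * T := Finset.sum_le_sum fun i _ =>
          mul_le_mul_of_nonneg_left (hiT i) (ha i)
      _ = T * T := by rw [← Finset.sum_mul]
      _ = T ^ 2 := (sq T).symm
  have hsq0 : (0 : ℝ) ≤ ∑ i, (a i) ^ 2 := Finset.sum_nonneg fun i _ => sq_nonneg _
  calc ∑ σ : Equiv.Perm (Fin (K * M)), ∑ m : Fin M,
        ((∑ i ∈ Finset.univ.filter fun i => bin hK (σ i) = m, a i) - (M : ℝ)⁻¹ * ∑ i, a i) ^ 2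
      = ∑ σ : Equiv.Perm (Fin (K * M)), ((∑ m, (S σ m) ^ 2) - (M : ℝ)⁻¹ * T ^ 2) :=
        Finset.sum_congr rfl fun σ _ => hexp σ
    _ = (∑ σ : Equiv.Perm (Fin (K * M)), ∑ m, (S σ m) ^ 2) - P * ((M : ℝ)⁻¹ * T ^ 2) := by
        rw [Finset.sum_sub_distrib, Finset.sum_const, Finset.card_univ, nsmul_eq_mul, hP]
    _ = (∑ i, ∑ j, a i * a j * cnt i j) - P * ((M : ℝ)⁻¹ * T ^ 2) := by rw [hswap]
    _ ≤ ((P / M) * T ^ 2 + (P - P / M) * ∑ i, (a i) ^ 2) - P * ((M : ℝ)⁻¹ * T ^ 2) :=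
        sub_le_sub_right hdouble _
    _ = (P - P / M) * ∑ i, (a i) ^ 2 := by ring
    _ ≤ P * ∑ i, (a i) ^ 2 :=
        mul_le_mul_of_nonneg_right (sub_le_self P (div_nonneg hP0 hM0.le)) hsq0


end PAaux

open PAaux

/-- Privacy amplification lemma (Lemma 1): there is a balanced partition `π`
of the codebook `C` into `M` bins of size `K` such that for all `γ > 0` and all
everywhere-positive PMFs `Q_Z`, the total variation secrecy of `π(X)` is bounded by
`E_γ(P_{XZ}, P_X Q_Z) + (1/2)√((γ/K) E[exp(-|i(X;Z) - log γ|)])`. -/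
theorem stmt0 {X Z : Type*} [Fintype X] [Fintype Z] [Nonempty X] [Nonempty Z]
    (K M : ℕ) (hK : 0 < K) (hM : 0 < M)
    (C : Finset X) (hC : C.card = K * M)
    (PX : X → ℝ) (hPX : ∀ x, PX x = if x ∈ C then (((K * M : ℕ) : ℝ))⁻¹ else 0)
    (Wch : X → Z → ℝ) (hW : ∀ x, IsPMF (Wch x)) :
    ∃ π : X → Fin M,
      (∀ m : Fin M, (C.filter (fun x => π x = m)).card = K) ∧
      ∀ γ : ℝ, 0 < γ → ∀ QZ : Z → ℝ, IsPMF QZ → (∀ z, 0 < QZ z) →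
        dTV (fun p : Fin M × Z => ∑ x ∈ C.filter (fun x => π x = p.1), PX x * Wch x p.2)
            (fun p : Fin M × Z => ((M : ℝ))⁻¹ * ∑ x, PX x * Wch x p.2)
          ≤ Egam γ (fun p : X × Z => PX p.1 * Wch p.1 p.2)
                   (fun p : X × Z => PX p.1 * QZ p.2)
            + (1 / 2) * Real.sqrt ((γ / K) *
                ∑ x ∈ C, ∑ z, PX x * Wch x z *
                  Real.exp (-|Real.log (Wch x z / QZ z) - Real.log γ|)) := by
  classical
  have hKM : 0 < K * M := Nat.mul_pos hK hM
  have hNR : (0 : ℝ) < ((K * M : ℕ) : ℝ) := by exact_mod_cast hKM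
  set ninv : ℝ := (((K * M : ℕ) : ℝ))⁻¹ with hninvdef
  have hninv0 : 0 < ninv := inv_pos.mpr hNR
  let E := C.equivFinOfCardEq hC
  set y : Fin (K * M) → X := fun i => ((E.symm i : {x // x ∈ C}) : X) with hydef
  have hyC : ∀ i, y i ∈ C := fun i => (E.symm i).2
  have hPXy : ∀ i, PX (y i) = ninv := fun i => by rw [hPX, if_pos (hyC i)]
  have hPX0 : ∀ x, x ∉ C → PX x = 0 := fun x hx => by rw [hPX, if_neg hx]
  have hreindex : ∀ f : X → ℝ, ∑ x ∈ C, f x = ∑ i, f (y i) := by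
    intro f
    rw [← Finset.sum_coe_sort C f]
    exact (Equiv.sum_comp E.symm (fun s : {x // x ∈ C} => f s)).symm
  -- the random binning maps
  set bmap : Equiv.Perm (Fin (K * M)) → X → Fin M := fun σ x =>
    if h : x ∈ C then bin hK (σ (E ⟨x, h⟩)) else ⟨0, hM⟩ with hbmapdef
  have hEy : ∀ i, E ⟨y i, hyC i⟩ = i := by
    intro i
    have h1 : (⟨y i, hyC i⟩ : {x // x ∈ C}) = E.symm i := Subtype.ext rfl
    rw [h1, E.apply_symm_apply]
  have hbmapy : ∀ σ i, bmap σ (y i) = bin hK (σ i) := by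
    intro σ i
    rw [hbmapdef]
    simp only [dif_pos (hyC i)]
    rw [hEy]
  have hfilter : ∀ (σ : Equiv.Perm (Fin (K * M))) (m : Fin M) (f : X → ℝ),
      ∑ x ∈ C.filter (fun x => bmap σ x = m), f x
        = ∑ i ∈ Finset.univ.filter (fun i => bin hK (σ i) = m), f (y i) := by
    intro σ m f
    rw [Finset.sum_filter, Finset.sum_filter,
      hreindex (fun x => if bmap σ x = m then f x else 0)]
    exact Finset.sum_congr rfl fun i _ => by rw [hbmapy]
  -- balancedness of each bmap σ
  have hbal : ∀ (σ : Equiv.Perm (Fin (K * M))) (m : Fin M),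
      (C.filter (fun x => bmap σ x = m)).card = K := by
    intro σ m
    have h1 : (C.filter (fun x => bmap σ x = m)).card
        = (Finset.univ.filter (fun i => bin hK (σ i) = m)).card := by
      refine Finset.card_bij' (fun x hx => E ⟨x, (Finset.mem_filter.mp hx).1⟩)
        (fun i _ => y i) ?_ ?_ ?_ ?_
      · intro x hx
        obtain ⟨hxC, hxm⟩ := Finset.mem_filter.mp hx
        simp only [Finset.mem_filter, Finset.mem_univ, true_and]
        rw [hbmapdef] at hxm
        simpa only [dif_pos hxC] using hxm
      · intro i hi
        simp only [Finset.mem_filter, Finset.mem_univ, true_and] at hi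
        rw [Finset.mem_filter]
        exact ⟨hyC i, by rw [hbmapy σ i, hi]⟩
      · intro x hx
        exact congrArg Subtype.val (E.symm_apply_apply ⟨x, (Finset.mem_filter.mp hx).1⟩)
      · intro i hi
        have h1 : (⟨y i, hyC i⟩ : {x // x ∈ C}) = E.symm i := Subtype.ext rfl
        show E ⟨y i, _⟩ = i
        rw [h1, E.apply_symm_apply]
    have h2 : (Finset.univ.filter (fun i => bin hK (σ i) = m)).card
        = (Finset.univ.filter (fun i : Fin (K * M) => bin hK i = m)).card := by
      refine Finset.card_nbij' (fun i => σ i) (fun i => σ.symm i) ?_ ?_ ?_ ?_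
      · intro i hi
        simp only [Finset.mem_coe, Finset.mem_filter, Finset.mem_univ, true_and] at hi ⊢
        exact hi
      · intro i hi
        simp only [Finset.mem_coe, Finset.mem_filter, Finset.mem_univ, true_and] at hi ⊢
        rw [Equiv.apply_symm_apply]
        exact hi
      · intro i _
        exact σ.symm_apply_apply i
      · intro i _
        exact σ.apply_symm_apply i
    rw [h1, h2, bin_fiber_card hK]
  -- choose the permutation minimizing the total variation distance
  obtain ⟨σs, -, hσs⟩ := Finset.exists_min_image
    (Finset.univ : Finset (Equiv.Perm (Fin (K * M))))
    (fun σ => dTV (fun p : Fin M × Z =>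
        ∑ x ∈ C.filter (fun x => bmap σ x = p.1), PX x * Wch x p.2)
      (fun p : Fin M × Z => ((M : ℝ))⁻¹ * ∑ x, PX x * Wch x p.2))
    ⟨1, Finset.mem_univ 1⟩
  refine ⟨bmap σs, hbal σs, ?_⟩
  intro γ hγ QZ hQZ hQZpos
  set P : ℝ := (Fintype.card (Equiv.Perm (Fin (K * M))) : ℝ) with hPdef
  have hPpos : (0 : ℝ) < P := by
    rw [hPdef]; exact_mod_cast Fintype.card_pos
  set t : Z → ℝ := fun z => γ * QZ z with htdef
  have ht : ∀ z, 0 < t z := fun z => mul_pos hγ (hQZpos z)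
  set w : Fin (K * M) → Z → ℝ := fun i z => Wch (y i) z with hwdef
  have hw0 : ∀ i z, 0 ≤ w i z := fun i z => (hW (y i)).1 z
  set wt : Fin (K * M) → Z → ℝ := fun i z => min (w i z) (t z) with hwtdef
  have hwt0 : ∀ i z, 0 ≤ wt i z := fun i z => le_min (hw0 i z) (ht z).le
  have hwtw : ∀ i z, wt i z ≤ w i z := fun i z => min_le_left _ _
  set a : Z → Fin (K * M) → ℝ := fun z i => ninv * wt i z with hadef
  have ha0 : ∀ z i, 0 ≤ a z i := fun z i => mul_nonneg hninv0.le (hwt0 i z)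
  set Dt : Equiv.Perm (Fin (K * M)) → Fin M → Z → ℝ := fun σ m z =>
    (∑ i ∈ Finset.univ.filter fun i => bin hK (σ i) = m, a z i)
      - (M : ℝ)⁻¹ * ∑ i, a z i with hDtdef
  set EG : ℝ := Egam γ (fun p : X × Z => PX p.1 * Wch p.1 p.2)
    (fun p : X × Z => PX p.1 * QZ p.2) with hEGdef
  set Ssum : ℝ := ∑ x ∈ C, ∑ z, PX x * Wch x z *
    Real.exp (-|Real.log (Wch x z / QZ z) - Real.log γ|) with hSsumdef
  have hM0 : (0 : ℝ) < (M : ℝ) := by exact_mod_cast hM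
  -- identification of the E_γ term
  have hEg : EG = ∑ i, ∑ z, ninv * (w i z - wt i z) := by
    rw [hEGdef, Egam, Finset.sum_filter, Fintype.sum_prod_type]
    rw [show (∑ x : X, ∑ z, if γ * (PX x * QZ z) ≤ PX x * Wch x z
          then PX x * Wch x z - γ * (PX x * QZ z) else 0)
        = ∑ x ∈ C, ∑ z, (if γ * (PX x * QZ z) ≤ PX x * Wch x z
          then PX x * Wch x z - γ * (PX x * QZ z) else 0) from
      (Finset.sum_subset (Finset.subset_univ C) (fun x _ hx => by
        simp [hPX0 x hx])).symm]
    rw [hreindex (fun x => ∑ z, (if γ * (PX x * QZ z) ≤ PX x * Wch x z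
      then PX x * Wch x z - γ * (PX x * QZ z) else 0))]
    refine Finset.sum_congr rfl fun i _ => Finset.sum_congr rfl fun z _ => ?_
    rw [hPXy i]
    by_cases hcase : t z ≤ w i z
    · rw [if_pos, hwtdef]
      · simp only
        rw [min_eq_right hcase, htdef]
        ring
      · calc γ * (ninv * QZ z) = ninv * t z := by rw [htdef]; ring
          _ ≤ ninv * w i z := mul_le_mul_of_nonneg_left hcase hninv0.le
    · rw [if_neg, hwtdef]
      · simp only
        rw [min_eq_left (le_of_not_ge hcase)]
        ring
      · intro habs
        apply hcase
        have h2 : ninv * t z ≤ ninv * w i z := by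
          calc ninv * t z = γ * (ninv * QZ z) := by rw [htdef]; ring
            _ ≤ ninv * w i z := habs
        exact le_of_mul_le_mul_left h2 hninv0
  -- the two marginal expressions
  have hF1 : ∀ (σ : Equiv.Perm (Fin (K * M))) (m : Fin M) (z : Z),
      ∑ x ∈ C.filter (fun x => bmap σ x = m), PX x * Wch x z
        = ∑ i ∈ Finset.univ.filter (fun i => bin hK (σ i) = m), ninv * w i z := by
    intro σ m z
    rw [hfilter σ m (fun x => PX x * Wch x z)]
    exact Finset.sum_congr rfl fun i _ => by rw [hPXy, hwdef]
  have hF2 : ∀ z : Z, ∑ x, PX x * Wch x z = ∑ i, ninv * w i z := by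
    intro z
    rw [show (∑ x, PX x * Wch x z) = ∑ x ∈ C, PX x * Wch x z from
      (Finset.sum_subset (Finset.subset_univ C) (fun x _ hx => by
        rw [hPX0 x hx, zero_mul])).symm]
    rw [hreindex (fun x => PX x * Wch x z)]
    exact Finset.sum_congr rfl fun i _ => by rw [hPXy, hwdef]
  -- Step A: deterministic bound for each σ
  have hstepA : ∀ σ : Equiv.Perm (Fin (K * M)),
      dTV (fun p : Fin M × Z =>
          ∑ x ∈ C.filter (fun x => bmap σ x = p.1), PX x * Wch x p.2)
        (fun p : Fin M × Z => ((M : ℝ))⁻¹ * ∑ x, PX x * Wch x p.2)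
      ≤ EG + (1 / 2) * ∑ m, ∑ z, |Dt σ m z| := by
    intro σ
    rw [dTV, Fintype.sum_prod_type]
    have hpt : ∀ (m : Fin M) (z : Z),
        |(∑ x ∈ C.filter (fun x => bmap σ x = m), PX x * Wch x z)
            - (M : ℝ)⁻¹ * ∑ x, PX x * Wch x z|
        ≤ |Dt σ m z|
          + ((∑ i ∈ Finset.univ.filter (fun i => bin hK (σ i) = m),
              ninv * (w i z - wt i z))
            + (M : ℝ)⁻¹ * ∑ i, ninv * (w i z - wt i z)) := by
      intro m z
      rw [hF1, hF2]
      have e1 : ∀ s : Finset (Fin (K * M)), ∑ i ∈ s, ninv * w i z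
          = (∑ i ∈ s, a z i) + ∑ i ∈ s, ninv * (w i z - wt i z) := by
        intro s
        rw [← Finset.sum_add_distrib]
        exact Finset.sum_congr rfl fun i _ => by rw [hadef]; ring
      rw [e1, e1]
      have e2 : ((∑ i ∈ Finset.univ.filter (fun i => bin hK (σ i) = m), a z i)
            + ∑ i ∈ Finset.univ.filter (fun i => bin hK (σ i) = m),
                ninv * (w i z - wt i z))
          - (M : ℝ)⁻¹ * ((∑ i, a z i) + ∑ i, ninv * (w i z - wt i z))
          = Dt σ m z
            + ((∑ i ∈ Finset.univ.filter (fun i => bin hK (σ i) = m),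
                ninv * (w i z - wt i z))
              - (M : ℝ)⁻¹ * ∑ i, ninv * (w i z - wt i z)) := by
        rw [hDtdef]
        ring
      rw [e2]
      refine (abs_add_le _ _).trans ?_
      refine add_le_add_right ((abs_sub _ _).trans ?_) _
      have hr1 : 0 ≤ ∑ i ∈ Finset.univ.filter (fun i => bin hK (σ i) = m),
          ninv * (w i z - wt i z) :=
        Finset.sum_nonneg fun i _ =>
          mul_nonneg hninv0.le (sub_nonneg.mpr (hwtw i z))
      have hr2 : 0 ≤ ∑ i, ninv * (w i z - wt i z) :=
        Finset.sum_nonneg fun i _ =>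
          mul_nonneg hninv0.le (sub_nonneg.mpr (hwtw i z))
      rw [abs_of_nonneg hr1, abs_of_nonneg (mul_nonneg (by positivity) hr2)]
    calc (1 : ℝ) / 2 * ∑ m, ∑ z,
          |(∑ x ∈ C.filter (fun x => bmap σ x = m), PX x * Wch x z)
            - (M : ℝ)⁻¹ * ∑ x, PX x * Wch x z|
        ≤ (1 : ℝ) / 2 * ∑ m, ∑ z, (|Dt σ m z|
          + ((∑ i ∈ Finset.univ.filter (fun i => bin hK (σ i) = m),
              ninv * (w i z - wt i z))
            + (M : ℝ)⁻¹ * ∑ i, ninv * (w i z - wt i z))) := by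
          apply mul_le_mul_of_nonneg_left _ (by norm_num)
          exact Finset.sum_le_sum fun m _ =>
            Finset.sum_le_sum fun z _ => hpt m z
      _ = (1 : ℝ) / 2 * (∑ m, ∑ z, |Dt σ m z|)
          + (1 : ℝ) / 2 * ((∑ m, ∑ z, ∑ i ∈ Finset.univ.filter
                (fun i => bin hK (σ i) = m), ninv * (w i z - wt i z))
            + ∑ m, ∑ z, (M : ℝ)⁻¹ * ∑ i, ninv * (w i z - wt i z)) := by
          simp only [Finset.sum_add_distrib]
          ring
      _ = EG + (1 / 2) * ∑ m, ∑ z, |Dt σ m z| := by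
          have hA : (∑ m, ∑ z, ∑ i ∈ Finset.univ.filter
              (fun i => bin hK (σ i) = m), ninv * (w i z - wt i z))
              = ∑ i, ∑ z, ninv * (w i z - wt i z) := by
            rw [Finset.sum_comm]
            rw [show (∑ z, ∑ m, ∑ i ∈ Finset.univ.filter
                (fun i => bin hK (σ i) = m), ninv * (w i z - wt i z))
              = ∑ z, ∑ i, ninv * (w i z - wt i z) from
              Finset.sum_congr rfl fun z _ =>
                Finset.sum_fiberwise _ (fun i => bin hK (σ i))
                  (fun i => ninv * (w i z - wt i z))]
            rw [Finset.sum_comm]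
          have hB : (∑ m : Fin M, ∑ z, (M : ℝ)⁻¹ * ∑ i, ninv * (w i z - wt i z))
              = ∑ i, ∑ z, ninv * (w i z - wt i z) := by
            rw [Finset.sum_const, Finset.card_univ, Fintype.card_fin, nsmul_eq_mul,
              ← Finset.mul_sum, ← mul_assoc, mul_inv_cancel₀ hM0.ne', one_mul]
            exact Finset.sum_comm
          rw [hA, hB, hEg]
          ring
  -- Step B: Cauchy-Schwarz in (m, z) for each σ
  have hV0 : ∀ σ : Equiv.Perm (Fin (K * M)),
      0 ≤ ∑ z, (t z)⁻¹ * ∑ m, (Dt σ m z) ^ 2 := by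
    intro σ
    exact Finset.sum_nonneg fun z _ => mul_nonneg (inv_nonneg.mpr (ht z).le)
      (Finset.sum_nonneg fun m _ => sq_nonneg _)
  have hstepB : ∀ σ : Equiv.Perm (Fin (K * M)),
      (∑ m, ∑ z, |Dt σ m z|)
        ≤ Real.sqrt ((M : ℝ) * γ)
          * Real.sqrt (∑ z, (t z)⁻¹ * ∑ m, (Dt σ m z) ^ 2) := by
    intro σ
    have h := Real.sum_mul_le_sqrt_mul_sqrt (Finset.univ : Finset (Fin M × Z))
      (fun p => Real.sqrt (t p.2)) (fun p => |Dt σ p.1 p.2| / Real.sqrt (t p.2))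
    have h1 : ∑ p : Fin M × Z, Real.sqrt (t p.2) * (|Dt σ p.1 p.2| / Real.sqrt (t p.2))
        = ∑ m, ∑ z, |Dt σ m z| := by
      rw [Fintype.sum_prod_type]
      refine Finset.sum_congr rfl fun m _ => Finset.sum_congr rfl fun z _ => ?_
      rw [mul_div_cancel₀ _ (Real.sqrt_pos.mpr (ht z)).ne']
    have h2 : ∑ p : Fin M × Z, (Real.sqrt (t p.2)) ^ 2 = (M : ℝ) * γ := by
      rw [Fintype.sum_prod_type]
      have hz : ∑ z, (Real.sqrt (t z)) ^ 2 = γ := by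
        rw [show (∑ z, (Real.sqrt (t z)) ^ 2) = ∑ z, t z from
          Finset.sum_congr rfl fun z _ => Real.sq_sqrt (ht z).le]
        rw [htdef]
        rw [← Finset.mul_sum, hQZ.2, mul_one]
      rw [show (∑ m : Fin M, ∑ z, (Real.sqrt (t z)) ^ 2) = ∑ m : Fin M, γ from
        Finset.sum_congr rfl fun m _ => hz]
      rw [Finset.sum_const, Finset.card_univ, Fintype.card_fin, nsmul_eq_mul]
    have h3 : ∑ p : Fin M × Z, (|Dt σ p.1 p.2| / Real.sqrt (t p.2)) ^ 2
        = ∑ z, (t z)⁻¹ * ∑ m, (Dt σ m z) ^ 2 := by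
      rw [Fintype.sum_prod_type, Finset.sum_comm]
      refine Finset.sum_congr rfl fun z _ => ?_
      rw [Finset.mul_sum]
      refine Finset.sum_congr rfl fun m _ => ?_
      rw [div_pow, sq_abs, Real.sq_sqrt (ht z).le]
      rw [div_eq_inv_mul]
    rw [← h1, ← h2, ← h3]
    exact h
  -- Step C: expectation bound over σ
  set TT : ℝ := ∑ z, (t z)⁻¹ * ∑ i, (a z i) ^ 2 with hTTdef
  have hTT0 : 0 ≤ TT := Finset.sum_nonneg fun z _ =>
    mul_nonneg (inv_nonneg.mpr (ht z).le) (Finset.sum_nonneg fun i _ => sq_nonneg _)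
  have hstepC : ∑ σ : Equiv.Perm (Fin (K * M)), ∑ z, (t z)⁻¹ * ∑ m, (Dt σ m z) ^ 2
      ≤ P * TT := by
    rw [Finset.sum_comm]
    have hz : ∀ z : Z, ∑ σ : Equiv.Perm (Fin (K * M)), (t z)⁻¹ * ∑ m, (Dt σ m z) ^ 2
        ≤ (t z)⁻¹ * (P * ∑ i, (a z i) ^ 2) := by
      intro z
      rw [← Finset.mul_sum]
      refine mul_le_mul_of_nonneg_left ?_ (inv_nonneg.mpr (ht z).le)
      have := stepC hK hM (a z) (ha0 z)
      rw [hDtdef]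
      exact this
    calc ∑ z, ∑ σ : Equiv.Perm (Fin (K * M)), (t z)⁻¹ * ∑ m, (Dt σ m z) ^ 2
        ≤ ∑ z, (t z)⁻¹ * (P * ∑ i, (a z i) ^ 2) := Finset.sum_le_sum fun z _ => hz z
      _ = P * TT := by
          rw [hTTdef, Finset.mul_sum]
          exact Finset.sum_congr rfl fun z _ => by ring
  -- Step D: Cauchy-Schwarz over σ
  have hstepD : ∑ σ : Equiv.Perm (Fin (K * M)),
        Real.sqrt (∑ z, (t z)⁻¹ * ∑ m, (Dt σ m z) ^ 2)
      ≤ Real.sqrt P * Real.sqrt (∑ σ : Equiv.Perm (Fin (K * M)),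
          ∑ z, (t z)⁻¹ * ∑ m, (Dt σ m z) ^ 2) := by
    have h := Real.sum_mul_le_sqrt_mul_sqrt (Finset.univ : Finset (Equiv.Perm (Fin (K * M))))
      (fun _ => (1 : ℝ))
      (fun σ => Real.sqrt (∑ z, (t z)⁻¹ * ∑ m, (Dt σ m z) ^ 2))
    simp only [one_mul, one_pow] at h
    rw [Finset.sum_const, Finset.card_univ, nsmul_eq_mul, mul_one] at h
    have h2 : (∑ σ : Equiv.Perm (Fin (K * M)),
          (Real.sqrt (∑ z, (t z)⁻¹ * ∑ m, (Dt σ m z) ^ 2)) ^ 2)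
        = ∑ σ : Equiv.Perm (Fin (K * M)), ∑ z, (t z)⁻¹ * ∑ m, (Dt σ m z) ^ 2 :=
      Finset.sum_congr rfl fun σ _ => Real.sq_sqrt (hV0 σ)
    rw [h2] at h
    rw [hPdef]
    exact h
  -- identification of the variance proxy
  have hkey : ∀ (i : Fin (K * M)) (z : Z), (wt i z) ^ 2 * (t z)⁻¹
      = w i z * Real.exp (-|Real.log (w i z / QZ z) - Real.log γ|) := by
    intro i z
    rcases eq_or_lt_of_le (hw0 i z) with h0 | h0
    · rw [hwtdef]
      simp only
      rw [← h0, min_eq_left (ht z).le]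
      simp
    · have hlogeq : Real.log (w i z / QZ z) - Real.log γ = Real.log (w i z / t z) := by
        rw [Real.log_div h0.ne' (hQZpos z).ne', Real.log_div h0.ne' (ht z).ne']
        rw [htdef]
        simp only
        rw [Real.log_mul hγ.ne' (hQZpos z).ne']
        ring
      rw [hlogeq]
      by_cases hcase : w i z ≤ t z
      · rw [hwtdef]
        simp only
        rw [min_eq_left hcase]
        have h1 : Real.log (w i z / t z) ≤ 0 :=
          Real.log_nonpos (div_nonneg (hw0 i z) (ht z).le) ((div_le_one (ht z)).mpr hcase)
        rw [abs_of_nonpos h1, neg_neg, Real.exp_log (div_pos h0 (ht z))]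
        field_simp
      · push_neg at hcase
        rw [hwtdef]
        simp only
        rw [min_eq_right hcase.le]
        have h1 : 0 ≤ Real.log (w i z / t z) :=
          Real.log_nonneg ((one_le_div (ht z)).mpr hcase.le)
        rw [abs_of_nonneg h1, Real.exp_neg, Real.exp_log (div_pos h0 (ht z))]
        rw [sq]
        field_simp
  have hSsum_re : Ssum = ∑ i, ∑ z,
      ninv * (w i z * Real.exp (-|Real.log (w i z / QZ z) - Real.log γ|)) := by
    rw [hSsumdef]
    refine (hreindex _).trans ?_
    refine Finset.sum_congr rfl fun i _ => Finset.sum_congr rfl fun z _ => ?_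
    simp only [hwdef]
    rw [hPXy]
    ring
  have hTTS : TT = ninv * Ssum := by
    have h1 : ∀ (z : Z) (i : Fin (K * M)), (t z)⁻¹ * (a z i) ^ 2
        = ninv * (ninv * (w i z * Real.exp
            (-|Real.log (w i z / QZ z) - Real.log γ|))) := by
      intro z i
      rw [← hkey i z, hadef]
      simp only
      rw [mul_pow]
      ring
    calc TT = ∑ z, ∑ i, (t z)⁻¹ * (a z i) ^ 2 := by
          rw [hTTdef]
          exact Finset.sum_congr rfl fun z _ => Finset.mul_sum _ _ _
      _ = ∑ i, ∑ z, (t z)⁻¹ * (a z i) ^ 2 := Finset.sum_comm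
      _ = ∑ i, ∑ z, ninv * (ninv * (w i z * Real.exp
            (-|Real.log (w i z / QZ z) - Real.log γ|))) :=
          Finset.sum_congr rfl fun i _ => Finset.sum_congr rfl fun z _ => h1 z i
      _ = ninv * ∑ i, ∑ z, ninv * (w i z * Real.exp
            (-|Real.log (w i z / QZ z) - Real.log γ|)) := by
          rw [Finset.mul_sum]
          exact Finset.sum_congr rfl fun i _ => (Finset.mul_sum _ _ _).symm
      _ = ninv * Ssum := by rw [hSsum_re]
  have hSsum0 : 0 ≤ Ssum := by
    rw [hSsum_re]
    exact Finset.sum_nonneg fun i _ => Finset.sum_nonneg fun z _ =>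
      mul_nonneg hninv0.le (mul_nonneg (hw0 i z) (Real.exp_nonneg _))
  -- final algebra
  have hK0 : (0 : ℝ) < (K : ℝ) := by exact_mod_cast hK
  have halg : Real.sqrt ((M : ℝ) * γ) * (Real.sqrt P * Real.sqrt (P * TT))
      = P * Real.sqrt ((γ / K) * Ssum) := by
    have hMγTT : (M : ℝ) * γ * TT = (γ / K) * Ssum := by
      rw [hTTS, hninvdef, Nat.cast_mul]
      field_simp
    calc Real.sqrt ((M : ℝ) * γ) * (Real.sqrt P * Real.sqrt (P * TT))
        = Real.sqrt ((M : ℝ) * γ) * (Real.sqrt P * (Real.sqrt P * Real.sqrt TT)) := by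
          rw [Real.sqrt_mul hPpos.le]
      _ = (Real.sqrt P * Real.sqrt P) * (Real.sqrt ((M : ℝ) * γ) * Real.sqrt TT) := by
          ring
      _ = P * (Real.sqrt ((M : ℝ) * γ) * Real.sqrt TT) := by
          rw [Real.mul_self_sqrt hPpos.le]
      _ = P * Real.sqrt ((M : ℝ) * γ * TT) := by
          rw [Real.sqrt_mul (by positivity : (0 : ℝ) ≤ (M : ℝ) * γ)]
      _ = P * Real.sqrt ((γ / K) * Ssum) := by rw [hMγTT]
  -- assemble the average bound
  have hmain : ∑ σ : Equiv.Perm (Fin (K * M)),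
      dTV (fun p : Fin M × Z =>
          ∑ x ∈ C.filter (fun x => bmap σ x = p.1), PX x * Wch x p.2)
        (fun p : Fin M × Z => ((M : ℝ))⁻¹ * ∑ x, PX x * Wch x p.2)
      ≤ P * (EG + (1 / 2) * Real.sqrt ((γ / K) * Ssum)) := by
    calc ∑ σ : Equiv.Perm (Fin (K * M)),
        dTV (fun p : Fin M × Z =>
            ∑ x ∈ C.filter (fun x => bmap σ x = p.1), PX x * Wch x p.2)
          (fun p : Fin M × Z => ((M : ℝ))⁻¹ * ∑ x, PX x * Wch x p.2)
        ≤ ∑ σ : Equiv.Perm (Fin (K * M)), (EG + (1 / 2) * ∑ m, ∑ z, |Dt σ m z|) :=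
          Finset.sum_le_sum fun σ _ => hstepA σ
      _ = P * EG + (1 / 2) * ∑ σ : Equiv.Perm (Fin (K * M)), ∑ m, ∑ z, |Dt σ m z| := by
          rw [Finset.sum_add_distrib, Finset.sum_const, Finset.card_univ, nsmul_eq_mul,
            ← Finset.mul_sum, ← hPdef]
      _ ≤ P * EG + (1 / 2) * ∑ σ : Equiv.Perm (Fin (K * M)),
            (Real.sqrt ((M : ℝ) * γ)
              * Real.sqrt (∑ z, (t z)⁻¹ * ∑ m, (Dt σ m z) ^ 2)) := by
          refine add_le_add_right ?_ _
          refine mul_le_mul_of_nonneg_left ?_ (by norm_num)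
          exact Finset.sum_le_sum fun σ _ => hstepB σ
      _ = P * EG + (1 / 2) * (Real.sqrt ((M : ℝ) * γ)
            * ∑ σ : Equiv.Perm (Fin (K * M)),
              Real.sqrt (∑ z, (t z)⁻¹ * ∑ m, (Dt σ m z) ^ 2)) := by
          rw [← Finset.mul_sum]
      _ ≤ P * EG + (1 / 2) * (Real.sqrt ((M : ℝ) * γ)
            * (Real.sqrt P * Real.sqrt (∑ σ : Equiv.Perm (Fin (K * M)),
                ∑ z, (t z)⁻¹ * ∑ m, (Dt σ m z) ^ 2))) := by
          refine add_le_add_right ?_ _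
          refine mul_le_mul_of_nonneg_left ?_ (by norm_num)
          exact mul_le_mul_of_nonneg_left hstepD (Real.sqrt_nonneg _)
      _ ≤ P * EG + (1 / 2) * (Real.sqrt ((M : ℝ) * γ)
            * (Real.sqrt P * Real.sqrt (P * TT))) := by
          refine add_le_add_right ?_ _
          refine mul_le_mul_of_nonneg_left ?_ (by norm_num)
          refine mul_le_mul_of_nonneg_left ?_ (Real.sqrt_nonneg _)
          exact mul_le_mul_of_nonneg_left (Real.sqrt_le_sqrt hstepC) (Real.sqrt_nonneg _)
      _ = P * (EG + (1 / 2) * Real.sqrt ((γ / K) * Ssum)) := by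
          rw [halg]
          ring
  -- conclude for the minimizing permutation
  have h1 : P * dTV (fun p : Fin M × Z =>
        ∑ x ∈ C.filter (fun x => bmap σs x = p.1), PX x * Wch x p.2)
      (fun p : Fin M × Z => ((M : ℝ))⁻¹ * ∑ x, PX x * Wch x p.2)
      ≤ P * (EG + (1 / 2) * Real.sqrt ((γ / K) * Ssum)) := by
    calc P * dTV (fun p : Fin M × Z =>
            ∑ x ∈ C.filter (fun x => bmap σs x = p.1), PX x * Wch x p.2)
          (fun p : Fin M × Z => ((M : ℝ))⁻¹ * ∑ x, PX x * Wch x p.2)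
        = ∑ σ : Equiv.Perm (Fin (K * M)),
            dTV (fun p : Fin M × Z =>
              ∑ x ∈ C.filter (fun x => bmap σs x = p.1), PX x * Wch x p.2)
            (fun p : Fin M × Z => ((M : ℝ))⁻¹ * ∑ x, PX x * Wch x p.2) := by
          rw [Finset.sum_const, Finset.card_univ, nsmul_eq_mul, ← hPdef]
      _ ≤ ∑ σ : Equiv.Perm (Fin (K * M)),
            dTV (fun p : Fin M × Z =>
              ∑ x ∈ C.filter (fun x => bmap σ x = p.1), PX x * Wch x p.2)
            (fun p : Fin M × Z => ((M : ℝ))⁻¹ * ∑ x, PX x * Wch x p.2) :=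
          Finset.sum_le_sum fun σ _ => hσs σ (Finset.mem_univ σ)
      _ ≤ P * (EG + (1 / 2) * Real.sqrt ((γ / K) * Ssum)) := hmain
  exact le_of_mul_le_mul_left h1 hPpos

end
end

section
/- Let P_{YZ|X} be a wiretap channel from finite X to finite Y × Z, and consider any (M,ε,δ) secrecy code with induced joint PMF P_{WXYZ} and marginals P_{WY}, P_{WZ}, P_W, P_Z. Then for every real τ with 0 < τ < 1 − δ and every PMF Q_Y on Y: M · τ · β_{1−ε}(P_{WY}, P_W × Q_Y) ≤ β_{δ+τ}(P_{WZ}, P_W × P_Z). -/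
open scoped Classical
open Finset

noncomputable section

/-- Optimal performance of a binary hypothesis test between `P` and `Q`:
`β_α(P,Q) = min { ∑ Q a * t a : t : A → [0,1], ∑ P a * t a ≥ α }`. -/
def betaHT {A : Type*} [Fintype A] (α : ℝ) (P Q : A → ℝ) : ℝ :=
  sInf {b : ℝ | ∃ t : A → ℝ, (∀ a, 0 ≤ t a ∧ t a ≤ 1) ∧
    α ≤ ∑ a, P a * t a ∧ b = ∑ a, Q a * t a}

lemma sum_mul_sub_le_dTV {A : Type*} [Fintype A] (P Q : A → ℝ)
    (hsum : ∑ a, P a = ∑ a, Q a) (t : A → ℝ) (ht : ∀ a, 0 ≤ t a ∧ t a ≤ 1) :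
    ∑ a, P a * t a - ∑ a, Q a * t a ≤ dTV P Q := by
  have key : ∀ a : A, (P a - Q a) * t a ≤ (|P a - Q a| + (P a - Q a)) / 2 := by
    intro a
    rcases le_or_gt 0 (P a - Q a) with h | h
    · rw [abs_of_nonneg h]
      nlinarith [(ht a).1, (ht a).2]
    · nlinarith [(ht a).1, abs_nonneg (P a - Q a), neg_abs_le (P a - Q a)]
  have h0 : ∑ a, (P a - Q a) = 0 := by
    rw [Finset.sum_sub_distrib, hsum]; ring
  calc ∑ a, P a * t a - ∑ a, Q a * t a = ∑ a, (P a - Q a) * t a := by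
        rw [← Finset.sum_sub_distrib]
        exact Finset.sum_congr rfl (fun a _ => by ring)
    _ ≤ ∑ a, (|P a - Q a| + (P a - Q a)) / 2 := Finset.sum_le_sum (fun a _ => key a)
    _ = (∑ a, |P a - Q a|) / 2 + (∑ a, (P a - Q a)) / 2 := by
        rw [← Finset.sum_div, Finset.sum_add_distrib, add_div]
    _ = dTV P Q := by rw [h0, dTV]; ring

/-- General converse bound (Theorem 2): every `(M,ε,δ)` secrecy code satisfies
`M τ β_{1-ε}(P_{WY}, P_W Q_Y) ≤ β_{δ+τ}(P_{WZ}, P_W P_Z)` for all `0 < τ < 1 - δ`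
and every PMF `Q_Y`. -/
theorem stmt2 {X Y Z : Type*} [Fintype X] [Fintype Y] [Fintype Z]
    [Nonempty X] [Nonempty Y] [Nonempty Z]
    (Wch : X → Y × Z → ℝ) (hW : ∀ x, IsPMF (Wch x))
    (M : ℕ) (hM : 0 < M)
    (ε δ : ℝ) (hε0 : 0 ≤ ε) (hε1 : ε ≤ 1) (hδ0 : 0 ≤ δ) (hδ1 : δ ≤ 1)
    (enc : Fin M → X → ℝ) (henc : ∀ m, IsPMF (enc m))
    (g : Y → Fin M)
    (PWY : Fin M × Y → ℝ)
    (hPWY : ∀ p, PWY p = ((M : ℝ))⁻¹ * ∑ x, enc p.1 x * ∑ z, Wch x (p.2, z))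
    (PWZ : Fin M × Z → ℝ)
    (hPWZ : ∀ p, PWZ p = ((M : ℝ))⁻¹ * ∑ x, enc p.1 x * ∑ y, Wch x (y, p.2))
    (PZ : Z → ℝ) (hPZ : ∀ z, PZ z = ∑ m, PWZ (m, z))
    (hrel : ∑ m, ∑ x, ∑ p : Y × Z,
        ((M : ℝ))⁻¹ * enc m x * Wch x p * (if g p.1 = m then 0 else 1) ≤ ε)
    (hsec : dTV PWZ (fun p => ((M : ℝ))⁻¹ * PZ p.2) ≤ δ) :
    ∀ τ : ℝ, 0 < τ → τ < 1 - δ → ∀ QY : Y → ℝ, IsPMF QY →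
      (M : ℝ) * τ * betaHT (1 - ε) PWY (fun p => ((M : ℝ))⁻¹ * QY p.2)
        ≤ betaHT (δ + τ) PWZ (fun p => ((M : ℝ))⁻¹ * PZ p.2) := by
  intro τ hτ0 hτ1 QY hQY
  have hMpos : (0 : ℝ) < M := by exact_mod_cast hM
  have hWsum : ∀ x, ∑ y, ∑ z, Wch x (y, z) = 1 := by
    intro x
    have := (hW x).2
    rwa [Fintype.sum_prod_type] at this
  have hWsum' : ∀ x, ∑ z, ∑ y, Wch x (y, z) = 1 := by
    intro x; rw [Finset.sum_comm]; exact hWsum x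
  -- total probability of PWZ is 1
  have hPWZsum : ∑ p : Fin M × Z, PWZ p = 1 := by
    rw [Fintype.sum_prod_type]
    have : ∀ m : Fin M, ∑ z, PWZ (m, z) = (M : ℝ)⁻¹ := by
      intro m
      simp only [hPWZ]
      rw [← Finset.mul_sum, Finset.sum_comm]
      have : ∑ x, ∑ z, enc m x * ∑ y, Wch x (y, z)
          = ∑ x, enc m x := by
        refine Finset.sum_congr rfl fun x _ => ?_
        rw [← Finset.mul_sum, hWsum' x, mul_one]
      rw [this, (henc m).2, mul_one]
    rw [Finset.sum_congr rfl fun m _ => this m]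
    simp [mul_inv_cancel₀ (ne_of_gt hMpos)]
  -- sum of QZ is 1
  have hQZsum : ∑ p : Fin M × Z, (fun p : Fin M × Z => (M : ℝ)⁻¹ * PZ p.2) p = 1 := by
    have hPZsum : ∑ z, PZ z = 1 := by
      rw [Finset.sum_congr rfl fun z _ => hPZ z, Finset.sum_comm, ← Fintype.sum_prod_type]
      exact hPWZsum
    rw [Fintype.sum_prod_type]
    simp only [← Finset.mul_sum, hPZsum, mul_one]
    simp [mul_inv_cancel₀ (ne_of_gt hMpos)]
  -- Step A: betaHT (1-ε) PWY QB ≤ M⁻¹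
  set t0 : Fin M × Y → ℝ := fun p => if g p.2 = p.1 then 1 else 0 with ht0def
  have ht0b : ∀ p, 0 ≤ t0 p ∧ t0 p ≤ 1 := by
    intro p; simp only [ht0def]; split <;> norm_num
  have hQt0 : ∑ p : Fin M × Y, ((M : ℝ)⁻¹ * QY p.2) * t0 p = (M : ℝ)⁻¹ := by
    rw [Fintype.sum_prod_type, Finset.sum_comm]
    have : ∀ y : Y, ∑ m : Fin M, ((M : ℝ)⁻¹ * QY y) * t0 (m, y) = (M : ℝ)⁻¹ * QY y := by
      intro y
      simp only [ht0def, mul_ite, mul_one, mul_zero]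
      rw [Finset.sum_ite_eq]
      simp
    rw [Finset.sum_congr rfl fun y _ => this y, ← Finset.mul_sum, hQY.2, mul_one]
  have hPt0 : 1 - ε ≤ ∑ p : Fin M × Y, PWY p * t0 p := by
    -- rewrite the sum as a quadruple sum
    have hrw : ∑ p : Fin M × Y, PWY p * t0 p
        = ∑ m, ∑ x, ∑ p : Y × Z,
            (M : ℝ)⁻¹ * enc m x * Wch x p * (if g p.1 = m then 1 else 0) := by
      rw [Fintype.sum_prod_type]
      refine Finset.sum_congr rfl fun m _ => ?_
      have : ∀ y : Y, PWY (m, y) * t0 (m, y)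
          = ∑ x, ∑ z, (M : ℝ)⁻¹ * enc m x * Wch x (y, z) * (if g y = m then 1 else 0) := by
        intro y
        rw [hPWY]
        simp only [ht0def]
        simp only [Finset.mul_sum, Finset.sum_mul]
        exact Finset.sum_congr rfl fun x _ => Finset.sum_congr rfl fun z _ => by ring
      rw [Finset.sum_congr rfl fun y _ => this y, Finset.sum_comm]
      refine Finset.sum_congr rfl fun x _ => ?_
      rw [Fintype.sum_prod_type]
    -- total probability is 1
    have htot : ∑ m, ∑ x, ∑ p : Y × Z, (M : ℝ)⁻¹ * enc m x * Wch x p = 1 := by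
      have : ∀ m : Fin M, ∑ x, ∑ p : Y × Z, (M : ℝ)⁻¹ * enc m x * Wch x p
          = (M : ℝ)⁻¹ := by
        intro m
        have : ∀ x : X, ∑ p : Y × Z, (M : ℝ)⁻¹ * enc m x * Wch x p
            = (M : ℝ)⁻¹ * enc m x := by
          intro x
          rw [← Finset.mul_sum, (hW x).2, mul_one]
        rw [Finset.sum_congr rfl fun x _ => this x, ← Finset.mul_sum, (henc m).2, mul_one]
      rw [Finset.sum_congr rfl fun m _ => this m]
      simp [mul_inv_cancel₀ (ne_of_gt hMpos)]
    -- split: total = correct + error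
    have hsplit : ∑ m, ∑ x, ∑ p : Y × Z, (M : ℝ)⁻¹ * enc m x * Wch x p
        = (∑ m, ∑ x, ∑ p : Y × Z,
            (M : ℝ)⁻¹ * enc m x * Wch x p * (if g p.1 = m then 1 else 0))
          + (∑ m, ∑ x, ∑ p : Y × Z,
            (M : ℝ)⁻¹ * enc m x * Wch x p * (if g p.1 = m then 0 else 1)) := by
      rw [← Finset.sum_add_distrib]
      refine Finset.sum_congr rfl fun m _ => ?_
      rw [← Finset.sum_add_distrib]
      refine Finset.sum_congr rfl fun x _ => ?_
      rw [← Finset.sum_add_distrib]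
      refine Finset.sum_congr rfl fun p _ => ?_
      split <;> ring
    rw [hrw]
    have := hrel
    linarith [htot, hsplit, hrel]
  have hbA : betaHT (1 - ε) PWY (fun p => ((M : ℝ))⁻¹ * QY p.2) ≤ (M : ℝ)⁻¹ := by
    apply csInf_le
    · refine ⟨0, fun b hb => ?_⟩
      obtain ⟨t, htb, _, hbeq⟩ := hb
      rw [hbeq]
      apply Finset.sum_nonneg
      intro p _
      exact mul_nonneg (mul_nonneg (by positivity) (hQY.1 p.2)) (htb p).1
    · exact ⟨t0, ht0b, hPt0, hQt0.symm⟩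
  -- Step B: τ ≤ betaHT (δ+τ) PWZ QZ
  have hbB : τ ≤ betaHT (δ + τ) PWZ (fun p => ((M : ℝ))⁻¹ * PZ p.2) := by
    apply le_csInf
    · refine ⟨1, fun _ => (1 : ℝ), fun a => by norm_num, ?_, ?_⟩
      · simp only [mul_one]
        rw [hPWZsum]
        linarith
      · simp only [mul_one]
        rw [hQZsum]
    · rintro b ⟨t, htb, hPt, hbeq⟩
      have := sum_mul_sub_le_dTV PWZ (fun p : Fin M × Z => (M : ℝ)⁻¹ * PZ p.2)
        (by rw [hPWZsum, hQZsum]) t htb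
      rw [hbeq]
      linarith [hsec]
  calc (M : ℝ) * τ * betaHT (1 - ε) PWY (fun p => ((M : ℝ))⁻¹ * QY p.2)
      ≤ (M : ℝ) * τ * (M : ℝ)⁻¹ :=
        mul_le_mul_of_nonneg_left hbA (by positivity)
    _ = τ := by field_simp
    _ ≤ betaHT (δ + τ) PWZ (fun p => ((M : ℝ))⁻¹ * PZ p.2) := hbB
end
end

section
/- Let P_{YZ|X} be a wiretap channel from finite X to finite Y × Z, let ε, δ ∈ [0,1] with ε + δ < 1, and consider any (M,ε,δ) secrecy code with induced joint PMF P_{XYZ} on X × Y × Z (marginalizing out W) and marginal P_{XZ}. Then for every channel Q_{Y|Z} from Z to Y and every real τ with 0 < τ < 1 − ε − δ: M · τ · β_{1−ε−δ−τ}(P_{XYZ}, P_{XZ} × Q_{Y|Z}) ≤ τ + δ, where (P_{XZ} × Q_{Y|Z})(x,y,z) := P_{XZ}(x,z)·Q_{Y|Z}(y|z). -/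
open scoped Classical
open Finset

noncomputable section

/-- Swap the outermost and innermost sums in a triple sum. -/
lemma sum_comm3 {α β γ : Type*} [Fintype α] [Fintype β] [Fintype γ] (f : α → β → γ → ℝ) :
    ∑ a, ∑ b, ∑ c, f a b c = ∑ c, ∑ a, ∑ b, f a b c := by
  calc ∑ a, ∑ b, ∑ c, f a b c = ∑ a, ∑ c, ∑ b, f a b c :=
        Finset.sum_congr rfl fun a _ => Finset.sum_comm
    _ = ∑ c, ∑ a, ∑ b, f a b c := Finset.sum_comm

lemma max_eq_half_add_abs (a : ℝ) : max a 0 = (a + |a|) / 2 := by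
  rcases le_or_gt 0 a with h | h
  · rw [max_eq_left h, abs_of_nonneg h]; ring
  · rw [max_eq_right h.le, abs_of_neg h]; ring

/-- Converse bound (Theorem 3): every `(M,ε,δ)` secrecy code satisfies
`M τ β_{1-ε-δ-τ}(P_{XYZ}, P_{XZ} Q_{Y|Z}) ≤ τ + δ` for every channel `Q_{Y|Z}`
and every `0 < τ < 1 - ε - δ`. -/
theorem stmt3 {X Y Z : Type*} [Fintype X] [Fintype Y] [Fintype Z]
    [Nonempty X] [Nonempty Y] [Nonempty Z]
    (Wch : X → Y × Z → ℝ) (hW : ∀ x, IsPMF (Wch x))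
    (M : ℕ) (hM : 0 < M)
    (ε δ : ℝ) (hε0 : 0 ≤ ε) (hε1 : ε ≤ 1) (hδ0 : 0 ≤ δ) (hδ1 : δ ≤ 1)
    (hεδ : ε + δ < 1)
    (enc : Fin M → X → ℝ) (henc : ∀ m, IsPMF (enc m))
    (g : Y → Fin M)
    (PXYZ : X × Y × Z → ℝ)
    (hPXYZ : ∀ p, PXYZ p = (∑ m, ((M : ℝ))⁻¹ * enc m p.1) * Wch p.1 p.2)
    (PXZ : X × Z → ℝ)
    (hPXZ : ∀ p, PXZ p = ∑ y, PXYZ (p.1, y, p.2))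
    (PWZ : Fin M × Z → ℝ)
    (hPWZ : ∀ p, PWZ p = ((M : ℝ))⁻¹ * ∑ x, enc p.1 x * ∑ y, Wch x (y, p.2))
    (PZ : Z → ℝ) (hPZ : ∀ z, PZ z = ∑ m, PWZ (m, z))
    (hrel : ∑ m, ∑ x, ∑ p : Y × Z,
        ((M : ℝ))⁻¹ * enc m x * Wch x p * (if g p.1 = m then 0 else 1) ≤ ε)
    (hsec : dTV PWZ (fun p => ((M : ℝ))⁻¹ * PZ p.2) ≤ δ) :
    ∀ QYgZ : Z → Y → ℝ, (∀ z, IsPMF (QYgZ z)) →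
      ∀ τ : ℝ, 0 < τ → τ < 1 - ε - δ →
        (M : ℝ) * τ * betaHT (1 - ε - δ - τ) PXYZ
            (fun p : X × Y × Z => PXZ (p.1, p.2.2) * QYgZ p.2.2 p.2.1)
          ≤ τ + δ := by
  intro Q hQ τ hτ0 hτ1
  have hMR : (0:ℝ) < M := by exact_mod_cast hM
  have hMne : (M:ℝ) ≠ 0 := ne_of_gt hMR
  have hMinv : (0:ℝ) ≤ (M:ℝ)⁻¹ := by positivity
  set c : ℝ := (τ + δ) / τ with hc
  have hc1 : 1 ≤ c := by
    rw [hc, le_div_iff₀ hτ0]; linarith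
  have hcnn : (0:ℝ) ≤ c := le_trans zero_le_one hc1
  -- nonnegativity facts
  have hencnn : ∀ m x, 0 ≤ enc m x := fun m => (henc m).1
  have hWnn : ∀ x p, 0 ≤ Wch x p := fun x => (hW x).1
  have hQnn : ∀ z y, 0 ≤ Q z y := fun z => (hQ z).1
  have hPWZnn : ∀ p, 0 ≤ PWZ p := by
    intro p; rw [hPWZ]
    refine mul_nonneg hMinv (Finset.sum_nonneg fun x _ => mul_nonneg (hencnn _ _) ?_)
    exact Finset.sum_nonneg fun y _ => hWnn _ _
  have hPZnn : ∀ z, 0 ≤ PZ z := by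
    intro z; rw [hPZ]; exact Finset.sum_nonneg fun m _ => hPWZnn _
  have hPXYZnn : ∀ p, 0 ≤ PXYZ p := by
    intro p; rw [hPXYZ]
    exact mul_nonneg (Finset.sum_nonneg fun m _ => mul_nonneg hMinv (hencnn _ _)) (hWnn _ _)
  have hPXZnn : ∀ p, 0 ≤ PXZ p := by
    intro p; rw [hPXZ]; exact Finset.sum_nonneg fun y _ => hPXYZnn _
  -- the truncation function u
  set u : Fin M → Z → ℝ := fun m z =>
    if PWZ (m, z) ≤ c * ((M:ℝ)⁻¹ * PZ z) then 1
    else c * ((M:ℝ)⁻¹ * PZ z) / PWZ (m, z) with hu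
  have hqnn : ∀ z, (0:ℝ) ≤ c * ((M:ℝ)⁻¹ * PZ z) := fun z =>
    mul_nonneg hcnn (mul_nonneg hMinv (hPZnn z))
  have hu0 : ∀ m z, 0 ≤ u m z := by
    intro m z; rw [hu]; dsimp only
    split
    · exact zero_le_one
    · exact div_nonneg (hqnn z) (hPWZnn _)
  have hu1 : ∀ m z, u m z ≤ 1 := by
    intro m z; rw [hu]; dsimp only
    split
    · exact le_refl 1
    · rename_i h
      push_neg at h
      have hpos : 0 < PWZ (m, z) := lt_of_le_of_lt (hqnn z) h
      exact (div_le_one hpos).mpr h.le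
  have humul : ∀ m z, PWZ (m, z) * u m z ≤ c * ((M:ℝ)⁻¹ * PZ z) := by
    intro m z; rw [hu]; dsimp only
    split
    · rename_i h; rw [mul_one]; exact h
    · rename_i h
      push_neg at h
      have hpos : 0 < PWZ (m, z) := lt_of_le_of_lt (hqnn z) h
      rw [mul_div_cancel₀ _ (ne_of_gt hpos)]
  have huone : ∀ m z, PWZ (m, z) * (1 - u m z) ≤ max (PWZ (m, z) - (M:ℝ)⁻¹ * PZ z) 0 := by
    intro m z; rw [hu]; dsimp only
    split
    · simp
    · rename_i h
      push_neg at h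
      have hpos : 0 < PWZ (m, z) := lt_of_le_of_lt (hqnn z) h
      have h1 : PWZ (m, z) * (1 - c * ((M:ℝ)⁻¹ * PZ z) / PWZ (m, z))
          = PWZ (m, z) - c * ((M:ℝ)⁻¹ * PZ z) := by
        field_simp
      rw [h1]
      have h2 : (M:ℝ)⁻¹ * PZ z ≤ c * ((M:ℝ)⁻¹ * PZ z) :=
        le_mul_of_one_le_left (mul_nonneg hMinv (hPZnn z)) hc1
      have := le_max_left (PWZ (m, z) - (M:ℝ)⁻¹ * PZ z) (0:ℝ)
      linarith
  -- the test t
  set D : X → ℝ := fun x => ∑ m, enc m x with hD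
  set N : X → Y × Z → ℝ :=
    fun x p => ∑ m, enc m x * ((if g p.1 = m then (1:ℝ) else 0) * u m p.2) with hN
  set t : X × Y × Z → ℝ := fun p => N p.1 p.2 / D p.1 with ht
  have hDnn : ∀ x, 0 ≤ D x := fun x => Finset.sum_nonneg fun m _ => hencnn m x
  have hNnn : ∀ x p, 0 ≤ N x p := by
    intro x p
    refine Finset.sum_nonneg fun m _ => mul_nonneg (hencnn m x) (mul_nonneg ?_ (hu0 _ _))
    split <;> norm_num
  have hDN : ∀ x p, D x * (N x p / D x) = N x p := by
    intro x p
    by_cases h : D x = 0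
    · have hz : ∀ m, enc m x = 0 := by
        intro m
        have h0 := (Finset.sum_eq_zero_iff_of_nonneg (fun m _ => hencnn m x)).1 h
        exact h0 m (Finset.mem_univ m)
      have hN0 : N x p = 0 := Finset.sum_eq_zero fun m _ => by rw [hz m]; ring
      rw [hN0, h]; simp
    · field_simp
  have ht0 : ∀ p, 0 ≤ t p := fun p => div_nonneg (hNnn _ _) (hDnn _)
  have ht1 : ∀ p, t p ≤ 1 := by
    intro p; rw [ht]; dsimp only
    by_cases h : D p.1 = 0
    · rw [h, div_zero]; exact zero_le_one
    · rw [div_le_one (lt_of_le_of_ne (hDnn p.1) (Ne.symm h))]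
      refine Finset.sum_le_sum fun m _ => ?_
      refine mul_le_of_le_one_right (hencnn m p.1) ?_
      refine mul_le_one₀ ?_ (hu0 _ _) (hu1 _ _)
      split <;> norm_num
  -- P-side pointwise identity
  have keyP : ∀ x (p : Y × Z), PXYZ (x, p) * t (x, p)
      = ∑ m, (M:ℝ)⁻¹ * enc m x * Wch x p * ((if g p.1 = m then (1:ℝ) else 0) * u m p.2) := by
    intro x p
    have h1 : PXYZ (x, p) = (M:ℝ)⁻¹ * D x * Wch x p := by
      rw [hPXYZ]; rw [hD]; dsimp only; rw [← Finset.mul_sum]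
    have h2 : t (x, p) = N x p / D x := rfl
    calc PXYZ (x, p) * t (x, p)
        = (M:ℝ)⁻¹ * Wch x p * (D x * (N x p / D x)) := by rw [h1, h2]; ring
      _ = (M:ℝ)⁻¹ * Wch x p * N x p := by rw [hDN]
      _ = ∑ m, (M:ℝ)⁻¹ * enc m x * Wch x p * ((if g p.1 = m then (1:ℝ) else 0) * u m p.2) := by
          rw [hN]; dsimp only; rw [Finset.mul_sum]
          exact Finset.sum_congr rfl fun m _ => by ring
  -- total probability is 1
  have hTotal : ∑ m, ∑ x, ∑ p : Y × Z, (M:ℝ)⁻¹ * enc m x * Wch x p = 1 := by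
    have e1 : ∀ m : Fin M, ∀ x, ∑ p : Y × Z, (M:ℝ)⁻¹ * enc m x * Wch x p
        = (M:ℝ)⁻¹ * enc m x := by
      intro m x; rw [← Finset.mul_sum, (hW x).2, mul_one]
    have e2 : ∀ m : Fin M, ∑ x, (M:ℝ)⁻¹ * enc m x = (M:ℝ)⁻¹ := by
      intro m; rw [← Finset.mul_sum, (henc m).2, mul_one]
    simp_rw [e1, e2, Finset.sum_const, Finset.card_univ, Fintype.card_fin, nsmul_eq_mul]
    rw [mul_inv_cancel₀ hMne]
  -- the slack term is at most δ
  have hSlackEq : ∀ m : Fin M,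
      ∑ x, ∑ p : Y × Z, (M:ℝ)⁻¹ * enc m x * Wch x p * (1 - u m p.2)
        = ∑ z, PWZ (m, z) * (1 - u m z) := by
    intro m
    have e1 : ∑ x, ∑ p : Y × Z, (M:ℝ)⁻¹ * enc m x * Wch x p * (1 - u m p.2)
        = ∑ x, ∑ y, ∑ z, (M:ℝ)⁻¹ * enc m x * Wch x (y, z) * (1 - u m z) := by
      exact Finset.sum_congr rfl fun x _ => by rw [Fintype.sum_prod_type]
    rw [e1, sum_comm3]
    refine Finset.sum_congr rfl fun z _ => ?_
    rw [hPWZ]; dsimp only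
    simp only [Finset.mul_sum, Finset.sum_mul]
    exact Finset.sum_congr rfl fun x _ =>
      Finset.sum_congr rfl fun y _ => by ring
  have hSumPWZ : ∑ m, ∑ z, PWZ (m, z) = ∑ z, PZ z := by
    rw [Finset.sum_comm]
    exact Finset.sum_congr rfl fun z _ => (hPZ z).symm
  have hSumQZ : ∑ m : Fin M, ∑ z, (M:ℝ)⁻¹ * PZ z = ∑ z, PZ z := by
    rw [Finset.sum_const, Finset.card_univ, Fintype.card_fin, nsmul_eq_mul, ← Finset.mul_sum,
      ← mul_assoc, mul_inv_cancel₀ hMne, one_mul]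
  have hmaxdTV : ∑ m, ∑ z, max (PWZ (m, z) - (M:ℝ)⁻¹ * PZ z) 0
      = dTV PWZ (fun p => (M:ℝ)⁻¹ * PZ p.2) := by
    have h0 : ∑ m, ∑ z, (PWZ (m, z) - (M:ℝ)⁻¹ * PZ z) = 0 := by
      simp only [Finset.sum_sub_distrib]
      rw [hSumPWZ, hSumQZ]; ring
    have hR : dTV PWZ (fun p => (M:ℝ)⁻¹ * PZ p.2)
        = (1 / 2) * ∑ m, ∑ z, |PWZ (m, z) - (M:ℝ)⁻¹ * PZ z| := by
      rw [dTV]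
      congr 1
      exact Fintype.sum_prod_type _
    rw [hR]
    simp only [max_eq_half_add_abs]
    simp only [← Finset.sum_div]
    simp only [Finset.sum_add_distrib]
    rw [h0]
    ring
  have hSlack : ∑ m, ∑ x, ∑ p : Y × Z, (M:ℝ)⁻¹ * enc m x * Wch x p * (1 - u m p.2) ≤ δ := by
    calc ∑ m, ∑ x, ∑ p : Y × Z, (M:ℝ)⁻¹ * enc m x * Wch x p * (1 - u m p.2)
        = ∑ m, ∑ z, PWZ (m, z) * (1 - u m z) :=
          Finset.sum_congr rfl fun m _ => hSlackEq m
      _ ≤ ∑ m, ∑ z, max (PWZ (m, z) - (M:ℝ)⁻¹ * PZ z) 0 :=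
          Finset.sum_le_sum fun m _ => Finset.sum_le_sum fun z _ => huone m z
      _ = dTV PWZ (fun p => (M:ℝ)⁻¹ * PZ p.2) := hmaxdTV
      _ ≤ δ := hsec
  -- P-side lower bound
  have hterm : ∀ m x (p : Y × Z),
      (M:ℝ)⁻¹ * enc m x * Wch x p
        - (M:ℝ)⁻¹ * enc m x * Wch x p * (if g p.1 = m then (0:ℝ) else 1)
        - (M:ℝ)⁻¹ * enc m x * Wch x p * (1 - u m p.2)
      ≤ (M:ℝ)⁻¹ * enc m x * Wch x p * ((if g p.1 = m then (1:ℝ) else 0) * u m p.2) := by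
    intro m x p
    have hA : 0 ≤ (M:ℝ)⁻¹ * enc m x * Wch x p :=
      mul_nonneg (mul_nonneg hMinv (hencnn m x)) (hWnn x p)
    by_cases hg : g p.1 = m
    · rw [if_pos hg, if_pos hg]
      exact le_of_eq (by ring)
    · rw [if_neg hg, if_neg hg]
      have h1 : 0 ≤ (M:ℝ)⁻¹ * enc m x * Wch x p * (1 - u m p.2) :=
        mul_nonneg hA (by linarith [hu1 m p.2])
      nlinarith
  have hPsum : ∑ p : X × Y × Z, PXYZ p * t p
      = ∑ m, ∑ x, ∑ p : Y × Z,
          (M:ℝ)⁻¹ * enc m x * Wch x p * ((if g p.1 = m then (1:ℝ) else 0) * u m p.2) := by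
    rw [Fintype.sum_prod_type]
    calc ∑ x, ∑ p : Y × Z, PXYZ (x, p) * t (x, p)
        = ∑ x, ∑ p : Y × Z, ∑ m,
            (M:ℝ)⁻¹ * enc m x * Wch x p * ((if g p.1 = m then (1:ℝ) else 0) * u m p.2) :=
          Finset.sum_congr rfl fun x _ => Finset.sum_congr rfl fun p _ => keyP x p
      _ = ∑ m, ∑ x, ∑ p : Y × Z,
            (M:ℝ)⁻¹ * enc m x * Wch x p * ((if g p.1 = m then (1:ℝ) else 0) * u m p.2) :=
          sum_comm3 _
  have hPside : 1 - ε - δ ≤ ∑ p : X × Y × Z, PXYZ p * t p := by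
    rw [hPsum]
    have hsplit : ∑ m, ∑ x, ∑ p : Y × Z,
        ((M:ℝ)⁻¹ * enc m x * Wch x p
          - (M:ℝ)⁻¹ * enc m x * Wch x p * (if g p.1 = m then (0:ℝ) else 1)
          - (M:ℝ)⁻¹ * enc m x * Wch x p * (1 - u m p.2))
        = (∑ m, ∑ x, ∑ p : Y × Z, (M:ℝ)⁻¹ * enc m x * Wch x p)
          - (∑ m, ∑ x, ∑ p : Y × Z,
              (M:ℝ)⁻¹ * enc m x * Wch x p * (if g p.1 = m then (0:ℝ) else 1))
          - (∑ m, ∑ x, ∑ p : Y × Z, (M:ℝ)⁻¹ * enc m x * Wch x p * (1 - u m p.2)) := by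
      simp only [Finset.sum_sub_distrib]
    have hmono : ∑ m, ∑ x, ∑ p : Y × Z,
        ((M:ℝ)⁻¹ * enc m x * Wch x p
          - (M:ℝ)⁻¹ * enc m x * Wch x p * (if g p.1 = m then (0:ℝ) else 1)
          - (M:ℝ)⁻¹ * enc m x * Wch x p * (1 - u m p.2))
        ≤ ∑ m, ∑ x, ∑ p : Y × Z,
            (M:ℝ)⁻¹ * enc m x * Wch x p * ((if g p.1 = m then (1:ℝ) else 0) * u m p.2) :=
      Finset.sum_le_sum fun m _ => Finset.sum_le_sum fun x _ =>
        Finset.sum_le_sum fun p _ => hterm m x p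
    rw [hsplit] at hmono
    linarith
  -- ∑ z, PZ z = 1
  have hPZ1 : ∑ z, PZ z = 1 := by
    rw [← hSumPWZ]
    have e1 : ∀ m : Fin M, ∑ z, PWZ (m, z) = (M:ℝ)⁻¹ := by
      intro m
      have e2 : ∀ z, PWZ (m, z) = ∑ x, (M:ℝ)⁻¹ * (enc m x * ∑ y, Wch x (y, z)) := by
        intro z; rw [hPWZ]; dsimp only; rw [Finset.mul_sum]
      simp_rw [e2]
      rw [Finset.sum_comm]
      have e3 : ∀ x, ∑ z, (M:ℝ)⁻¹ * (enc m x * ∑ y, Wch x (y, z)) = (M:ℝ)⁻¹ * enc m x := by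
        intro x
        rw [← Finset.mul_sum]
        have : ∑ z, enc m x * ∑ y, Wch x (y, z) = enc m x * ∑ z, ∑ y, Wch x (y, z) := by
          rw [Finset.mul_sum]
        rw [this]
        have : ∑ z, ∑ y, Wch x (y, z) = ∑ p : Y × Z, Wch x p := by
          rw [Fintype.sum_prod_type]; exact Finset.sum_comm
        rw [this, (hW x).2, mul_one]
      simp_rw [e3]
      rw [← Finset.mul_sum, (henc m).2, mul_one]
    simp_rw [e1]
    rw [Finset.sum_const, Finset.card_univ, Fintype.card_fin, nsmul_eq_mul,
      mul_inv_cancel₀ hMne]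
  -- Q-side pointwise identity
  have keyQ : ∀ x y z, PXZ (x, z) * Q z y * t (x, (y, z))
      = ∑ m, (M:ℝ)⁻¹ * (enc m x * (∑ y', Wch x (y', z)))
          * (Q z y * ((if g y = m then (1:ℝ) else 0) * u m z)) := by
    intro x y z
    have h1 : PXZ (x, z) = (M:ℝ)⁻¹ * D x * (∑ y', Wch x (y', z)) := by
      rw [hPXZ]; dsimp only
      have : ∀ y', PXYZ (x, y', z) = ((M:ℝ)⁻¹ * D x) * Wch x (y', z) := by
        intro y'; rw [hPXYZ]; dsimp only
        rw [hD]; dsimp only; rw [← Finset.mul_sum]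
      simp_rw [this]
      rw [← Finset.mul_sum, mul_assoc]
    have h2 : t (x, (y, z)) = N x (y, z) / D x := rfl
    calc PXZ (x, z) * Q z y * t (x, (y, z))
        = (M:ℝ)⁻¹ * (∑ y', Wch x (y', z)) * Q z y * (D x * (N x (y, z) / D x)) := by
          rw [h1, h2]; ring
      _ = (M:ℝ)⁻¹ * (∑ y', Wch x (y', z)) * Q z y * N x (y, z) := by rw [hDN]
      _ = ∑ m, (M:ℝ)⁻¹ * (enc m x * (∑ y', Wch x (y', z)))
            * (Q z y * ((if g y = m then (1:ℝ) else 0) * u m z)) := by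
          rw [hN]; dsimp only
          rw [Finset.mul_sum]
          exact Finset.sum_congr rfl fun m _ => by ring
  -- the Q-side sum bound
  have hQsum : ∑ p : X × Y × Z, PXZ (p.1, p.2.2) * Q p.2.2 p.2.1 * t p
      ≤ (τ + δ) / ((M:ℝ) * τ) := by
    have e2 : ∀ x, (∑ p : Y × Z, PXZ (x, p.2) * Q p.2 p.1 * t (x, p))
        = ∑ m, ∑ y, ∑ z, (M:ℝ)⁻¹ * (enc m x * (∑ y', Wch x (y', z)))
            * (Q z y * ((if g y = m then (1:ℝ) else 0) * u m z)) := by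
      intro x
      calc (∑ p : Y × Z, PXZ (x, p.2) * Q p.2 p.1 * t (x, p))
          = ∑ y, ∑ z, PXZ (x, z) * Q z y * t (x, (y, z)) := Fintype.sum_prod_type _
        _ = ∑ y, ∑ z, ∑ m, (M:ℝ)⁻¹ * (enc m x * (∑ y', Wch x (y', z)))
            * (Q z y * ((if g y = m then (1:ℝ) else 0) * u m z)) :=
            Finset.sum_congr rfl fun y _ => Finset.sum_congr rfl fun z _ => keyQ x y z
        _ = ∑ m, ∑ y, ∑ z, (M:ℝ)⁻¹ * (enc m x * (∑ y', Wch x (y', z)))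
            * (Q z y * ((if g y = m then (1:ℝ) else 0) * u m z)) := sum_comm3 _
    have e5 : ∀ m, (∑ x, ∑ y, ∑ z, (M:ℝ)⁻¹ * (enc m x * (∑ y', Wch x (y', z)))
            * (Q z y * ((if g y = m then (1:ℝ) else 0) * u m z)))
        = ∑ z, (∑ y, Q z y * (if g y = m then (1:ℝ) else 0)) * (PWZ (m, z) * u m z) := by
      intro m
      calc (∑ x, ∑ y, ∑ z, (M:ℝ)⁻¹ * (enc m x * (∑ y', Wch x (y', z)))
              * (Q z y * ((if g y = m then (1:ℝ) else 0) * u m z)))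
          = ∑ z, ∑ x, ∑ y, (M:ℝ)⁻¹ * (enc m x * (∑ y', Wch x (y', z)))
              * (Q z y * ((if g y = m then (1:ℝ) else 0) * u m z)) := sum_comm3 _
        _ = ∑ z, (∑ y, Q z y * (if g y = m then (1:ℝ) else 0)) * (PWZ (m, z) * u m z) := by
            refine Finset.sum_congr rfl fun z _ => ?_
            have hS : ∑ x, (M:ℝ)⁻¹ * (enc m x * (∑ y', Wch x (y', z))) * u m z
                = PWZ (m, z) * u m z := by
              rw [hPWZ]; dsimp only
              rw [Finset.mul_sum, Finset.sum_mul]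
            rw [Finset.sum_comm]
            calc ∑ y, ∑ x, (M:ℝ)⁻¹ * (enc m x * (∑ y', Wch x (y', z)))
                    * (Q z y * ((if g y = m then (1:ℝ) else 0) * u m z))
                = ∑ y, (Q z y * (if g y = m then (1:ℝ) else 0))
                    * ∑ x, (M:ℝ)⁻¹ * (enc m x * (∑ y', Wch x (y', z))) * u m z := by
                  refine Finset.sum_congr rfl fun y _ => ?_
                  rw [Finset.mul_sum]
                  exact Finset.sum_congr rfl fun x _ => by ring
              _ = (∑ y, Q z y * (if g y = m then (1:ℝ) else 0))
                    * ∑ x, (M:ℝ)⁻¹ * (enc m x * (∑ y', Wch x (y', z))) * u m z := by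
                  rw [Finset.sum_mul]
              _ = (∑ y, Q z y * (if g y = m then (1:ℝ) else 0)) * (PWZ (m, z) * u m z) := by
                  rw [hS]
    have e1 : ∑ p : X × Y × Z, PXZ (p.1, p.2.2) * Q p.2.2 p.2.1 * t p
        = ∑ m, ∑ z, (∑ y, Q z y * (if g y = m then (1:ℝ) else 0)) * (PWZ (m, z) * u m z) := by
      calc ∑ p : X × Y × Z, PXZ (p.1, p.2.2) * Q p.2.2 p.2.1 * t p
          = ∑ x, ∑ p : Y × Z, PXZ (x, p.2) * Q p.2 p.1 * t (x, p) := Fintype.sum_prod_type _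
        _ = ∑ x, ∑ m, ∑ y, ∑ z, (M:ℝ)⁻¹ * (enc m x * (∑ y', Wch x (y', z)))
            * (Q z y * ((if g y = m then (1:ℝ) else 0) * u m z)) :=
            Finset.sum_congr rfl fun x _ => e2 x
        _ = ∑ m, ∑ x, ∑ y, ∑ z, (M:ℝ)⁻¹ * (enc m x * (∑ y', Wch x (y', z)))
            * (Q z y * ((if g y = m then (1:ℝ) else 0) * u m z)) := Finset.sum_comm
        _ = ∑ m, ∑ z, (∑ y, Q z y * (if g y = m then (1:ℝ) else 0)) * (PWZ (m, z) * u m z) :=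
            Finset.sum_congr rfl fun m _ => e5 m
    rw [e1]
    have hQindnn : ∀ m z, 0 ≤ ∑ y, Q z y * (if g y = m then (1:ℝ) else 0) := by
      intro m z
      refine Finset.sum_nonneg fun y _ => mul_nonneg (hQnn z y) ?_
      split <;> norm_num
    have step1 : ∑ m, ∑ z, (∑ y, Q z y * (if g y = m then (1:ℝ) else 0)) * (PWZ (m, z) * u m z)
        ≤ ∑ m, ∑ z, (∑ y, Q z y * (if g y = m then (1:ℝ) else 0)) * (c * ((M:ℝ)⁻¹ * PZ z)) :=
      Finset.sum_le_sum fun m _ => Finset.sum_le_sum fun z _ =>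
        mul_le_mul_of_nonneg_left (humul m z) (hQindnn m z)
    have step2 : ∑ m, ∑ z, (∑ y, Q z y * (if g y = m then (1:ℝ) else 0)) * (c * ((M:ℝ)⁻¹ * PZ z))
        = (τ + δ) / ((M:ℝ) * τ) := by
      rw [Finset.sum_comm]
      have e3 : ∀ z, ∑ m, (∑ y, Q z y * (if g y = m then (1:ℝ) else 0)) * (c * ((M:ℝ)⁻¹ * PZ z))
          = c * ((M:ℝ)⁻¹ * PZ z) := by
        intro z
        rw [← Finset.sum_mul]
        have : ∑ m, ∑ y, Q z y * (if g y = m then (1:ℝ) else 0) = 1 := by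
          rw [Finset.sum_comm]
          have e4 : ∀ y, ∑ m, Q z y * (if g y = m then (1:ℝ) else 0) = Q z y := by
            intro y
            rw [← Finset.mul_sum]
            simp [Finset.sum_ite_eq]
          simp_rw [e4]
          exact (hQ z).2
        rw [this, one_mul]
      simp_rw [e3]
      rw [← Finset.mul_sum, ← Finset.mul_sum, hPZ1, mul_one, hc,
        eq_div_iff (ne_of_gt (mul_pos hMR hτ0))]
      field_simp
    linarith
  -- feasibility: the value of the test is in the defining set of betaHT
  have hmem : (∑ a : X × Y × Z, PXZ (a.1, a.2.2) * Q a.2.2 a.2.1 * t a)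
      ∈ {b : ℝ | ∃ t' : X × Y × Z → ℝ, (∀ a, 0 ≤ t' a ∧ t' a ≤ 1) ∧
          (1 - ε - δ - τ) ≤ ∑ a, PXYZ a * t' a ∧
          b = ∑ a, (fun p : X × Y × Z => PXZ (p.1, p.2.2) * Q p.2.2 p.2.1) a * t' a} := by
    refine ⟨t, fun a => ⟨ht0 a, ht1 a⟩, by linarith, rfl⟩
  have hbdd : BddBelow {b : ℝ | ∃ t' : X × Y × Z → ℝ, (∀ a, 0 ≤ t' a ∧ t' a ≤ 1) ∧
      (1 - ε - δ - τ) ≤ ∑ a, PXYZ a * t' a ∧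
      b = ∑ a, (fun p : X × Y × Z => PXZ (p.1, p.2.2) * Q p.2.2 p.2.1) a * t' a} := by
    refine ⟨0, fun b hb => ?_⟩
    obtain ⟨t', ht', -, rfl⟩ := hb
    exact Finset.sum_nonneg fun a _ =>
      mul_nonneg (mul_nonneg (hPXZnn _) (hQnn _ _)) (ht' a).1
  have hβ : betaHT (1 - ε - δ - τ) PXYZ
      (fun p : X × Y × Z => PXZ (p.1, p.2.2) * Q p.2.2 p.2.1)
      ≤ (τ + δ) / ((M:ℝ) * τ) := by
    rw [betaHT]
    exact le_trans (csInf_le hbdd hmem) hQsum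
  have hMτ : (0:ℝ) < (M:ℝ) * τ := mul_pos hMR hτ0
  have hfin : (M:ℝ) * τ * ((τ + δ) / ((M:ℝ) * τ)) = τ + δ := by
    field_simp
  calc (M:ℝ) * τ * betaHT (1 - ε - δ - τ) PXYZ
        (fun p : X × Y × Z => PXZ (p.1, p.2.2) * Q p.2.2 p.2.1)
      ≤ (M:ℝ) * τ * ((τ + δ) / ((M:ℝ) * τ)) :=
        mul_le_mul_of_nonneg_left hβ hMτ.le
    _ = τ + δ := hfin
end
end

section
/- Let X and Z be finite nonempty sets, C ⊆ X with |C| = N, and P_{Z|X} a channel from X to Z. Let π : C → {1,…,M} be a surjection and, for each m ∈ {1,…,M}, let P_{X|W=m} be a PMF on X supported on π⁻¹(m). Let W be uniform on {1,…,M}, let P_{WXZ}(m,x,z) := (1/M)·P_{X|W}(x|m)·P_{Z|X}(z|x) with marginals P_{WZ}, P_W, and P_{XZ}, and let P^unif_X be the uniform distribution on C. Then for every PMF Q_Z on Z: d(P_{WZ}, P_W × Q_Z) ≥ E_{N/M}(P_{XZ}, P^unif_X × Q_Z), where (P^unif_X × Q_Z)(x,z) := P^unif_X(x)·Q_Z(z).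 -/
open scoped Classical
open Finset

noncomputable section

lemma sum_max_le_max_sum {α : Type*} (F : Finset α) (a : α → ℝ) (b : ℝ)
    (ha : ∀ x ∈ F, 0 ≤ a x) (hb : 0 ≤ b) :
    ∑ x ∈ F, max (a x - b) 0 ≤ max ((∑ x ∈ F, a x) - b) 0 := by
  classical
  have h1 : ∑ x ∈ F, max (a x - b) 0
      = ∑ x ∈ F.filter (fun x => b ≤ a x), (a x - b) := by
    rw [Finset.sum_filter]
    refine Finset.sum_congr rfl fun x hx => ?_
    by_cases h : b ≤ a x
    · simp [h, max_eq_left (sub_nonneg.2 h)]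
    · simp [h, max_eq_right (sub_nonpos.2 (le_of_not_ge h))]
  rw [h1]
  rcases (F.filter (fun x => b ≤ a x)).eq_empty_or_nonempty with he | hne
  · simp [he, le_max_right]
  · have hcard : 1 ≤ ((F.filter (fun x => b ≤ a x)).card : ℝ) := by
      exact_mod_cast Finset.one_le_card.2 hne
    have hsub : F.filter (fun x => b ≤ a x) ⊆ F := Finset.filter_subset _ _
    calc ∑ x ∈ F.filter (fun x => b ≤ a x), (a x - b)
        = (∑ x ∈ F.filter (fun x => b ≤ a x), a x)
          - ((F.filter (fun x => b ≤ a x)).card : ℝ) * b := by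
          rw [Finset.sum_sub_distrib, Finset.sum_const, nsmul_eq_mul]
      _ ≤ (∑ x ∈ F, a x) - b := by
          have h2 : ∑ x ∈ F.filter (fun x => b ≤ a x), a x ≤ ∑ x ∈ F, a x :=
            Finset.sum_le_sum_of_subset_of_nonneg hsub (fun x hx _ => ha x hx)
          have h3 : b ≤ ((F.filter (fun x => b ≤ a x)).card : ℝ) * b := by
            nlinarith
          linarith
      _ ≤ max ((∑ x ∈ F, a x) - b) 0 := le_max_left _ _

lemma sum_max_le_dTV {A : Type*} [Fintype A] (P Q : A → ℝ)
    (h : ∑ a, P a = ∑ a, Q a) :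
    ∑ a, max (P a - Q a) 0 ≤ dTV P Q := by
  have key : ∀ x : ℝ, max x 0 = (|x| + x) / 2 := by
    intro x; rcases le_or_gt 0 x with hx | hx
    · rw [max_eq_left hx, abs_of_nonneg hx]; ring
    · rw [max_eq_right hx.le, abs_of_neg hx]; ring
  have heq : ∑ a, max (P a - Q a) 0
      = ((∑ a, |P a - Q a|) + ∑ a, (P a - Q a)) / 2 := by
    simp_rw [key]
    rw [← Finset.sum_div, ← Finset.sum_add_distrib]
  have hz : ∑ a, (P a - Q a) = 0 := by
    rw [Finset.sum_sub_distrib, h, sub_self]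
  rw [heq, hz, add_zero, dTV]
  ring_nf
  exact le_refl _

/-- Converse bound for privacy amplification (Lemma 2): for every partition code
with codebook `C` of size `N` partitioned into `M` message sets,
`d(P_{WZ}, P_W Q_Z) ≥ E_{N/M}(P_{XZ}, P_X^unif Q_Z)` for every PMF `Q_Z`. -/
theorem stmt4 {X Z : Type*} [Fintype X] [Fintype Z] [Nonempty X] [Nonempty Z]
    (C : Finset X) (N : ℕ) (hN : C.card = N)
    (Wch : X → Z → ℝ) (hW : ∀ x, IsPMF (Wch x))
    (M : ℕ) (hM : 0 < M)
    (π : X → Fin M) (hsurj : ∀ m : Fin M, ∃ x ∈ C, π x = m)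
    (enc : Fin M → X → ℝ) (henc : ∀ m, IsPMF (enc m))
    (hsupp : ∀ m x, enc m x ≠ 0 → x ∈ C ∧ π x = m)
    (PWZ : Fin M × Z → ℝ)
    (hPWZ : ∀ p, PWZ p = ((M : ℝ))⁻¹ * ∑ x, enc p.1 x * Wch x p.2)
    (PXZ : X × Z → ℝ)
    (hPXZ : ∀ p, PXZ p = (((M : ℝ))⁻¹ * ∑ m, enc m p.1) * Wch p.1 p.2)
    (Punif : X → ℝ) (hPunif : ∀ x, Punif x = if x ∈ C then ((N : ℝ))⁻¹ else 0) :
    ∀ QZ : Z → ℝ, IsPMF QZ →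
      Egam ((N : ℝ) / (M : ℝ)) PXZ (fun p : X × Z => Punif p.1 * QZ p.2)
        ≤ dTV PWZ (fun p : Fin M × Z => ((M : ℝ))⁻¹ * QZ p.2) := by
  intro QZ hQZ
  obtain ⟨hQ0, hQ1⟩ := hQZ
  obtain ⟨x0, hx0C, _⟩ := hsurj ⟨0, hM⟩
  have hNpos : 0 < N := hN ▸ Finset.card_pos.2 ⟨x0, hx0C⟩
  have hNne : (N : ℝ) ≠ 0 := Nat.cast_ne_zero.2 hNpos.ne'
  have hMne : (M : ℝ) ≠ 0 := Nat.cast_ne_zero.2 hM.ne'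
  set γ : ℝ := (N : ℝ) / (M : ℝ) with hγ
  -- enc facts
  have hmarg : ∀ x, (∑ m', enc m' x) = enc (π x) x := by
    intro x
    refine Finset.sum_eq_single (π x) (fun b _ hb => ?_) (fun h => absurd (Finset.mem_univ _) h)
    by_contra h
    exact hb ((hsupp b x h).2.symm ▸ rfl)
  have hencC : ∀ m x, x ∉ C → enc m x = 0 := by
    intro m x hx
    by_contra h
    exact hx (hsupp m x h).1
  have hencπ : ∀ m x, π x ≠ m → enc m x = 0 := by
    intro m x hx
    by_contra h
    exact hx (hsupp m x h).2
  -- Step 1: Egam as a sum of positive parts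
  have hE : Egam γ PXZ (fun p : X × Z => Punif p.1 * QZ p.2)
      = ∑ p : X × Z, max (PXZ p - γ * (Punif p.1 * QZ p.2)) 0 := by
    rw [Egam, Finset.sum_filter]
    refine Finset.sum_congr rfl fun p _ => ?_
    by_cases h : γ * (Punif p.1 * QZ p.2) ≤ PXZ p
    · rw [if_pos h]; exact (max_eq_left (sub_nonneg.2 h)).symm
    · rw [if_neg h]; exact (max_eq_right (sub_nonpos.2 (le_of_not_ge h))).symm
  -- Step 3 (fiberwise bound)
  have hfiber : ∀ (m : Fin M) (z : Z),
      ∑ x ∈ Finset.univ.filter (fun x => π x = m),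
        max (PXZ (x, z) - γ * (Punif x * QZ z)) 0
      ≤ max (PWZ (m, z) - (M : ℝ)⁻¹ * QZ z) 0 := by
    intro m z
    have hsub : C.filter (fun x => π x = m) ⊆ Finset.univ.filter (fun x => π x = m) := by
      intro x hx
      simp only [Finset.mem_filter] at hx ⊢
      exact ⟨Finset.mem_univ _, hx.2⟩
    have hrestrict : ∑ x ∈ Finset.univ.filter (fun x => π x = m),
        max (PXZ (x, z) - γ * (Punif x * QZ z)) 0
        = ∑ x ∈ C.filter (fun x => π x = m),
        max (PXZ (x, z) - γ * (Punif x * QZ z)) 0 := by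
      refine (Finset.sum_subset hsub fun x hx hxn => ?_).symm
      simp only [Finset.mem_filter, Finset.mem_univ, true_and] at hx
      simp only [Finset.mem_filter] at hxn
      have hxC : x ∉ C := fun h => hxn ⟨h, hx⟩
      have h1 : PXZ (x, z) = 0 := by
        rw [hPXZ]
        simp only
        rw [hmarg, hx, hencC m x hxC]
        ring
      rw [h1, hPunif, if_neg hxC]
      simp
    rw [hrestrict]
    have hterm : ∀ x ∈ C.filter (fun x => π x = m),
        max (PXZ (x, z) - γ * (Punif x * QZ z)) 0
        = max ((M : ℝ)⁻¹ * (enc m x * Wch x z) - (M : ℝ)⁻¹ * QZ z) 0 := by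
      intro x hx
      simp only [Finset.mem_filter] at hx
      have h1 : PXZ (x, z) = (M : ℝ)⁻¹ * (enc m x * Wch x z) := by
        rw [hPXZ]; simp only; rw [hmarg, hx.2]; ring
      have h2 : γ * (Punif x * QZ z) = (M : ℝ)⁻¹ * QZ z := by
        rw [hPunif, if_pos hx.1, hγ]
        field_simp
      rw [h1, h2]
    rw [Finset.sum_congr rfl hterm]
    have hb : 0 ≤ (M : ℝ)⁻¹ * QZ z := by
      have : (0:ℝ) ≤ (M : ℝ)⁻¹ := by positivity
      exact mul_nonneg this (hQ0 z)
    have ha : ∀ x ∈ C.filter (fun x => π x = m),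
        0 ≤ (M : ℝ)⁻¹ * (enc m x * Wch x z) := by
      intro x _
      have := (henc m).1 x
      have := (hW x).1 z
      positivity
    refine (sum_max_le_max_sum _ _ _ ha hb).trans ?_
    have hsum : ∑ x ∈ C.filter (fun x => π x = m), (M : ℝ)⁻¹ * (enc m x * Wch x z)
        = PWZ (m, z) := by
      rw [hPWZ]
      simp only
      rw [Finset.mul_sum]
      refine Finset.sum_subset (Finset.subset_univ _) fun x _ hxn => ?_
      simp only [Finset.mem_filter] at hxn
      have : enc m x = 0 := by
        by_contra h
        exact hxn ⟨(hsupp m x h).1, (hsupp m x h).2⟩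
      rw [this]; ring
    rw [hsum]
  -- assemble: reindex the big sum
  have hreindex : ∑ p : X × Z, max (PXZ p - γ * (Punif p.1 * QZ p.2)) 0
      ≤ ∑ q : Fin M × Z, max (PWZ q - (M : ℝ)⁻¹ * QZ q.2) 0 := by
    calc ∑ p : X × Z, max (PXZ p - γ * (Punif p.1 * QZ p.2)) 0
        = ∑ z, ∑ x, max (PXZ (x, z) - γ * (Punif x * QZ z)) 0 := by
          rw [Fintype.sum_prod_type_right]
      _ = ∑ z, ∑ m, ∑ x ∈ Finset.univ.filter (fun x => π x = m),
            max (PXZ (x, z) - γ * (Punif x * QZ z)) 0 := by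
          refine Finset.sum_congr rfl fun z _ => ?_
          exact (Finset.sum_fiberwise Finset.univ π _).symm
      _ ≤ ∑ z, ∑ m, max (PWZ (m, z) - (M : ℝ)⁻¹ * QZ z) 0 :=
          Finset.sum_le_sum fun z _ => Finset.sum_le_sum fun m _ => hfiber m z
      _ = ∑ q : Fin M × Z, max (PWZ q - (M : ℝ)⁻¹ * QZ q.2) 0 := by
          rw [Fintype.sum_prod_type_right]
  -- equality of total masses
  have hsums : ∑ q : Fin M × Z, PWZ q
      = ∑ q : Fin M × Z, (M : ℝ)⁻¹ * QZ q.2 := by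
    have h1 : ∑ q : Fin M × Z, PWZ q = 1 := by
      rw [Fintype.sum_prod_type]
      have hm : ∀ m : Fin M, ∑ z, PWZ (m, z) = (M : ℝ)⁻¹ := by
        intro m
        have hinner : ∑ z, ∑ x, enc m x * Wch x z = 1 := by
          rw [Finset.sum_comm]
          simp_rw [← Finset.mul_sum]
          rw [Finset.sum_congr rfl (fun x _ => by rw [(hW x).2, mul_one])]
          exact (henc m).2
        simp_rw [hPWZ]
        rw [← Finset.mul_sum]
        rw [hinner, mul_one]
      rw [Finset.sum_congr rfl (fun m _ => hm m)]
      simp [hMne]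
    have h2 : ∑ q : Fin M × Z, (M : ℝ)⁻¹ * QZ q.2 = 1 := by
      rw [Fintype.sum_prod_type]
      simp only [← Finset.mul_sum, hQ1, mul_one]
      simp [hMne]
    rw [h1, h2]
  rw [hE]
  exact hreindex.trans (sum_max_le_dTV _ _ hsums)
end
end

section
/- Let X and Y be finite nonempty sets, let C = {x₁,…,x_N} ⊆ X be a set of N distinct elements, let P_{Y|X} be a channel from X to Y, let P^unif_X be the uniform distribution on C, and let P_{Y|C}(y) := (1/N)·Σ_{i=1}^N P_{Y|X}(y|x_i). Then for every PMF Q_Y on Y: d(P_{Y|C}, Q_Y) ≥ E_N(P^unif_X × P_{Y|X}, P^unif_X × Q_Y). -/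
open scoped Classical
open Finset

noncomputable section

lemma half_l1 {Y : Type*} [Fintype Y] (P Q : Y → ℝ) (h : ∑ y, P y = ∑ y, Q y) :
    dTV P Q = ∑ y, max 0 (P y - Q y) := by
  have key : ∀ t : ℝ, |t| = 2 * max 0 t - t := by
    intro t
    rcases le_total t 0 with ht | ht
    · rw [abs_of_nonpos ht, max_eq_left (by linarith)]; ring
    · rw [abs_of_nonneg ht, max_eq_right ht]; ring
  unfold dTV
  have : ∑ y, |P y - Q y| = 2 * (∑ y, max 0 (P y - Q y)) - (∑ y, P y - ∑ y, Q y) := by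
    rw [← Finset.sum_sub_distrib, Finset.mul_sum, ← Finset.sum_sub_distrib]
    exact Finset.sum_congr rfl fun y _ => key _
  rw [this, h]; ring

lemma pos_part_sum {ι : Type*} (s : Finset ι) (a : ι → ℝ) (ha : ∀ i ∈ s, 0 ≤ a i)
    (Q : ℝ) (hQ : 0 ≤ Q) :
    (∑ i ∈ s, if Q ≤ a i then a i - Q else 0) ≤ max 0 (∑ i ∈ s, a i - Q) := by
  rw [Finset.sum_ite, Finset.sum_const_zero, add_zero]
  set S := s.filter (fun i => Q ≤ a i) with hS
  rcases S.eq_empty_or_nonempty with hE | hne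
  · rw [hE, Finset.sum_empty]; exact le_max_left _ _
  · have h1 : (1 : ℝ) ≤ S.card := by
      exact_mod_cast Finset.one_le_card.mpr hne
    have hsub : S ⊆ s := Finset.filter_subset _ _
    calc ∑ i ∈ S, (a i - Q) = ∑ i ∈ S, a i - S.card * Q := by
          rw [Finset.sum_sub_distrib, Finset.sum_const, nsmul_eq_mul]
      _ ≤ ∑ i ∈ s, a i - Q := by
          have h2 : ∑ i ∈ S, a i ≤ ∑ i ∈ s, a i :=
            Finset.sum_le_sum_of_subset_of_nonneg hsub (fun i hi _ => ha i hi)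
          nlinarith
      _ ≤ max 0 (∑ i ∈ s, a i - Q) := le_max_right _ _

/-- Converse bound for channel resolvability (Corollary 1): for every codebook
`C = {x₁,…,x_N}` (given by the injective `x : Fin N → X`), every channel `P_{Y|X}`
and every PMF `Q_Y`, `d(P_{Y|C}, Q_Y) ≥ E_N(P_X^unif P_{Y|X}, P_X^unif Q_Y)`. -/
theorem stmt5 {X Y : Type*} [Fintype X] [Fintype Y] [Nonempty X] [Nonempty Y]
    (N : ℕ) (hN : 0 < N) (x : Fin N → X) (hx : Function.Injective x)
    (Wch : X → Y → ℝ) (hW : ∀ a, IsPMF (Wch a))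
    (Punif : X → ℝ)
    (hPunif : ∀ a, Punif a = if a ∈ Finset.univ.image x then ((N : ℝ))⁻¹ else 0)
    (PYC : Y → ℝ) (hPYC : ∀ y, PYC y = ((N : ℝ))⁻¹ * ∑ i, Wch (x i) y) :
    ∀ QY : Y → ℝ, IsPMF QY →
      Egam (N : ℝ) (fun p : X × Y => Punif p.1 * Wch p.1 p.2)
        (fun p : X × Y => Punif p.1 * QY p.2) ≤ dTV PYC QY := by
  intro QY hQ
  have hNR : (0:ℝ) < N := by exact_mod_cast hN
  have hNinv : (N:ℝ) * (N:ℝ)⁻¹ = 1 := mul_inv_cancel₀ (ne_of_gt hNR)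
  -- sums of PYC and QY are both 1
  have hPYCsum : ∑ y, PYC y = 1 := by
    simp only [hPYC]
    rw [← Finset.mul_sum, Finset.sum_comm]
    have : ∀ i : Fin N, ∑ y, Wch (x i) y = 1 := fun i => (hW (x i)).2
    rw [Finset.sum_congr rfl fun i _ => this i]
    simp [hNinv]
    rw [inv_mul_cancel₀ (ne_of_gt hNR)]
  rw [half_l1 PYC QY (by rw [hPYCsum, hQ.2])]
  unfold Egam
  rw [Finset.sum_filter, Fintype.sum_prod_type, Finset.sum_comm]
  apply Finset.sum_le_sum
  intro y _
  -- inner sum over X: only image x contributes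
  have hzero : ∀ a ∈ (Finset.univ : Finset X), a ∉ Finset.univ.image x →
      (if (N:ℝ) * (Punif a * QY y) ≤ Punif a * Wch a y
        then Punif a * Wch a y - (N:ℝ) * (Punif a * QY y) else 0) = 0 := by
    intro a _ ha
    rw [hPunif a, if_neg ha]
    simp
  rw [← Finset.sum_subset (Finset.subset_univ _) hzero,
    Finset.sum_image (fun i _ j _ h => hx h)]
  have hterm : ∀ i : Fin N,
      (if (N:ℝ) * (Punif (x i) * QY y) ≤ Punif (x i) * Wch (x i) y
        then Punif (x i) * Wch (x i) y - (N:ℝ) * (Punif (x i) * QY y) else 0)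
      = (if QY y ≤ (N:ℝ)⁻¹ * Wch (x i) y then (N:ℝ)⁻¹ * Wch (x i) y - QY y else 0) := by
    intro i
    have hmem : x i ∈ Finset.univ.image x := Finset.mem_image_of_mem x (Finset.mem_univ i)
    rw [hPunif (x i), if_pos hmem]
    have : (N:ℝ) * ((N:ℝ)⁻¹ * QY y) = QY y := by
      rw [← mul_assoc, hNinv, one_mul]
    rw [this]
  rw [Finset.sum_congr rfl fun i _ => hterm i]
  have := pos_part_sum Finset.univ (fun i : Fin N => (N:ℝ)⁻¹ * Wch (x i) y)
    (fun i _ => mul_nonneg (le_of_lt (inv_pos.mpr hNR)) ((hW (x i)).1 y)) (QY y) (hQ.1 y)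
  calc (∑ i : Fin N, if QY y ≤ (N:ℝ)⁻¹ * Wch (x i) y
          then (N:ℝ)⁻¹ * Wch (x i) y - QY y else 0)
      ≤ max 0 (∑ i : Fin N, (N:ℝ)⁻¹ * Wch (x i) y - QY y) := this
    _ = max 0 (PYC y - QY y) := by rw [hPYC y, Finset.mul_sum]
end
end

section
/- Let P_{YZ|X} be a wiretap channel from finite X to finite Y × Z, and consider any (M,ε,δ) partition code (C, π, P_{X|W}) with |C| = N. Let P_{XY} and P_{XZ} be the joints induced by the code (P_{XY}(x,y) := P_X(x)·P_{Y|X}(y|x) and P_{XZ}(x,z) := P_X(x)·P_{Z|X}(z|x), where P_X(x) := (1/M)·Σ_{m=1}^M P_{X|W}(x|m)), let P_Z be the Z-marginal of P_{XZ}, and let P^unif_X be the uniform distribution on C. Then for every PMF Q_Y on Y and every real τ with 0 < τ < 1 − δ: M · τ · β_{1−ε}(P_{XY}, P^unif_X × Q_Y) ≤ β_{δ+τ}(P_{XZ}, P^unif_X × P_Z). -/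
open scoped Classical
open Finset

noncomputable section

lemma aux_mul_le_half {a b : ℝ} (hb0 : 0 ≤ b) (hb1 : b ≤ 1) :
    a * b ≤ (|a| + a) / 2 := by
  rcases le_or_gt 0 a with h | h
  · rw [abs_of_nonneg h]; nlinarith
  · rw [abs_of_neg h]; nlinarith

/-- Converse bound for partition codes (Theorem 4, Eq. (25)): every `(M,ε,δ)`
partition code with codebook `C` of size `N` satisfies
`M τ β_{1-ε}(P_{XY}, P_X^unif Q_Y) ≤ β_{δ+τ}(P_{XZ}, P_X^unif P_Z)`. -/
theorem stmt6 {X Y Z : Type*} [Fintype X] [Fintype Y] [Fintype Z]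
    [Nonempty X] [Nonempty Y] [Nonempty Z]
    (Wch : X → Y × Z → ℝ) (hW : ∀ x, IsPMF (Wch x))
    (M : ℕ) (hM : 0 < M)
    (ε δ : ℝ) (hε0 : 0 ≤ ε) (hε1 : ε ≤ 1) (hδ0 : 0 ≤ δ) (hδ1 : δ ≤ 1)
    (C : Finset X) (N : ℕ) (hN : C.card = N)
    (gle : Y → X) (hgle : ∀ y, gle y ∈ C)
    (π : X → Fin M) (hπ : ∀ m : Fin M, ∃ x ∈ C, π x = m)
    (enc : Fin M → X → ℝ) (henc : ∀ m, IsPMF (enc m))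
    (hsupp : ∀ m x, enc m x ≠ 0 → x ∈ C ∧ π x = m)
    (PX : X → ℝ) (hPXdef : ∀ x, PX x = ((M : ℝ))⁻¹ * ∑ m, enc m x)
    (PXY : X × Y → ℝ) (hPXY : ∀ p, PXY p = PX p.1 * ∑ z, Wch p.1 (p.2, z))
    (PXZ : X × Z → ℝ) (hPXZ : ∀ p, PXZ p = PX p.1 * ∑ y, Wch p.1 (y, p.2))
    (PZ : Z → ℝ) (hPZ : ∀ z, PZ z = ∑ x, PXZ (x, z))
    (Punif : X → ℝ) (hPunif : ∀ x, Punif x = if x ∈ C then ((N : ℝ))⁻¹ else 0)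
    (hrel : ∑ x, ∑ p : Y × Z, PX x * Wch x p * (if gle p.1 = x then 0 else 1) ≤ ε)
    (hsec : dTV (fun p : Fin M × Z => ((M : ℝ))⁻¹ * ∑ x, enc p.1 x * ∑ y, Wch x (y, p.2))
              (fun p : Fin M × Z => ((M : ℝ))⁻¹ * PZ p.2) ≤ δ) :
    ∀ QY : Y → ℝ, IsPMF QY → ∀ τ : ℝ, 0 < τ → τ < 1 - δ →
      (M : ℝ) * τ * betaHT (1 - ε) PXY (fun p : X × Y => Punif p.1 * QY p.2)
        ≤ betaHT (δ + τ) PXZ (fun p : X × Z => Punif p.1 * PZ p.2) := by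
  intro QY hQY τ hτ0 hτδ
  have hMpos : (0:ℝ) < (M:ℝ) := by exact_mod_cast hM
  have hWnn : ∀ x (p : Y × Z), 0 ≤ Wch x p := fun x p => (hW x).1 p
  have hWsum : ∀ x, ∑ p : Y × Z, Wch x p = 1 := fun x => (hW x).2
  -- marginal channels
  set Wy : X → Y → ℝ := fun x y => ∑ z, Wch x (y, z) with hWydef
  set Wz : X → Z → ℝ := fun x z => ∑ y, Wch x (y, z) with hWzdef
  have hWynn : ∀ x y, 0 ≤ Wy x y := fun x y => Finset.sum_nonneg fun z _ => hWnn x _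
  have hWznn : ∀ x z, 0 ≤ Wz x z := fun x z => Finset.sum_nonneg fun y _ => hWnn x _
  have hWysum : ∀ x, ∑ y, Wy x y = 1 := by
    intro x; rw [← hWsum x, Fintype.sum_prod_type]
  have hWzsum : ∀ x, ∑ z, Wz x z = 1 := by
    intro x; rw [← hWsum x, Fintype.sum_prod_type, Finset.sum_comm]
  have hencnn : ∀ m x, 0 ≤ enc m x := fun m x => (henc m).1 x
  have hPXnn : ∀ x, 0 ≤ PX x := by
    intro x; rw [hPXdef]
    exact mul_nonneg (by positivity) (Finset.sum_nonneg fun m _ => hencnn m x)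
  have hPXsum : ∑ x, PX x = 1 := by
    have : ∑ x, PX x = (M:ℝ)⁻¹ * ∑ m, ∑ x, enc m x := by
      simp only [hPXdef, ← Finset.mul_sum]
      rw [Finset.sum_comm]
    rw [this]
    simp only [(fun m => (henc m).2 : ∀ m, ∑ x, enc m x = 1)]
    simp [hMpos.ne']
  have hPZnn : ∀ z, 0 ≤ PZ z := by
    intro z; rw [hPZ]
    exact Finset.sum_nonneg fun x _ => by rw [hPXZ]; exact mul_nonneg (hPXnn x) (hWznn x z)
  have hPZsum : ∑ z, PZ z = 1 := by
    have : ∑ z, PZ z = ∑ x, PX x * ∑ z, Wz x z := by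
      simp only [hPZ, hPXZ]
      rw [Finset.sum_comm]
      simp [Finset.mul_sum, hWzdef]
    rw [this]
    simp only [hWzsum, mul_one, hPXsum]
  have hPunn : ∀ x, 0 ≤ Punif x := by
    intro x; rw [hPunif]; split <;> positivity
  -- N > 0
  obtain ⟨x0, hx0C, -⟩ := hπ ⟨0, hM⟩
  have hNpos : 0 < N := hN ▸ Finset.card_pos.2 ⟨x0, hx0C⟩
  have hNR : (0:ℝ) < (N:ℝ) := by exact_mod_cast hNpos
  ---------------------------------------------------------------
  -- Step 1 : betaHT (1-ε) PXY (Punif × QY) ≤ 1/N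
  ---------------------------------------------------------------
  have hβY : betaHT (1 - ε) PXY (fun p : X × Y => Punif p.1 * QY p.2) ≤ ((N:ℝ))⁻¹ := by
    set T : X × Y → ℝ := fun p => if gle p.2 = p.1 then 1 else 0 with hT
    have hT01 : ∀ p, 0 ≤ T p ∧ T p ≤ 1 := by
      intro p; constructor <;> · simp only [hT]; split <;> norm_num
    have hfeas : 1 - ε ≤ ∑ p : X × Y, PXY p * T p := by
      have err_eq : ∑ x, ∑ p : Y × Z, PX x * Wch x p * (if gle p.1 = x then 0 else 1)
          = ∑ x, ∑ y, PX x * Wy x y * (if gle y = x then 0 else 1) := by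
        refine Finset.sum_congr rfl fun x _ => ?_
        rw [Fintype.sum_prod_type]
        refine Finset.sum_congr rfl fun y _ => ?_
        rw [hWydef]
        simp [Finset.sum_mul, Finset.mul_sum]
      have key : ∑ p : X × Y, PXY p * T p
          + ∑ x, ∑ y, PX x * Wy x y * (if gle y = x then 0 else 1) = 1 := by
        have h1 : ∑ p : X × Y, PXY p * T p
            = ∑ x, ∑ y, PX x * Wy x y * T (x, y) := by
          rw [Fintype.sum_prod_type]
          exact Finset.sum_congr rfl fun x _ => Finset.sum_congr rfl fun y _ => by
            rw [hPXY]
        rw [h1, ← Finset.sum_add_distrib]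
        have : ∀ x, (∑ y, PX x * Wy x y * T (x, y))
            + ∑ y, PX x * Wy x y * (if gle y = x then 0 else 1)
            = ∑ y, PX x * Wy x y := by
          intro x
          rw [← Finset.sum_add_distrib]
          refine Finset.sum_congr rfl fun y _ => ?_
          simp only [hT]
          split <;> ring
        simp only [this, ← Finset.mul_sum, hWysum, mul_one, hPXsum]
      have herr := err_eq ▸ hrel
      linarith [key, herr]
    have hval : ∑ p : X × Y, (Punif p.1 * QY p.2) * T p = ((N:ℝ))⁻¹ := by
      rw [Fintype.sum_prod_type, Finset.sum_comm]
      have : ∀ y, ∑ x, (Punif x * QY y) * T (x, y) = ((N:ℝ))⁻¹ * QY y := by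
        intro y
        have : ∑ x, (Punif x * QY y) * T (x, y)
            = ∑ x, (if gle y = x then Punif x * QY y else 0) := by
          refine Finset.sum_congr rfl fun x _ => ?_
          simp only [hT]
          split <;> ring
        rw [this, Finset.sum_ite_eq]
        simp [hPunif, hgle y, mul_comm]
      simp only [this, ← Finset.mul_sum, hQY.2, mul_one]
    apply csInf_le
    · refine ⟨0, fun b hb => ?_⟩
      obtain ⟨t, ht, -, rfl⟩ := hb
      exact Finset.sum_nonneg fun p _ =>
        mul_nonneg (mul_nonneg (hPunn p.1) (hQY.1 p.2)) (ht p).1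
    · exact ⟨T, hT01, hfeas, hval.symm⟩
  ---------------------------------------------------------------
  -- Step 2 : M * τ / N ≤ betaHT (δ+τ) PXZ (Punif × PZ)
  ---------------------------------------------------------------
  have hPXZsum : ∑ p : X × Z, PXZ p = 1 := by
    rw [Fintype.sum_prod_type]
    have : ∀ x, ∑ z, PXZ (x, z) = PX x := by
      intro x
      simp only [hPXZ, ← Finset.mul_sum]
      rw [show (∑ z, ∑ y, Wch x (y, z)) = ∑ z, Wz x z from rfl, hWzsum, mul_one]
    simp only [this, hPXsum]
  have hβZ : (M:ℝ) * τ / (N:ℝ) ≤ betaHT (δ + τ) PXZ (fun p : X × Z => Punif p.1 * PZ p.2) := by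
    apply le_csInf
    · refine ⟨∑ p : X × Z, (Punif p.1 * PZ p.2) * 1, fun _ => (1:ℝ),
        fun p => ⟨zero_le_one, le_refl 1⟩, ?_, rfl⟩
      simp only [mul_one, hPXZsum]
      linarith
    · rintro b ⟨t, ht01, hfeas, rfl⟩
      have htnn : ∀ p : X × Z, 0 ≤ t p := fun p => (ht01 p).1
      have ht1 : ∀ p : X × Z, t p ≤ 1 := fun p => (ht01 p).2
      set Dd : Fin M → Z → ℝ := fun m z => ∑ x, enc m x * Wz x z with hDd
      set Nu : Fin M → Z → ℝ := fun m z => ∑ x, enc m x * Wz x z * t (x, z) with hNu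
      set t' : Fin M → Z → ℝ := fun m z => if Dd m z = 0 then 0 else Nu m z / Dd m z with ht'
      have hDnn : ∀ m z, 0 ≤ Dd m z := fun m z =>
        Finset.sum_nonneg fun x _ => mul_nonneg (hencnn m x) (hWznn x z)
      have hNunn : ∀ m z, 0 ≤ Nu m z := fun m z =>
        Finset.sum_nonneg fun x _ =>
          mul_nonneg (mul_nonneg (hencnn m x) (hWznn x z)) (htnn (x, z))
      have hNuD : ∀ m z, Nu m z ≤ Dd m z := by
        intro m z
        refine Finset.sum_le_sum fun x _ => ?_
        have h0 : 0 ≤ enc m x * Wz x z := mul_nonneg (hencnn m x) (hWznn x z)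
        calc enc m x * Wz x z * t (x, z) ≤ enc m x * Wz x z * 1 :=
              mul_le_mul_of_nonneg_left (ht1 (x, z)) h0
          _ = enc m x * Wz x z := mul_one _
      have ht'nn : ∀ m z, 0 ≤ t' m z := by
        intro m z; simp only [ht']
        split
        · exact le_refl 0
        · exact div_nonneg (hNunn m z) (hDnn m z)
      have ht'le : ∀ m z, t' m z ≤ 1 := by
        intro m z; simp only [ht']
        split
        · exact zero_le_one
        · rename_i h
          exact div_le_one_of_le₀ (hNuD m z) (hDnn m z)
      have hDt' : ∀ m z, Dd m z * t' m z = Nu m z := by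
        intro m z; simp only [ht']
        split
        · rename_i h
          have : Nu m z = 0 := le_antisymm (h ▸ hNuD m z) (hNunn m z)
          rw [this, mul_zero]
        · rename_i h
          field_simp
      -- feasibility rewritten
      have hA : δ + τ ≤ ∑ m, ∑ z, (M:ℝ)⁻¹ * Nu m z := by
        set F : X → Z → Fin M → ℝ :=
          fun x z m => (M:ℝ)⁻¹ * (enc m x * Wz x z * t (x, z)) with hF
        have lhs : ∀ x z, PXZ (x, z) * t (x, z) = ∑ m, F x z m := by
          intro x z
          have hswap : ∀ (c a b : ℝ) (f : Fin M → ℝ),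
              (c * ∑ m, f m) * a * b = c * ∑ m, f m * a * b := by
            intro c a b f
            rw [mul_assoc, mul_assoc, Finset.sum_mul]
            simp [mul_assoc]
          rw [hPXZ]
          show PX x * Wz x z * t (x, z) = _
          rw [hPXdef, hswap ((M:ℝ)⁻¹) (Wz x z) (t (x, z)) (fun m => enc m x),
            Finset.mul_sum]
        have rhs : ∀ m z, (M:ℝ)⁻¹ * Nu m z = ∑ x, F x z m := by
          intro m z
          show (M:ℝ)⁻¹ * (∑ x, enc m x * Wz x z * t (x, z)) = _
          rw [Finset.mul_sum]
        have key : ∑ p : X × Z, PXZ p * t p = ∑ m, ∑ z, (M:ℝ)⁻¹ * Nu m z := by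
          simp only [rhs]
          rw [Fintype.sum_prod_type]
          simp only [lhs]
          calc ∑ x, ∑ z, ∑ m, F x z m
              = ∑ x, ∑ m, ∑ z, F x z m :=
                Finset.sum_congr rfl fun x _ => Finset.sum_comm
            _ = ∑ m, ∑ x, ∑ z, F x z m := Finset.sum_comm
            _ = ∑ m, ∑ z, ∑ x, F x z m :=
                Finset.sum_congr rfl fun m _ => Finset.sum_comm
        rw [← key]; exact hfeas
      -- sums of the two secrecy distributions are both 1
      have hPsum : ∑ m, ∑ z, (M:ℝ)⁻¹ * Dd m z = 1 := by
        have : ∀ m : Fin M, ∑ z, Dd m z = 1 := by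
          intro m
          rw [hDd]
          show (∑ z, ∑ x, enc m x * Wz x z) = 1
          rw [Finset.sum_comm]
          have : ∀ x, ∑ z, enc m x * Wz x z = enc m x := by
            intro x; rw [← Finset.mul_sum, hWzsum, mul_one]
          simp only [this, (henc m).2]
        simp only [← Finset.mul_sum, this]
        simp [hMpos.ne']
      have hQsum : ∑ m : Fin M, ∑ z, (M:ℝ)⁻¹ * PZ z = 1 := by
        simp only [← Finset.mul_sum, hPZsum, mul_one, Finset.sum_const, Finset.card_univ,
          Fintype.card_fin, nsmul_eq_mul]
        field_simp
      -- secrecy step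
      have hsec' : ∑ m, ∑ z, ((M:ℝ)⁻¹ * Dd m z - (M:ℝ)⁻¹ * PZ z) * t' m z ≤ δ := by
        have hterm : ∀ m z, ((M:ℝ)⁻¹ * Dd m z - (M:ℝ)⁻¹ * PZ z) * t' m z
            ≤ (|(M:ℝ)⁻¹ * Dd m z - (M:ℝ)⁻¹ * PZ z|
                + ((M:ℝ)⁻¹ * Dd m z - (M:ℝ)⁻¹ * PZ z)) / 2 :=
          fun m z => aux_mul_le_half (ht'nn m z) (ht'le m z)
        calc ∑ m, ∑ z, ((M:ℝ)⁻¹ * Dd m z - (M:ℝ)⁻¹ * PZ z) * t' m z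
            ≤ ∑ m, ∑ z, (|(M:ℝ)⁻¹ * Dd m z - (M:ℝ)⁻¹ * PZ z|
                + ((M:ℝ)⁻¹ * Dd m z - (M:ℝ)⁻¹ * PZ z)) / 2 :=
              Finset.sum_le_sum fun m _ => Finset.sum_le_sum fun z _ => hterm m z
          _ = (1/2) * (∑ m, ∑ z, |(M:ℝ)⁻¹ * Dd m z - (M:ℝ)⁻¹ * PZ z|)
              + (1/2) * ((∑ m, ∑ z, (M:ℝ)⁻¹ * Dd m z) - ∑ m, ∑ z, (M:ℝ)⁻¹ * PZ z) := by
              have step : ∑ m, ∑ z, (|(M:ℝ)⁻¹ * Dd m z - (M:ℝ)⁻¹ * PZ z|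
                    + ((M:ℝ)⁻¹ * Dd m z - (M:ℝ)⁻¹ * PZ z)) / 2
                  = ∑ m, ∑ z, ((1/2) * |(M:ℝ)⁻¹ * Dd m z - (M:ℝ)⁻¹ * PZ z|
                    + ((1/2) * ((M:ℝ)⁻¹ * Dd m z) - (1/2) * ((M:ℝ)⁻¹ * PZ z))) :=
                Finset.sum_congr rfl fun m _ => Finset.sum_congr rfl fun z _ => by ring
              rw [step]
              simp only [Finset.sum_add_distrib, Finset.sum_sub_distrib, ← Finset.mul_sum]
              ring
          _ ≤ δ := by
              rw [hPsum, hQsum]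
              have : (1/2 : ℝ) * (∑ m, ∑ z, |(M:ℝ)⁻¹ * Dd m z - (M:ℝ)⁻¹ * PZ z|) ≤ δ := by
                have heq : dTV (fun p : Fin M × Z => ((M : ℝ))⁻¹ * ∑ x, enc p.1 x * ∑ y, Wch x (y, p.2))
                    (fun p : Fin M × Z => ((M : ℝ))⁻¹ * PZ p.2)
                    = (1/2 : ℝ) * (∑ m, ∑ z, |(M:ℝ)⁻¹ * Dd m z - (M:ℝ)⁻¹ * PZ z|) := by
                  rw [dTV, Fintype.sum_prod_type]
                rw [← heq]; exact hsec
              linarith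
      -- fiber bound
      have hfiber : ∀ m z, t' m z ≤ ∑ x ∈ C.filter (fun x => π x = m), t (x, z) := by
        intro m z
        have hfibnn : 0 ≤ ∑ x ∈ C.filter (fun x => π x = m), t (x, z) :=
          Finset.sum_nonneg fun x _ => htnn (x, z)
        simp only [ht']
        split
        · exact hfibnn
        · rename_i h
          have hDpos : 0 < Dd m z := lt_of_le_of_ne (hDnn m z) (Ne.symm h)
          rw [div_le_iff₀ hDpos]
          have hzero : ∀ x ∈ (Finset.univ : Finset X),
              x ∉ C.filter (fun x => π x = m) → enc m x * Wz x z * t (x, z) = 0 := by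
            intro x _ hx
            by_cases he : enc m x = 0
            · rw [he, zero_mul, zero_mul]
            · exact absurd (Finset.mem_filter.2 ⟨(hsupp m x he).1, (hsupp m x he).2⟩) hx
          have : Nu m z = ∑ x ∈ C.filter (fun x => π x = m), enc m x * Wz x z * t (x, z) := by
            rw [hNu]
            exact (Finset.sum_subset (Finset.subset_univ _) hzero).symm
          rw [this, Finset.sum_mul]
          refine Finset.sum_le_sum fun x hx => ?_
          have hsingle : enc m x * Wz x z ≤ Dd m z :=
            Finset.single_le_sum (fun x _ => mul_nonneg (hencnn m x) (hWznn x z))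
              (Finset.mem_univ x)
          calc enc m x * Wz x z * t (x, z) ≤ Dd m z * t (x, z) :=
                mul_le_mul_of_nonneg_right hsingle (htnn (x, z))
            _ = t (x, z) * Dd m z := mul_comm _ _
      -- value of b
      have hb : ∑ p : X × Z, (Punif p.1 * PZ p.2) * t p
          = ((N:ℝ))⁻¹ * ∑ z, PZ z * ∑ x ∈ C, t (x, z) := by
        rw [Fintype.sum_prod_type, Finset.sum_comm]
        rw [Finset.mul_sum]
        refine Finset.sum_congr rfl fun z _ => ?_
        have : ∀ x ∈ (Finset.univ : Finset X), x ∉ C → (Punif x * PZ z) * t (x, z) = 0 := by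
          intro x _ hx
          rw [hPunif]
          simp [hx]
        rw [← Finset.sum_subset (Finset.subset_univ C) this]
        rw [Finset.mul_sum, Finset.mul_sum]
        refine Finset.sum_congr rfl fun x hx => ?_
        rw [hPunif]
        simp only [hx, if_true]
        ring
      -- chain
      have hchain : δ + τ ≤ δ + ((N:ℝ) / (M:ℝ)) * ∑ p : X × Z, (Punif p.1 * PZ p.2) * t p := by
        have e1 : ∑ m, ∑ z, (M:ℝ)⁻¹ * Nu m z = ∑ m, ∑ z, ((M:ℝ)⁻¹ * Dd m z) * t' m z := by
          refine Finset.sum_congr rfl fun m _ => Finset.sum_congr rfl fun z _ => ?_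
          rw [mul_assoc, hDt']
        have e2 : ∑ m, ∑ z, ((M:ℝ)⁻¹ * Dd m z) * t' m z
            ≤ δ + ∑ m, ∑ z, ((M:ℝ)⁻¹ * PZ z) * t' m z := by
          have := hsec'
          have expand : ∑ m, ∑ z, ((M:ℝ)⁻¹ * Dd m z - (M:ℝ)⁻¹ * PZ z) * t' m z
              = (∑ m, ∑ z, ((M:ℝ)⁻¹ * Dd m z) * t' m z)
                - ∑ m, ∑ z, ((M:ℝ)⁻¹ * PZ z) * t' m z := by
            simp only [sub_mul, Finset.sum_sub_distrib]
          linarith [expand ▸ this]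
        have e3 : ∑ m, ∑ z, ((M:ℝ)⁻¹ * PZ z) * t' m z
            ≤ (M:ℝ)⁻¹ * ∑ z, PZ z * ∑ x ∈ C, t (x, z) := by
          rw [Finset.sum_comm, Finset.mul_sum]
          refine Finset.sum_le_sum fun z _ => ?_
          have : ∑ m, ((M:ℝ)⁻¹ * PZ z) * t' m z
              ≤ ∑ m, ((M:ℝ)⁻¹ * PZ z) * ∑ x ∈ C.filter (fun x => π x = m), t (x, z) := by
            refine Finset.sum_le_sum fun m _ => ?_
            exact mul_le_mul_of_nonneg_left (hfiber m z)
              (mul_nonneg (by positivity) (hPZnn z))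
          refine this.trans (le_of_eq ?_)
          rw [← Finset.mul_sum, Finset.sum_fiberwise C π (fun x => t (x, z))]
          ring
        calc δ + τ ≤ δ + ∑ m, ∑ z, ((M:ℝ)⁻¹ * PZ z) * t' m z := by
              rw [e1] at hA; linarith [hA.trans e2]
          _ ≤ δ + (M:ℝ)⁻¹ * ∑ z, PZ z * ∑ x ∈ C, t (x, z) := by linarith
          _ = δ + ((N:ℝ) / (M:ℝ)) * ∑ p : X × Z, (Punif p.1 * PZ p.2) * t p := by
              rw [hb]; field_simp
      have : τ ≤ ((N:ℝ) / (M:ℝ)) * ∑ p : X × Z, (Punif p.1 * PZ p.2) * t p := by linarith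
      rw [div_le_iff₀ hNR]
      calc (M:ℝ) * τ ≤ (M:ℝ) * (((N:ℝ) / (M:ℝ)) * ∑ p : X × Z, (Punif p.1 * PZ p.2) * t p) :=
            mul_le_mul_of_nonneg_left this hMpos.le
        _ = (∑ p : X × Z, (Punif p.1 * PZ p.2) * t p) * (N:ℝ) := by
            field_simp
  ---------------------------------------------------------------
  -- conclusion
  ---------------------------------------------------------------
  calc (M:ℝ) * τ * betaHT (1 - ε) PXY (fun p : X × Y => Punif p.1 * QY p.2)
      ≤ (M:ℝ) * τ * ((N:ℝ))⁻¹ :=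
        mul_le_mul_of_nonneg_left hβY (by positivity)
    _ = (M:ℝ) * τ / (N:ℝ) := by ring
    _ ≤ betaHT (δ + τ) PXZ (fun p : X × Z => Punif p.1 * PZ p.2) := hβZ
end
end

section
/- Let P_{YZ|X} be a wiretap channel from finite X to finite Y × Z, and consider any (M,ε,δ) uniform-partition code (C, π, P_{X|W}). Then there exists a PMF P_X on X (namely the uniform distribution on C) such that, with P_Y := P_{Y|X}∘P_X and P_Z := P_{Z|X}∘P_X, for every PMF Q_Y on Y and every real τ with 0 < τ < 1 − δ: M · τ · β_{1−ε}(P_X × P_{Y|X}, P_X × Q_Y) ≤ β_{δ+τ}(P_X × P_{Z|X}, P_X × P_Z). -/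
open scoped Classical
open Finset

noncomputable section

lemma aux_dtv {A : Type*} [Fintype A] (P Q f : A → ℝ) (hf0 : ∀ a, 0 ≤ f a) (hf1 : ∀ a, f a ≤ 1)
    (hsum : ∑ a, P a = ∑ a, Q a) :
    ∑ a, (P a - Q a) * f a ≤ dTV P Q := by
  have h : ∀ a ∈ Finset.univ (α := A), (P a - Q a) * f a ≤ ((P a - Q a) + |P a - Q a|) / 2 := by
    intro a _
    rcases abs_cases (P a - Q a) with ⟨h1, h2⟩ | ⟨h1, h2⟩ <;> nlinarith [hf0 a, hf1 a]
  calc ∑ a, (P a - Q a) * f a ≤ ∑ a, ((P a - Q a) + |P a - Q a|) / 2 := Finset.sum_le_sum h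
    _ = dTV P Q := by
        unfold dTV
        have h2 : (∑ a, (P a - Q a)) = 0 := by rw [Finset.sum_sub_distrib, hsum]; ring
        have h3 : ∑ a, ((P a - Q a) + |P a - Q a|) / 2
            = (∑ a, (P a - Q a)) / 2 + (1/2) * ∑ a, |P a - Q a| := by
          rw [Finset.sum_div, Finset.mul_sum, ← Finset.sum_add_distrib]
          exact Finset.sum_congr rfl fun a _ => by ring
        rw [h3, h2]; ring

lemma sum3_factor {I J : Type*} [Fintype I] [Fintype J] (c : ℝ) (u : I → ℝ) (v : I → J → ℝ) :
    ∑ j, c * ∑ i, u i * v i j = ∑ i, c * (u i * ∑ j, v i j) := by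
  simp only [Finset.mul_sum]
  rw [Finset.sum_comm]

/-- Converse bound for uniform-partition codes (Theorem 4, Eq. (26)): for every
`(M,ε,δ)` uniform-partition code there exists a PMF `P_X` (the uniform distribution
on `C`) with `M τ β_{1-ε}(P_X P_{Y|X}, P_X Q_Y) ≤ β_{δ+τ}(P_X P_{Z|X}, P_X P_Z)`
for all PMFs `Q_Y` and `0 < τ < 1 - δ`. -/
theorem stmt7 {X Y Z : Type*} [Fintype X] [Fintype Y] [Fintype Z]
    [Nonempty X] [Nonempty Y] [Nonempty Z]
    (Wch : X → Y × Z → ℝ) (hW : ∀ x, IsPMF (Wch x))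
    (M : ℕ) (hM : 0 < M)
    (ε δ : ℝ) (hε0 : 0 ≤ ε) (hε1 : ε ≤ 1) (hδ0 : 0 ≤ δ) (hδ1 : δ ≤ 1)
    (C : Finset X)
    (gle : Y → X) (hgle : ∀ y, gle y ∈ C)
    (π : X → Fin M) (hπ : ∀ m : Fin M, ∃ x ∈ C, π x = m)
    (K : ℕ) (hK : 0 < K)
    (hfib : ∀ m : Fin M, (C.filter (fun x => π x = m)).card = K)
    (enc : Fin M → X → ℝ)
    (hencunif : ∀ m x, enc m x = if x ∈ C ∧ π x = m then ((K : ℝ))⁻¹ else 0)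
    (hrel : ∑ x, ∑ p : Y × Z,
        (((M : ℝ))⁻¹ * ∑ m, enc m x) * Wch x p * (if gle p.1 = x then 0 else 1) ≤ ε)
    (hsec : dTV (fun p : Fin M × Z => ((M : ℝ))⁻¹ * ∑ x, enc p.1 x * ∑ y, Wch x (y, p.2))
              (fun p : Fin M × Z =>
                ((M : ℝ))⁻¹ * ∑ x, (((M : ℝ))⁻¹ * ∑ m, enc m x) * ∑ y, Wch x (y, p.2)) ≤ δ) :
    ∃ PX : X → ℝ,
      (∀ x, PX x = if x ∈ C then ((C.card : ℝ))⁻¹ else 0) ∧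
      ∀ QY : Y → ℝ, IsPMF QY → ∀ τ : ℝ, 0 < τ → τ < 1 - δ →
        (M : ℝ) * τ *
            betaHT (1 - ε) (fun p : X × Y => PX p.1 * ∑ z, Wch p.1 (p.2, z))
              (fun p : X × Y => PX p.1 * QY p.2)
          ≤ betaHT (δ + τ) (fun p : X × Z => PX p.1 * ∑ y, Wch p.1 (y, p.2))
              (fun p : X × Z => PX p.1 * ∑ x', PX x' * ∑ y, Wch x' (y, p.2)) := by
  classical
  set PX : X → ℝ := fun x => if x ∈ C then ((C.card : ℝ))⁻¹ else 0 with hPXdef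
  have hWnn : ∀ x p, 0 ≤ Wch x p := fun x => (hW x).1
  have hWsum : ∀ x, ∑ y, ∑ z, Wch x (y, z) = 1 := by
    intro x
    rw [← Fintype.sum_prod_type]
    exact (hW x).2
  have hcnn : ∀ x z, 0 ≤ ∑ y, Wch x (y, z) :=
    fun x z => Finset.sum_nonneg fun y _ => hWnn x (y, z)
  have hcard : C.card = M * K := by
    rw [Finset.card_eq_sum_card_fiberwise (f := π) (t := Finset.univ) (fun x _ => Finset.mem_univ _)]
    simp [hfib, Finset.sum_const, Finset.card_univ, mul_comm]
  have hMR : (0:ℝ) < M := by exact_mod_cast hM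
  have hKR : (0:ℝ) < K := by exact_mod_cast hK
  have hNR : ((C.card : ℝ)) = (M:ℝ) * K := by rw [hcard]; push_cast; ring
  have hNpos : (0:ℝ) < (C.card : ℝ) := by rw [hNR]; positivity
  have hPXnn : ∀ x, 0 ≤ PX x := by
    intro x; simp only [hPXdef]; split
    · positivity
    · exact le_rfl
  have hPXC : ∀ x ∈ C, PX x = ((C.card:ℝ))⁻¹ := by intro x hx; simp [hPXdef, hx]
  have hPXnC : ∀ x ∉ C, PX x = 0 := by intro x hx; simp [hPXdef, hx]
  have hPXsum : ∑ x, PX x = 1 := by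
    simp only [hPXdef]
    rw [Finset.sum_ite_mem, Finset.univ_inter, Finset.sum_const, nsmul_eq_mul]
    exact mul_inv_cancel₀ (ne_of_gt hNpos)
  have hmix : ∀ x, ((M:ℝ))⁻¹ * ∑ m, enc m x = PX x := by
    intro x
    by_cases hx : x ∈ C
    · have h1 : ∑ m, enc m x = (K:ℝ)⁻¹ := by
        simp only [hencunif, hx, true_and]
        rw [Finset.sum_ite_eq]
        simp
      rw [h1, hPXC x hx, hNR, mul_inv]
    · have h1 : ∑ m, enc m x = 0 := by
        simp [hencunif, hx]
      rw [h1, hPXnC x hx, mul_zero]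
  have hmix' : ∀ x, ∑ m, enc m x = (M:ℝ) * PX x := by
    intro x
    rw [← hmix x]
    field_simp
  have hencnn : ∀ m x, 0 ≤ enc m x := by
    intro m x; rw [hencunif]; split
    · positivity
    · exact le_rfl
  refine ⟨PX, fun x => rfl, ?_⟩
  intro QY hQY τ hτ0 hτ1
  -- rewrite hypotheses using hmix
  simp only [hmix] at hrel hsec
  have hbeta1 : betaHT (1 - ε) (fun p : X × Y => PX p.1 * ∑ z, Wch p.1 (p.2, z))
      (fun p : X × Y => PX p.1 * QY p.2) ≤ ((C.card : ℝ))⁻¹ := by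
    apply csInf_le
    · refine ⟨0, ?_⟩
      rintro b ⟨t, ht, -, rfl⟩
      exact Finset.sum_nonneg fun p _ =>
        mul_nonneg (mul_nonneg (hPXnn _) (hQY.1 _)) (ht p).1
    · refine ⟨fun p => if gle p.2 = p.1 then 1 else 0, fun p => by dsimp; split <;> norm_num,
        ?_, ?_⟩
      · -- feasibility: 1 - ε ≤ P_{XY}[test]
        simp only [Fintype.sum_prod_type] at hrel ⊢
        have hgoal : ∑ x, ∑ y, PX x * (∑ z, Wch x (y, z)) * (if gle y = x then 1 else 0)
            = ∑ x, ∑ y, ∑ z, PX x * Wch x (y, z) * (if gle y = x then 1 else 0) := by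
          refine Finset.sum_congr rfl fun x _ => Finset.sum_congr rfl fun y _ => ?_
          rw [Finset.mul_sum, Finset.sum_mul]
        rw [hgoal]
        have hone : ∑ x, ∑ y, ∑ z, PX x * Wch x (y, z) = 1 := by
          have h1 : ∀ x, ∑ y, ∑ z, PX x * Wch x (y, z) = PX x := by
            intro x
            simp only [← Finset.mul_sum]
            rw [hWsum, mul_one]
          rw [Finset.sum_congr rfl fun x _ => h1 x, hPXsum]
        have hsplit : (∑ x, ∑ y, ∑ z, PX x * Wch x (y, z) * (if gle y = x then 1 else 0))
            + (∑ x, ∑ y, ∑ z, PX x * Wch x (y, z) * (if gle y = x then 0 else 1))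
            = ∑ x, ∑ y, ∑ z, PX x * Wch x (y, z) := by
          simp only [← Finset.sum_add_distrib]
          refine Finset.sum_congr rfl fun x _ => Finset.sum_congr rfl fun y _ =>
            Finset.sum_congr rfl fun z _ => ?_
          split <;> ring
        linarith
      · -- value: (C.card)⁻¹ = Q[test]
        rw [Fintype.sum_prod_type, Finset.sum_comm]
        have h1 : ∀ y, ∑ x, PX x * QY y * (if gle y = x then 1 else 0)
            = ((C.card : ℝ))⁻¹ * QY y := by
          intro y
          simp only [mul_ite, mul_one, mul_zero]
          rw [Finset.sum_ite_eq]
          simp [hPXC _ (hgle y), mul_comm]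
        rw [Finset.sum_congr rfl fun y _ => h1 y, ← Finset.mul_sum, hQY.2, mul_one]
  have hbeta2 : ((K:ℝ))⁻¹ * τ ≤ betaHT (δ + τ) (fun p : X × Z => PX p.1 * ∑ y, Wch p.1 (y, p.2))
      (fun p : X × Z => PX p.1 * ∑ x', PX x' * ∑ y, Wch x' (y, p.2)) := by
    have hPZnn : ∀ z, 0 ≤ ∑ x', PX x' * ∑ y, Wch x' (y, z) :=
      fun z => Finset.sum_nonneg fun x' _ => mul_nonneg (hPXnn x') (hcnn x' z)
    apply le_csInf
    · -- the feasible set is nonempty (take t ≡ 1)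
      refine ⟨∑ p : X × Z, (PX p.1 * ∑ x', PX x' * ∑ y, Wch x' (y, p.2)) * 1,
        fun _ => 1, fun a => ⟨zero_le_one, le_rfl⟩, ?_, rfl⟩
      have h1 : ∑ p : X × Z, PX p.1 * (∑ y, Wch p.1 (y, p.2)) * 1 = 1 := by
        simp only [mul_one]
        rw [Fintype.sum_prod_type]
        have h2 : ∀ x, ∑ z, PX x * ∑ y, Wch x (y, z) = PX x := by
          intro x
          rw [← Finset.mul_sum, Finset.sum_comm, hWsum, mul_one]
        rw [Finset.sum_congr rfl fun x _ => h2 x, hPXsum]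
      rw [h1]
      linarith
    · rintro b ⟨t, ht, hfeas, rfl⟩
      set s : Fin M × Z → ℝ :=
        fun q => min 1 (∑ x ∈ C.filter (fun x => π x = q.1), t (x, q.2)) with hsdef
      have hs0 : ∀ q, 0 ≤ s q :=
        fun q => le_min zero_le_one (Finset.sum_nonneg fun x _ => (ht _).1)
      have hs1 : ∀ q, s q ≤ 1 := fun q => min_le_left _ _
      have hst : ∀ (m : Fin M) (z : Z) (x : X),
          x ∈ C.filter (fun x => π x = m) → t (x, z) ≤ s (m, z) := by
        intro m z x hx
        exact le_min (ht (x, z)).2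
          (Finset.single_le_sum (f := fun x => t (x, z)) (fun i _ => (ht (i, z)).1) hx)
      set PWZ : Fin M × Z → ℝ :=
        fun q => ((M:ℝ))⁻¹ * ∑ x, enc q.1 x * ∑ y, Wch x (y, q.2) with hPWZdef
      set QWZ : Fin M × Z → ℝ :=
        fun q => ((M:ℝ))⁻¹ * ∑ x, PX x * ∑ y, Wch x (y, q.2) with hQWZdef
      -- the two PMFs have equal total mass
      have hPWZsum : ∑ q : Fin M × Z, PWZ q = ∑ x, PX x * ∑ z, ∑ y, Wch x (y, z) := by
        rw [Fintype.sum_prod_type]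
        have h1 : ∀ m : Fin M, (∑ z, PWZ (m, z))
            = ∑ x, ((M:ℝ))⁻¹ * (enc m x * ∑ z, ∑ y, Wch x (y, z)) := by
          intro m
          exact sum3_factor ((M:ℝ))⁻¹ (fun x => enc m x) (fun x z => ∑ y, Wch x (y, z))
        rw [Finset.sum_congr rfl fun m _ => h1 m, Finset.sum_comm]
        refine Finset.sum_congr rfl fun x _ => ?_
        have h2 : ∑ m, ((M:ℝ))⁻¹ * (enc m x * ∑ z, ∑ y, Wch x (y, z))
            = (∑ m, enc m x) * (((M:ℝ))⁻¹ * ∑ z, ∑ y, Wch x (y, z)) := by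
          rw [Finset.sum_mul]
          exact Finset.sum_congr rfl fun m _ => by ring
        rw [h2, hmix' x]
        field_simp
      have hQWZsum : ∑ q : Fin M × Z, QWZ q = ∑ x, PX x * ∑ z, ∑ y, Wch x (y, z) := by
        rw [Fintype.sum_prod_type]
        have h1 : ∀ m : Fin M, (∑ z, QWZ (m, z))
            = ∑ x, ((M:ℝ))⁻¹ * (PX x * ∑ z, ∑ y, Wch x (y, z)) := by
          intro m
          exact sum3_factor ((M:ℝ))⁻¹ (fun x => PX x) (fun x z => ∑ y, Wch x (y, z))
        rw [Finset.sum_congr rfl fun m _ => h1 m, Finset.sum_comm]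
        refine Finset.sum_congr rfl fun x _ => ?_
        rw [Finset.sum_const, Finset.card_univ, Fintype.card_fin, nsmul_eq_mul]
        field_simp
      have hsumeq : ∑ q : Fin M × Z, PWZ q = ∑ q : Fin M × Z, QWZ q := by
        rw [hPWZsum, hQWZsum]
      -- step (i) : TV bound
      have hdtv : ∑ q : Fin M × Z, (PWZ q - QWZ q) * s q ≤ δ :=
        le_trans (aux_dtv PWZ QWZ s hs0 hs1 hsumeq) hsec
      have hdiff : ∑ q : Fin M × Z, (PWZ q - QWZ q) * s q
          = (∑ q : Fin M × Z, PWZ q * s q) - ∑ q : Fin M × Z, QWZ q * s q := by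
        rw [← Finset.sum_sub_distrib]
        exact Finset.sum_congr rfl fun q _ => by ring
      -- step (ii) : δ + τ ≤ ∑ PWZ * s
      have hB1 : δ + τ ≤ ∑ q : Fin M × Z, PWZ q * s q := by
        have hA1 : ∑ p : X × Z, PX p.1 * (∑ y, Wch p.1 (y, p.2)) * t p
            = ∑ x, ∑ z, ∑ m, ((M:ℝ))⁻¹ * (enc m x * ∑ y, Wch x (y, z)) * t (x, z) := by
          rw [Fintype.sum_prod_type]
          refine Finset.sum_congr rfl fun x _ => Finset.sum_congr rfl fun z _ => ?_
          have h2 : ∑ m, ((M:ℝ))⁻¹ * (enc m x * ∑ y, Wch x (y, z)) * t (x, z)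
              = (∑ m, enc m x) * (((M:ℝ))⁻¹ * (∑ y, Wch x (y, z)) * t (x, z)) := by
            rw [Finset.sum_mul]
            exact Finset.sum_congr rfl fun m _ => by ring
          rw [h2, hmix' x]
          field_simp
        have hB1' : ∑ q : Fin M × Z, PWZ q * s q
            = ∑ m, ∑ z, ∑ x, ((M:ℝ))⁻¹ * (enc m x * ∑ y, Wch x (y, z)) * s (m, z) := by
          rw [Fintype.sum_prod_type]
          refine Finset.sum_congr rfl fun m _ => Finset.sum_congr rfl fun z _ => ?_
          have hq : PWZ (m, z) = ((M:ℝ))⁻¹ * ∑ x, enc m x * ∑ y, Wch x (y, z) := rfl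
          rw [hq, Finset.mul_sum, Finset.sum_mul]
          try exact Finset.sum_congr rfl fun x _ => by ring
        have hswap : ∑ x, ∑ z, ∑ m, ((M:ℝ))⁻¹ * (enc m x * ∑ y, Wch x (y, z)) * t (x, z)
            = ∑ m, ∑ z, ∑ x, ((M:ℝ))⁻¹ * (enc m x * ∑ y, Wch x (y, z)) * t (x, z) := by
          calc ∑ x, ∑ z, ∑ m, ((M:ℝ))⁻¹ * (enc m x * ∑ y, Wch x (y, z)) * t (x, z)
              = ∑ x, ∑ m, ∑ z, ((M:ℝ))⁻¹ * (enc m x * ∑ y, Wch x (y, z)) * t (x, z) :=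
                Finset.sum_congr rfl fun x _ => Finset.sum_comm
            _ = ∑ m, ∑ x, ∑ z, ((M:ℝ))⁻¹ * (enc m x * ∑ y, Wch x (y, z)) * t (x, z) :=
                Finset.sum_comm
            _ = ∑ m, ∑ z, ∑ x, ((M:ℝ))⁻¹ * (enc m x * ∑ y, Wch x (y, z)) * t (x, z) :=
                Finset.sum_congr rfl fun m _ => Finset.sum_comm
        have hpt : ∀ (m : Fin M) (z : Z) (x : X),
            ((M:ℝ))⁻¹ * (enc m x * ∑ y, Wch x (y, z)) * t (x, z)
              ≤ ((M:ℝ))⁻¹ * (enc m x * ∑ y, Wch x (y, z)) * s (m, z) := by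
          intro m z x
          by_cases hx : x ∈ C ∧ π x = m
          · refine mul_le_mul_of_nonneg_left (hst m z x (Finset.mem_filter.2 hx)) ?_
            exact mul_nonneg (inv_nonneg.2 hMR.le) (mul_nonneg (hencnn m x) (hcnn x z))
          · simp [hencunif, hx]
        calc δ + τ ≤ ∑ p : X × Z, PX p.1 * (∑ y, Wch p.1 (y, p.2)) * t p := hfeas
          _ = ∑ m, ∑ z, ∑ x, ((M:ℝ))⁻¹ * (enc m x * ∑ y, Wch x (y, z)) * t (x, z) := by
              rw [hA1, hswap]
          _ ≤ ∑ m, ∑ z, ∑ x, ((M:ℝ))⁻¹ * (enc m x * ∑ y, Wch x (y, z)) * s (m, z) :=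
              Finset.sum_le_sum fun m _ => Finset.sum_le_sum fun z _ =>
                Finset.sum_le_sum fun x _ => hpt m z x
          _ = ∑ q : Fin M × Z, PWZ q * s q := hB1'.symm
      -- step (iii) : ∑ QWZ * s ≤ K * b
      have hB2 : ∑ q : Fin M × Z, QWZ q * s q
          ≤ (K:ℝ) * ∑ p : X × Z, (PX p.1 * ∑ x', PX x' * ∑ y, Wch x' (y, p.2)) * t p := by
        have hcoefnn : ∀ z, 0 ≤ ((M:ℝ))⁻¹ * ∑ x', PX x' * ∑ y, Wch x' (y, z) :=
          fun z => mul_nonneg (inv_nonneg.2 hMR.le) (hPZnn z)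
        have h1 : ∑ q : Fin M × Z, QWZ q * s q = ∑ m, ∑ z, QWZ (m, z) * s (m, z) := by
          rw [Fintype.sum_prod_type]
        have h2 : ∑ m, ∑ z, QWZ (m, z) * s (m, z)
            ≤ ∑ m, ∑ z, (((M:ℝ))⁻¹ * ∑ x', PX x' * ∑ y, Wch x' (y, z)) *
                ∑ x ∈ C.filter (fun x => π x = m), t (x, z) := by
          refine Finset.sum_le_sum fun m _ => Finset.sum_le_sum fun z _ => ?_
          have hq : QWZ (m, z) = ((M:ℝ))⁻¹ * ∑ x', PX x' * ∑ y, Wch x' (y, z) := rfl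
          have hs : s (m, z) ≤ ∑ x ∈ C.filter (fun x => π x = m), t (x, z) := min_le_right _ _
          rw [hq]
          exact mul_le_mul_of_nonneg_left hs (hcoefnn z)
        have h3 : ∑ m, ∑ z, (((M:ℝ))⁻¹ * ∑ x', PX x' * ∑ y, Wch x' (y, z)) *
                ∑ x ∈ C.filter (fun x => π x = m), t (x, z)
            = ∑ m, ∑ x ∈ C.filter (fun x => π x = m),
                ∑ z, (((M:ℝ))⁻¹ * ∑ x', PX x' * ∑ y, Wch x' (y, z)) * t (x, z) := by
          refine Finset.sum_congr rfl fun m _ => ?_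
          simp only [Finset.mul_sum]
          exact Finset.sum_comm
        have h4 : ∑ m, ∑ x ∈ C.filter (fun x => π x = m),
                ∑ z, (((M:ℝ))⁻¹ * ∑ x', PX x' * ∑ y, Wch x' (y, z)) * t (x, z)
            = ∑ x ∈ C, ∑ z, (((M:ℝ))⁻¹ * ∑ x', PX x' * ∑ y, Wch x' (y, z)) * t (x, z) :=
          Finset.sum_fiberwise_of_maps_to (fun x _ => Finset.mem_univ (π x)) _
        have h5 : ∀ x ∈ C, ∑ z, (((M:ℝ))⁻¹ * ∑ x', PX x' * ∑ y, Wch x' (y, z)) * t (x, z)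
            = (K:ℝ) * ∑ z, (PX x * ∑ x', PX x' * ∑ y, Wch x' (y, z)) * t (x, z) := by
          intro x hx
          rw [Finset.mul_sum]
          refine Finset.sum_congr rfl fun z _ => ?_
          rw [hPXC x hx, hNR, mul_inv]
          field_simp
        have h7 : ∑ x ∈ C, ∑ z, (PX x * ∑ x', PX x' * ∑ y, Wch x' (y, z)) * t (x, z)
            = ∑ x, ∑ z, (PX x * ∑ x', PX x' * ∑ y, Wch x' (y, z)) * t (x, z) := by
          apply Finset.sum_subset (Finset.subset_univ C)
          intro x _ hx
          simp [hPXnC x hx]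
        have h8 : ∑ p : X × Z, (PX p.1 * ∑ x', PX x' * ∑ y, Wch x' (y, p.2)) * t p
            = ∑ x, ∑ z, (PX x * ∑ x', PX x' * ∑ y, Wch x' (y, z)) * t (x, z) := by
          rw [Fintype.sum_prod_type]
        calc ∑ q : Fin M × Z, QWZ q * s q
            ≤ ∑ m, ∑ z, (((M:ℝ))⁻¹ * ∑ x', PX x' * ∑ y, Wch x' (y, z)) *
                ∑ x ∈ C.filter (fun x => π x = m), t (x, z) := by rw [h1]; exact h2
          _ = ∑ x ∈ C, ∑ z, (((M:ℝ))⁻¹ * ∑ x', PX x' * ∑ y, Wch x' (y, z)) * t (x, z) := by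
              rw [h3, h4]
          _ = ∑ x ∈ C, (K:ℝ) * ∑ z, (PX x * ∑ x', PX x' * ∑ y, Wch x' (y, z)) * t (x, z) :=
              Finset.sum_congr rfl h5
          _ = (K:ℝ) * ∑ x ∈ C, ∑ z, (PX x * ∑ x', PX x' * ∑ y, Wch x' (y, z)) * t (x, z) :=
              (Finset.mul_sum _ _ _).symm
          _ = (K:ℝ) * ∑ p : X × Z, (PX p.1 * ∑ x', PX x' * ∑ y, Wch x' (y, p.2)) * t p := by
              rw [h7, ← h8]
      have hτK : τ ≤ (K:ℝ) * ∑ p : X × Z, (PX p.1 * ∑ x', PX x' * ∑ y, Wch x' (y, p.2)) * t p := by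
        linarith
      calc ((K:ℝ))⁻¹ * τ
          ≤ ((K:ℝ))⁻¹ * ((K:ℝ) * ∑ p : X × Z,
              (PX p.1 * ∑ x', PX x' * ∑ y, Wch x' (y, p.2)) * t p) :=
            mul_le_mul_of_nonneg_left hτK (by positivity)
        _ = ∑ p : X × Z, (PX p.1 * ∑ x', PX x' * ∑ y, Wch x' (y, p.2)) * t p := by
            field_simp
  have hMτ : 0 ≤ (M:ℝ) * τ := by positivity
  calc (M:ℝ) * τ * betaHT (1 - ε) _ _ ≤ (M:ℝ) * τ * ((C.card : ℝ))⁻¹ :=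
        mul_le_mul_of_nonneg_left hbeta1 hMτ
    _ = ((K:ℝ))⁻¹ * τ := by rw [hNR]; field_simp
    _ ≤ _ := hbeta2
end
end

section
/- Let X and Z be finite nonempty sets, C ⊆ X, and P_{Z|X} a channel from X to Z. Let π : C → {1,…,M} be a surjection and, for each m ∈ {1,…,M}, let P_{X|W=m} be a PMF on X supported on π⁻¹(m). Let W be uniform on {1,…,M}, with induced joint P_{WXZ}(m,x,z) := (1/M)·P_{X|W}(x|m)·P_{Z|X}(z|x) and marginals P_{WZ}, P_W, P_{XZ}. Let ℒ : Z → 2^C be a list decoder, L := max_{z∈Z} |ℒ(z)|, and ε_ld := Σ_{x,z} P_{XZ}(x,z)·1{x ∉ ℒ(z)}. Then for every PMF Q_Z on Z: d(P_{WZ}, P_W × Q_Z) ≥ 1 − ε_ld − L/M. -/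
open scoped Classical
open Finset

noncomputable section

lemma max_half (x : ℝ) : max x 0 = (|x| + x) / 2 := by
  rcases le_total 0 x with h | h
  · rw [max_eq_left h, abs_of_nonneg h]; ring
  · rw [max_eq_right h, abs_of_nonpos h]; ring

lemma tv_ge {A : Type*} [Fintype A] (P Q : A → ℝ) (h : ∑ a, P a = ∑ a, Q a)
    (S : Finset A) : ∑ a ∈ S, (P a - Q a) ≤ dTV P Q := by
  calc ∑ a ∈ S, (P a - Q a) ≤ ∑ a ∈ S, max (P a - Q a) 0 :=
        Finset.sum_le_sum fun a _ => le_max_left _ _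
    _ ≤ ∑ a, max (P a - Q a) 0 :=
        Finset.sum_le_sum_of_subset_of_nonneg (Finset.subset_univ S)
          (fun a _ _ => le_max_right _ _)
    _ = (∑ a, |P a - Q a| + ∑ a, (P a - Q a)) / 2 := by
        rw [← Finset.sum_add_distrib, Finset.sum_div]
        exact Finset.sum_congr rfl fun a _ => max_half _
    _ = dTV P Q := by
        rw [Finset.sum_sub_distrib, h, sub_self, add_zero, dTV]; ring

/-- List-decoding converse for partition codes (Theorem 5): for every list decoder
`ℒ` at the eavesdropper with maximum list size `L` and error probability `ε_ld`,
`d(P_{WZ}, P_W Q_Z) ≥ 1 - ε_ld - L/M` for every PMF `Q_Z`. -/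
theorem stmt8 {X Z : Type*} [Fintype X] [Fintype Z] [Nonempty X] [Nonempty Z]
    (C : Finset X)
    (Wch : X → Z → ℝ) (hW : ∀ x, IsPMF (Wch x))
    (M : ℕ) (hM : 0 < M)
    (π : X → Fin M) (hsurj : ∀ m : Fin M, ∃ x ∈ C, π x = m)
    (enc : Fin M → X → ℝ) (henc : ∀ m, IsPMF (enc m))
    (hsupp : ∀ m x, enc m x ≠ 0 → x ∈ C ∧ π x = m)
    (PWZ : Fin M × Z → ℝ)
    (hPWZ : ∀ p, PWZ p = ((M : ℝ))⁻¹ * ∑ x, enc p.1 x * Wch x p.2)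
    (PXZ : X × Z → ℝ)
    (hPXZ : ∀ p, PXZ p = (((M : ℝ))⁻¹ * ∑ m, enc m p.1) * Wch p.1 p.2)
    (ℒ : Z → Finset X) (hℒ : ∀ z, ℒ z ⊆ C)
    (L : ℕ) (hL : L = Finset.univ.sup (fun z => (ℒ z).card))
    (εld : ℝ)
    (hεld : εld = ∑ x, ∑ z, PXZ (x, z) * (if x ∈ ℒ z then 0 else 1)) :
    ∀ QZ : Z → ℝ, IsPMF QZ →
      1 - εld - (L : ℝ) / (M : ℝ)
        ≤ dTV PWZ (fun p : Fin M × Z => ((M : ℝ))⁻¹ * QZ p.2) := by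
  intro QZ hQZ
  have hMne : (M : ℝ) ≠ 0 := Nat.cast_ne_zero.mpr hM.ne'
  have hMinv : 0 ≤ ((M : ℝ))⁻¹ := by positivity
  -- total sums are both 1
  have hsumP : ∑ p, PWZ p = 1 := by
    rw [Fintype.sum_prod_type]
    have : ∀ m : Fin M, ∑ z, PWZ (m, z) = ((M : ℝ))⁻¹ := by
      intro m
      simp only [hPWZ]
      rw [← Finset.mul_sum, Finset.sum_comm]
      have : ∑ x, ∑ z, enc m x * Wch x z = 1 := by
        have : ∀ x, ∑ z, enc m x * Wch x z = enc m x := by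
          intro x; rw [← Finset.mul_sum, (hW x).2, mul_one]
        rw [Finset.sum_congr rfl fun x _ => this x, (henc m).2]
      rw [this, mul_one]
    rw [Finset.sum_congr rfl fun m _ => this m]
    simp [hMne]
  have hsumQ : ∑ p : Fin M × Z, ((M : ℝ))⁻¹ * QZ p.2 = 1 := by
    rw [Fintype.sum_prod_type]
    have : ∀ m : Fin M, ∑ z, ((M : ℝ))⁻¹ * QZ z = ((M : ℝ))⁻¹ := by
      intro m; rw [← Finset.mul_sum, hQZ.2, mul_one]
    rw [Finset.sum_congr rfl fun m _ => this m]
    simp [hMne]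
  set S : Finset (Fin M × Z) :=
    Finset.univ.filter (fun p => ∃ x ∈ ℒ p.2, π x = p.1) with hS
  have key := tv_ge PWZ (fun p : Fin M × Z => ((M : ℝ))⁻¹ * QZ p.2)
    (by rw [hsumP, hsumQ]) S
  rw [Finset.sum_sub_distrib] at key
  -- Claim 1 : mass of PWZ outside S is ≤ εld
  have hcompl : ∑ p ∈ Finset.univ.filter (fun p : Fin M × Z => ¬ ∃ x ∈ ℒ p.2, π x = p.1),
      PWZ p ≤ εld := by
    have hεld' : εld = ∑ p : Fin M × Z,
        ∑ x, ((M : ℝ))⁻¹ * (enc p.1 x * Wch x p.2) * (if x ∈ ℒ p.2 then 0 else 1) := by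
      rw [hεld, Fintype.sum_prod_type, Finset.sum_comm]
      conv_rhs => rw [Finset.sum_comm]
      apply Finset.sum_congr rfl; intro z _
      conv_rhs => rw [Finset.sum_comm]
      apply Finset.sum_congr rfl; intro x _
      rw [hPXZ, Finset.mul_sum, Finset.sum_mul, Finset.sum_mul]
      exact Finset.sum_congr rfl fun m _ => by ring
    calc ∑ p ∈ Finset.univ.filter (fun p : Fin M × Z => ¬ ∃ x ∈ ℒ p.2, π x = p.1), PWZ p
        ≤ ∑ p ∈ Finset.univ.filter (fun p : Fin M × Z => ¬ ∃ x ∈ ℒ p.2, π x = p.1),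
            ∑ x, ((M : ℝ))⁻¹ * (enc p.1 x * Wch x p.2) * (if x ∈ ℒ p.2 then 0 else 1) := by
          apply Finset.sum_le_sum
          intro p hp
          rw [Finset.mem_filter] at hp
          rw [hPWZ, Finset.mul_sum]
          apply Finset.sum_le_sum
          intro x _
          by_cases he : enc p.1 x = 0
          · simp [he]
          · have hx := hsupp p.1 x he
            have hnot : x ∉ ℒ p.2 := by
              intro hmem
              exact hp.2 ⟨x, hmem, hx.2⟩
            rw [if_neg hnot, mul_one]
        _ ≤ ∑ p : Fin M × Z,
            ∑ x, ((M : ℝ))⁻¹ * (enc p.1 x * Wch x p.2) * (if x ∈ ℒ p.2 then 0 else 1) := by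
          apply Finset.sum_le_sum_of_subset_of_nonneg (Finset.filter_subset _ _)
          intro p _ _
          apply Finset.sum_nonneg
          intro x _
          have := (henc p.1).1 x
          have := (hW x).1 p.2
          positivity
        _ = εld := hεld'.symm
  have hPS : 1 - εld ≤ ∑ p ∈ S, PWZ p := by
    have hsplit := Finset.sum_filter_add_sum_filter_not Finset.univ
      (fun p : Fin M × Z => ∃ x ∈ ℒ p.2, π x = p.1) PWZ
    rw [hsumP] at hsplit
    linarith
  -- Claim 2 : product measure of S is ≤ L/M
  have hQS : ∑ p ∈ S, ((M : ℝ))⁻¹ * QZ p.2 ≤ (L : ℝ) / (M : ℝ) := by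
    have hcard : ∀ z : Z,
        (Finset.univ.filter (fun m : Fin M => ∃ x ∈ ℒ z, π x = m)).card ≤ L := by
      intro z
      have h1 : Finset.univ.filter (fun m : Fin M => ∃ x ∈ ℒ z, π x = m)
          = (ℒ z).image π := by
        ext m; simp [eq_comm]
      rw [h1]
      calc ((ℒ z).image π).card ≤ (ℒ z).card := Finset.card_image_le
        _ ≤ L := by
          rw [hL]
          exact Finset.le_sup (f := fun z => (ℒ z).card) (Finset.mem_univ z)
    have h2 : ∑ p ∈ S, ((M : ℝ))⁻¹ * QZ p.2
        = ∑ z, ((Finset.univ.filter (fun m : Fin M => ∃ x ∈ ℒ z, π x = m)).card : ℝ)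
            * (((M : ℝ))⁻¹ * QZ z) := by
      rw [hS, Finset.sum_filter, Fintype.sum_prod_type, Finset.sum_comm]
      apply Finset.sum_congr rfl; intro z _
      dsimp only
      rw [← Finset.sum_filter, Finset.sum_const, nsmul_eq_mul]
    rw [h2]
    have hterm : ∀ z : Z,
        ((Finset.univ.filter (fun m : Fin M => ∃ x ∈ ℒ z, π x = m)).card : ℝ)
            * (((M : ℝ))⁻¹ * QZ z)
          ≤ (L : ℝ) * (((M : ℝ))⁻¹ * QZ z) := by
      intro z
      apply mul_le_mul_of_nonneg_right
      · exact_mod_cast hcard z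
      · exact mul_nonneg hMinv (hQZ.1 z)
    calc ∑ z, ((Finset.univ.filter (fun m : Fin M => ∃ x ∈ ℒ z, π x = m)).card : ℝ)
            * (((M : ℝ))⁻¹ * QZ z)
        ≤ ∑ z, (L : ℝ) * (((M : ℝ))⁻¹ * QZ z) := Finset.sum_le_sum fun z _ => hterm z
      _ = (L : ℝ) / (M : ℝ) := by
          rw [← Finset.mul_sum, ← Finset.mul_sum, hQZ.2, mul_one, div_eq_mul_inv]
  calc 1 - εld - (L : ℝ) / (M : ℝ)
      ≤ ∑ p ∈ S, PWZ p - ∑ p ∈ S, ((M : ℝ))⁻¹ * QZ p.2 := by linarith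
    _ ≤ _ := key
end
end

section
/- Let X and Z be finite nonempty sets, C ⊆ X with |C| = N, and P_{Z|X} a channel from X to Z. Let π : C → {1,…,M} be a surjection and, for each m ∈ {1,…,M}, let P_{X|W=m} be a PMF on X supported on π⁻¹(m). Let W be uniform on {1,…,M}, with induced joint P_{WXZ}(m,x,z) := (1/M)·P_{X|W}(x|m)·P_{Z|X}(z|x) and marginals P_{WZ}, P_W, P_{XZ}. Let Q_X be the uniform distribution on C and Q_Z any PMF on Z. Then for every real t > 0, with E_t := {(x,z) ∈ C × Z : P_{XZ}(x,z) ≥ t·Q_X(x)·Q_Z(z)}: d(P_{WZ}, P_W × Q_Z) ≥ P_{XZ}(E_t) − (N/M)·(Q_X × Q_Z)(E_t). -/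
open scoped Classical
open Finset

noncomputable section

/-- Threshold-event converse for partition codes (Eq. (74) in the proof of
Lemma 2): for every `t > 0`, with `E_t = {(x,z) ∈ C × Z : P_{XZ}(x,z) ≥ t Q_X(x) Q_Z(z)}`,
`d(P_{WZ}, P_W Q_Z) ≥ P_{XZ}(E_t) − (N/M) (Q_X × Q_Z)(E_t)`. -/
theorem stmt10 {X Z : Type*} [Fintype X] [Fintype Z] [Nonempty X] [Nonempty Z]
    (C : Finset X) (N : ℕ) (hN : C.card = N)
    (Wch : X → Z → ℝ) (hW : ∀ x, IsPMF (Wch x))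
    (M : ℕ) (hM : 0 < M)
    (π : X → Fin M) (hsurj : ∀ m : Fin M, ∃ x ∈ C, π x = m)
    (enc : Fin M → X → ℝ) (henc : ∀ m, IsPMF (enc m))
    (hsupp : ∀ m x, enc m x ≠ 0 → x ∈ C ∧ π x = m)
    (PWZ : Fin M × Z → ℝ)
    (hPWZ : ∀ p, PWZ p = ((M : ℝ))⁻¹ * ∑ x, enc p.1 x * Wch x p.2)
    (PXZ : X × Z → ℝ)
    (hPXZ : ∀ p, PXZ p = (((M : ℝ))⁻¹ * ∑ m, enc m p.1) * Wch p.1 p.2)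
    (QX : X → ℝ) (hQX : ∀ x, QX x = if x ∈ C then ((N : ℝ))⁻¹ else 0)
    (QZ : Z → ℝ) (hQZ : IsPMF QZ) :
    ∀ t : ℝ, 0 < t →
      (∑ p ∈ Finset.univ.filter
          (fun p : X × Z => p.1 ∈ C ∧ t * (QX p.1 * QZ p.2) ≤ PXZ p), PXZ p)
        - ((N : ℝ) / (M : ℝ)) *
          (∑ p ∈ Finset.univ.filter
            (fun p : X × Z => p.1 ∈ C ∧ t * (QX p.1 * QZ p.2) ≤ PXZ p), QX p.1 * QZ p.2)
        ≤ dTV PWZ (fun p : Fin M × Z => ((M : ℝ))⁻¹ * QZ p.2) := by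
  intro t ht
  set E := Finset.univ.filter
      (fun p : X × Z => p.1 ∈ C ∧ t * (QX p.1 * QZ p.2) ≤ PXZ p) with hE
  have hN0 : 0 < N := by
    obtain ⟨x, hx, -⟩ := hsurj ⟨0, hM⟩
    have := Finset.card_pos.2 ⟨x, hx⟩
    omega
  have hNne : (N : ℝ) ≠ 0 := Nat.cast_ne_zero.2 hN0.ne'
  have hMne : (M : ℝ) ≠ 0 := Nat.cast_ne_zero.2 hM.ne'
  have hcollapse : ∀ x ∈ C, ∑ m', enc m' x = enc (π x) x := by
    intro x hx
    apply Finset.sum_eq_single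
    · intro m' _ hne
      by_contra h
      exact hne (hsupp m' x h).2.symm
    · intro h; exact absurd (Finset.mem_univ _) h
  have hLHS : (∑ p ∈ E, PXZ p) - ((N : ℝ) / (M : ℝ)) * (∑ p ∈ E, QX p.1 * QZ p.2)
      = ∑ p ∈ E, (PXZ p - ((M : ℝ))⁻¹ * QZ p.2) := by
    rw [Finset.mul_sum, ← Finset.sum_sub_distrib]
    refine Finset.sum_congr rfl fun p hp => ?_
    have hpC : p.1 ∈ C := (Finset.mem_filter.1 hp).2.1
    rw [hQX p.1, if_pos hpC]
    field_simp
  have key : ∀ q : Fin M × Z,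
      (∑ p ∈ E.filter (fun p => (π p.1, p.2) = q),
        (PXZ p - ((M : ℝ))⁻¹ * QZ p.2))
        ≤ max 0 (PWZ q - ((M : ℝ))⁻¹ * QZ q.2) := by
    rintro ⟨m, z⟩
    set s : Finset X := Finset.univ.filter (fun x => (x, z) ∈ E ∧ π x = m) with hs
    have hbij : (∑ p ∈ E.filter (fun p => (π p.1, p.2) = (m, z)),
        (PXZ p - ((M : ℝ))⁻¹ * QZ p.2))
        = ∑ x ∈ s, (PXZ (x, z) - ((M : ℝ))⁻¹ * QZ z) := by
      refine Finset.sum_nbij' (fun p => p.1) (fun x => (x, z)) ?_ ?_ ?_ ?_ ?_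
      · intro p hp
        simp only [Finset.mem_filter] at hp
        obtain ⟨hpE, hq⟩ := hp
        have h2 : p.2 = z := congrArg Prod.snd hq
        have h1 : π p.1 = m := congrArg Prod.fst hq
        have hpz : p = (p.1, z) := Prod.ext rfl h2
        rw [hs]
        simp only [Finset.mem_filter, Finset.mem_univ, true_and]
        exact ⟨hpz ▸ hpE, h1⟩
      · intro x hx
        simp only [hs, Finset.mem_filter, Finset.mem_univ, true_and] at hx
        simp only [Finset.mem_filter]
        exact ⟨hx.1, by simp [hx.2]⟩
      · intro p hp
        simp only [Finset.mem_filter] at hp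
        have h2 : p.2 = z := by
          have := congrArg Prod.snd hp.2; simpa using this
        exact Prod.ext rfl h2.symm
      · intro x hx; rfl
      · intro p hp
        simp only [Finset.mem_filter] at hp
        have h2 : p.2 = z := by
          have := congrArg Prod.snd hp.2; simpa using this
        rw [← h2]
    rw [hbij]
    have hterm : ∀ x ∈ s, PXZ (x, z) = ((M : ℝ))⁻¹ * (enc m x * Wch x z) := by
      intro x hx
      simp only [hs, Finset.mem_filter, Finset.mem_univ, true_and, hE] at hx
      obtain ⟨⟨hxC, -⟩, hπ⟩ := hx
      rw [hPXZ]
      simp only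
      rw [hcollapse x hxC, hπ, mul_assoc]
    rcases s.eq_empty_or_nonempty with hse | hsne
    · rw [hse]
      simp
    · have h1 : ∑ x ∈ s, PXZ (x, z) ≤ PWZ (m, z) := by
        rw [Finset.sum_congr rfl hterm, hPWZ, Finset.mul_sum]
        refine Finset.sum_le_sum_of_subset_of_nonneg (Finset.subset_univ s) ?_
        intro x _ _
        have := (hW x).1 z
        have := (henc m).1 x
        positivity
      have hcz : 0 ≤ ((M : ℝ))⁻¹ * QZ z := by
        have := hQZ.1 z; positivity
      have h2 : ((M : ℝ))⁻¹ * QZ z ≤ ∑ _x ∈ s, ((M : ℝ))⁻¹ * QZ z := by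
        rw [Finset.sum_const, nsmul_eq_mul]
        have : (1 : ℝ) ≤ (s.card : ℝ) := by
          exact_mod_cast Finset.card_pos.2 hsne
        nlinarith
      rw [Finset.sum_sub_distrib]
      refine le_trans ?_ (le_max_right _ _)
      exact sub_le_sub h1 h2
  have hfib : ∑ q : Fin M × Z, ∑ p ∈ E.filter (fun p => (π p.1, p.2) = q),
      (PXZ p - ((M : ℝ))⁻¹ * QZ p.2)
      = ∑ p ∈ E, (PXZ p - ((M : ℝ))⁻¹ * QZ p.2) :=
    Finset.sum_fiberwise E (fun p => (π p.1, p.2)) _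
  have hP1 : ∑ q : Fin M × Z, PWZ q = 1 := by
    simp only [hPWZ]
    rw [Fintype.sum_prod_type]
    have hm : ∀ m : Fin M, ∑ z, ((M : ℝ))⁻¹ * ∑ x, enc m x * Wch x z
        = ((M : ℝ))⁻¹ := by
      intro m
      rw [← Finset.mul_sum, Finset.sum_comm]
      have : ∑ x, ∑ z, enc m x * Wch x z = 1 := by
        have : ∀ x, ∑ z, enc m x * Wch x z = enc m x := by
          intro x
          rw [← Finset.mul_sum, (hW x).2, mul_one]
        rw [Finset.sum_congr rfl fun x _ => this x, (henc m).2]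
      rw [this, mul_one]
    rw [Finset.sum_congr rfl fun m _ => hm m]
    simp [Finset.card_univ, hMne]
  have hQ1 : ∑ q : Fin M × Z, ((M : ℝ))⁻¹ * QZ q.2 = 1 := by
    rw [Fintype.sum_prod_type]
    have : ∀ m : Fin M, ∑ z, ((M : ℝ))⁻¹ * QZ z = ((M : ℝ))⁻¹ := by
      intro m
      rw [← Finset.mul_sum, hQZ.2, mul_one]
    rw [Finset.sum_congr rfl fun m _ => this m]
    simp [Finset.card_univ, hMne]
  have hmax : ∑ q : Fin M × Z, max 0 (PWZ q - ((M : ℝ))⁻¹ * QZ q.2)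
      = dTV PWZ (fun p : Fin M × Z => ((M : ℝ))⁻¹ * QZ p.2) := by
    have habs : ∀ a : ℝ, max 0 a = (|a| + a) / 2 := by
      intro a
      rcases le_or_gt 0 a with h | h
      · rw [max_eq_right h, abs_of_nonneg h]; ring
      · rw [max_eq_left h.le, abs_of_neg h]; ring
    rw [Finset.sum_congr rfl fun q _ => habs _]
    rw [dTV]
    have hsplit : ∑ q : Fin M × Z,
        (|PWZ q - ((M : ℝ))⁻¹ * QZ q.2| + (PWZ q - ((M : ℝ))⁻¹ * QZ q.2)) / 2
        = ((∑ q : Fin M × Z, |PWZ q - ((M : ℝ))⁻¹ * QZ q.2|)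
          + ((∑ q : Fin M × Z, PWZ q) - ∑ q : Fin M × Z, ((M : ℝ))⁻¹ * QZ q.2)) / 2 := by
      rw [← Finset.sum_sub_distrib, ← Finset.sum_add_distrib, ← Finset.sum_div]
    rw [hsplit, hP1, hQ1]
    ring
  calc (∑ p ∈ E, PXZ p) - ((N : ℝ) / (M : ℝ)) * (∑ p ∈ E, QX p.1 * QZ p.2)
      = ∑ p ∈ E, (PXZ p - ((M : ℝ))⁻¹ * QZ p.2) := hLHS
    _ = ∑ q : Fin M × Z, ∑ p ∈ E.filter (fun p => (π p.1, p.2) = q),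
          (PXZ p - ((M : ℝ))⁻¹ * QZ p.2) := hfib.symm
    _ ≤ ∑ q : Fin M × Z, max 0 (PWZ q - ((M : ℝ))⁻¹ * QZ q.2) :=
        Finset.sum_le_sum fun q _ => key q
    _ = dTV PWZ (fun p : Fin M × Z => ((M : ℝ))⁻¹ * QZ p.2) := hmax
end
end

section
/- Let W be a finite set of cardinality M, Z a finite set, and P_{WZ} a joint PMF on W × Z whose W-marginal P_W is the uniform distribution on W; let P_Z be its Z-marginal. Then for every η ∈ (0,1), the event A_η := {(w,z) : M·η·P_{WZ}(w,z) ≥ P_Z(z)} satisfies P_{WZ}(A_η) ≤ d(P_{WZ}, P_W × P_Z)/(1 − η). -/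
open scoped Classical
open Finset

noncomputable section

/-- Eq. (65): if the `W`-marginal of `P_{WZ}` is uniform on a set of size `M`,
then for every `η ∈ (0,1)` the event `A_η = {(w,z) : M η P_{WZ}(w,z) ≥ P_Z(z)}`
satisfies `P_{WZ}(A_η) ≤ d(P_{WZ}, P_W P_Z)/(1-η)`. -/
theorem stmt12 {W Z : Type*} [Fintype W] [Fintype Z] [Nonempty W] [Nonempty Z]
    (M : ℕ) (hM : Fintype.card W = M)
    (PWZ : W × Z → ℝ) (hP : IsPMF PWZ)
    (hunif : ∀ w, ∑ z, PWZ (w, z) = ((M : ℝ))⁻¹)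
    (PZ : Z → ℝ) (hPZ : ∀ z, PZ z = ∑ w, PWZ (w, z))
    (η : ℝ) (hη0 : 0 < η) (hη1 : η < 1) :
    ∑ p ∈ Finset.univ.filter (fun p : W × Z => PZ p.2 ≤ (M : ℝ) * η * PWZ p), PWZ p
      ≤ dTV PWZ (fun p : W × Z => ((M : ℝ))⁻¹ * PZ p.2) / (1 - η) := by
  have hMpos : (0 : ℝ) < (M : ℝ) := by
    have : 0 < Fintype.card W := Fintype.card_pos
    exact_mod_cast hM ▸ this
  set Q : W × Z → ℝ := fun p => ((M : ℝ))⁻¹ * PZ p.2 with hQdef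
  have hsumP : ∑ p, PWZ p = 1 := hP.2
  have hsumQ : ∑ p, Q p = 1 := by
    have h0 : ∑ p : W × Z, Q p = ∑ w : W, ∑ z : Z, ((M : ℝ))⁻¹ * PZ z :=
      Fintype.sum_prod_type ..
    have hZ : ∑ z : Z, PZ z = 1 := by
      have := Fintype.sum_prod_type (f := fun (p : W × Z) => PWZ p)
      rw [this] at hsumP
      calc ∑ z : Z, PZ z = ∑ z : Z, ∑ w : W, PWZ (w, z) :=
            Finset.sum_congr rfl fun z _ => hPZ z
        _ = ∑ w : W, ∑ z : Z, PWZ (w, z) := Finset.sum_comm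
        _ = 1 := hsumP
    rw [h0, Finset.sum_const, ← Finset.mul_sum, hZ, mul_one, Finset.card_univ, hM]
    rw [nsmul_eq_mul]; exact mul_inv_cancel₀ hMpos.ne'
  have hsum0 : ∑ p, (PWZ p - Q p) = 0 := by
    rw [Finset.sum_sub_distrib, hsumP, hsumQ, sub_self]
  -- dTV as sum of positive parts
  have hdTV : dTV PWZ Q = ∑ p, max (PWZ p - Q p) 0 := by
    unfold dTV
    have habs : ∀ p : W × Z, |PWZ p - Q p| =
        2 * max (PWZ p - Q p) 0 - (PWZ p - Q p) := by
      intro p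
      rcases le_total (PWZ p - Q p) 0 with h | h
      · rw [abs_of_nonpos h, max_eq_right h]; ring
      · rw [abs_of_nonneg h, max_eq_left h]; ring
    rw [Finset.sum_congr rfl fun p _ => habs p, Finset.sum_sub_distrib, hsum0,
      ← Finset.mul_sum]
    ring
  set A := Finset.univ.filter (fun p : W × Z => PZ p.2 ≤ (M : ℝ) * η * PWZ p) with hA
  have key : ∀ p ∈ A, (1 - η) * PWZ p ≤ PWZ p - Q p := by
    intro p hp
    rw [hA, Finset.mem_filter] at hp
    have h1 : Q p ≤ η * PWZ p := by
      have := mul_le_mul_of_nonneg_left hp.2 (le_of_lt (inv_pos.mpr hMpos))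
      calc Q p = ((M : ℝ))⁻¹ * PZ p.2 := rfl
        _ ≤ ((M : ℝ))⁻¹ * ((M : ℝ) * η * PWZ p) := this
        _ = η * PWZ p := by field_simp
    nlinarith
  have h1 : (1 - η) * ∑ p ∈ A, PWZ p ≤ ∑ p ∈ A, (PWZ p - Q p) := by
    rw [Finset.mul_sum]
    exact Finset.sum_le_sum key
  have h2 : ∑ p ∈ A, (PWZ p - Q p) ≤ ∑ p, max (PWZ p - Q p) 0 := by
    calc ∑ p ∈ A, (PWZ p - Q p) ≤ ∑ p ∈ A, max (PWZ p - Q p) 0 :=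
          Finset.sum_le_sum fun p _ => le_max_left _ _
      _ ≤ ∑ p, max (PWZ p - Q p) 0 :=
          Finset.sum_le_sum_of_subset_of_nonneg (Finset.subset_univ A)
            (fun p _ _ => le_max_right _ _)
  rw [le_div_iff₀ (by linarith : (0:ℝ) < 1 - η)]
  calc (∑ p ∈ A, PWZ p) * (1 - η) = (1 - η) * ∑ p ∈ A, PWZ p := by ring
    _ ≤ ∑ p, max (PWZ p - Q p) 0 := le_trans h1 h2
    _ = dTV PWZ Q := hdTV.symm
end
end
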